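/- arXiv:2508.02825 — 12 statements merged into one kernel-verified Lean document; each statement's English description precedes it below -/
import Mathlib

section
/- Let A be a symmetric n×n real matrix with ‖A‖ ≤ 1 and nonnegative entries. If A has at least t eigenvalues ≤ -λ (counted with multiplicity) for some λ ≥ 0 and positive integer t, then for any σ ∈ (0,1), A has at least σ²t eigenvalues ≥ (λ² - σ)/(1 - σ). -/
open Matrix Finset
open scoped Classical

set_option maxHeartbeats 1600000 in
theorem stmt0 {n : ℕ} (A : Matrix (Fin n) (Fin n) ℝ) (hA : A.IsHermitian)
    (hpos : ∀ i j, 0 ≤ A i j)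
    (hnorm : ∀ i, |hA.eigenvalues i| ≤ 1)
    (lam : ℝ) (hlam : 0 ≤ lam) (t : ℕ) (ht : 0 < t)
    (hbot : t ≤ (Finset.univ.filter fun i => hA.eigenvalues i ≤ -lam).card)
    (σ : ℝ) (hσ0 : 0 < σ) (hσ1 : σ < 1) :
    σ ^ 2 * t ≤
      ((Finset.univ.filter fun i => (lam ^ 2 - σ) / (1 - σ) ≤ hA.eigenvalues i).card : ℝ) := by
  have hσ1' : (0:ℝ) < 1 - σ := by linarith
  set μ : Fin n → ℝ := hA.eigenvalues with hμdef
  set τ : ℝ := (lam ^ 2 - σ) / (1 - σ) with hτdef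
  set V : Fin n → Fin n → ℝ := fun i => (WithLp.equiv 2 (Fin n → ℝ)) (hA.eigenvectorBasis i)
    with hVdef
  have hAV : ∀ i u, (∑ v, A u v * V i v) = μ i * V i u := by
    intro i u
    have h := hA.mulVec_eigenvectorBasis i
    have h2 := congrFun h u
    simpa [Matrix.mulVec, dotProduct, hVdef] using h2
  have hVV : ∀ i j, (∑ u, V i u * V j u) = if i = j then (1:ℝ) else 0 := by
    intro i j
    have h := hA.eigenvectorBasis.orthonormal
    rw [orthonormal_iff_ite] at h
    have h2 := h i j
    rw [PiLp.inner_apply] at h2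
    simpa [RCLike.inner_apply, mul_comm, hVdef] using h2
  have hV2 : ∀ u w, (∑ i, V i u * V i w) = if u = w then (1:ℝ) else 0 := by
    intro u w
    set U : Matrix (Fin n) (Fin n) ℝ := Matrix.of fun u i => V i u with hU
    have h1 : Uᵀ * U = 1 := by
      ext i j
      simp only [Matrix.mul_apply, Matrix.transpose_apply, Matrix.one_apply, hU, Matrix.of_apply]
      exact hVV i j
    have h2 : U * Uᵀ = 1 := mul_eq_one_comm.mp h1
    have h3 := congrFun (congrFun h2 u) w
    simpa only [Matrix.mul_apply, Matrix.transpose_apply, Matrix.one_apply, hU,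
      Matrix.of_apply] using h3
  have hAuv : ∀ u v, A u v = ∑ i, μ i * (V i u * V i v) := by
    intro u v
    have h0 : A u v = ∑ w, A u w * (∑ i, V i w * V i v) := by
      simp only [hV2, mul_ite, mul_one, mul_zero]
      rw [Finset.sum_ite_eq' Finset.univ v (fun w => A u w)]
      simp
    rw [h0]
    simp only [Finset.mul_sum]
    rw [Finset.sum_comm]
    apply Finset.sum_congr rfl
    intro i _
    have : (∑ w, A u w * (V i w * V i v)) = (∑ w, A u w * V i w) * V i v := by
      rw [Finset.sum_mul]; apply Finset.sum_congr rfl; intro w _; ring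
    rw [this, hAV]; ring
  have pars : ∀ z : Fin n → ℝ, (∑ b, (∑ u, z u * V b u)^2) = ∑ u, (z u)^2 := by
    intro z
    have h1 : ∀ b, (∑ u, z u * V b u)^2 = ∑ u, ∑ w, (z u * z w) * (V b u * V b w) := by
      intro b
      rw [sq, Finset.sum_mul_sum]
      apply Finset.sum_congr rfl; intro u _; apply Finset.sum_congr rfl; intro w _; ring
    simp only [h1]
    rw [Finset.sum_comm]
    have h2 : ∀ u, (∑ b, ∑ w, (z u * z w) * (V b u * V b w)) = z u ^ 2 := by
      intro u
      rw [Finset.sum_comm]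
      have h3 : ∀ w, (∑ b, (z u * z w) * (V b u * V b w))
          = (z u * z w) * (if u = w then (1:ℝ) else 0) := by
        intro w
        rw [← hV2 u w, Finset.mul_sum]
      simp only [h3, mul_ite, mul_one, mul_zero]
      simp [Finset.sum_ite_eq, sq]
    apply Finset.sum_congr rfl
    intro u _
    exact h2 u
  set S : Finset (Fin n) := Finset.univ.filter (fun a => μ a ≤ -lam) with hSdef
  set m : ℕ := S.card with hmdef
  have hmt : (t:ℝ) ≤ (m:ℝ) := by exact_mod_cast hbot
  have hm0 : (0:ℝ) < (m:ℝ) := by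
    have : 0 < m := lt_of_lt_of_le ht hbot
    exact_mod_cast this
  have hμS : ∀ a ∈ S, μ a ≤ -lam := by
    intro a ha
    simpa [hSdef] using (Finset.mem_filter.mp ha).2
  have hlam1 : lam ≤ 1 := by
    have hS : S.Nonempty := Finset.card_pos.mp (lt_of_lt_of_le ht hbot)
    obtain ⟨a, ha⟩ := hS
    have h1 := hμS a ha
    have h2 := abs_le.mp (hnorm a)
    linarith [h2.1]
  have hμ1 : ∀ i, μ i ≤ 1 := fun i => le_trans (le_abs_self _) (hnorm i)
  set P : Fin n → Fin n → ℝ := fun u w => ∑ a ∈ S, V a u * V a w with hPdef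
  have hPsym : ∀ u v, P u v = P v u := by
    intro u v
    apply Finset.sum_congr rfl; intro a _; ring
  have hPdiag : ∀ u, 0 ≤ P u u :=
    fun u => Finset.sum_nonneg (fun a _ => mul_self_nonneg _)
  have hPzero : ∀ u, P u u = 0 → ∀ v, P u v = 0 := by
    intro u hu v
    have h1 : ∀ a ∈ S, V a u * V a u = 0 := by
      rw [← Finset.sum_eq_zero_iff_of_nonneg (fun a _ => mul_self_nonneg (V a u))]
      exact hu
    apply Finset.sum_eq_zero
    intro a ha
    have : V a u = 0 := by
      have := h1 a ha
      nlinarith [this]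
    rw [this, zero_mul]
  set d : Fin n → ℝ := fun u => Real.sqrt (P u u) with hddef
  set c : Fin n → ℝ := fun u => if P u u = 0 then 0 else (Real.sqrt (P u u))⁻¹ with hcdef
  have hd0 : ∀ u, 0 ≤ d u := fun u => Real.sqrt_nonneg _
  have hc0 : ∀ u, 0 ≤ c u := by
    intro u
    rw [hcdef]
    simp only []
    by_cases h : P u u = 0
    · simp [h]
    · simp [h, inv_nonneg.mpr (Real.sqrt_nonneg _)]
  have hd2 : ∀ u, d u ^ 2 = P u u := fun u => Real.sq_sqrt (hPdiag u)
  have hcd : ∀ u, c u * d u = if P u u = 0 then 0 else 1 := by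
    intro u
    rw [hcdef, hddef]
    by_cases h : P u u = 0
    · simp [h]
    · have hpos' : 0 < P u u := lt_of_le_of_ne (hPdiag u) (Ne.symm h)
      have : Real.sqrt (P u u) ≠ 0 := by
        rw [Real.sqrt_ne_zero']
        exact hpos'
      simp [h, inv_mul_cancel₀ this]
  have hdd : ∀ u, d u * d u = P u u := by
    intro u
    rw [hddef]
    simp only []
    exact Real.mul_self_sqrt (hPdiag u)
  have hPc : ∀ u, P u u * (c u * c u) = if P u u = 0 then 0 else 1 := by
    intro u
    by_cases h : P u u = 0
    · simp [h]
    · rw [if_neg h]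
      have h1 := hcd u
      rw [if_neg h] at h1
      calc P u u * (c u * c u) = (c u * d u) * (c u * d u) := by rw [← hdd u]; ring
        _ = 1 := by rw [h1]; ring
  set Z : Fin n → Fin n → ℝ := fun u v => P u v ^ 2 * (c u * c v) with hZdef
  have hZ0 : ∀ u v, 0 ≤ Z u v := by
    intro u v
    exact mul_nonneg (sq_nonneg _) (mul_nonneg (hc0 u) (hc0 v))
  have hZdiag : ∀ u, Z u u = if P u u = 0 then 0 else P u u := by
    intro u
    rw [hZdef]
    simp only []
    rw [sq]
    by_cases h : P u u = 0
    · simp [h]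
    · have h1 := hPc u
      rw [if_neg h] at h1
      rw [if_neg h]
      calc P u u * P u u * (c u * c u) = P u u * (P u u * (c u * c u)) := by ring
        _ = P u u := by rw [h1]; ring
  have hZdiag' : ∀ u, Z u u = P u u := by
    intro u
    rw [hZdiag]
    by_cases h : P u u = 0
    · simp [h]
    · rw [if_neg h]
  set q : Fin n → ℝ := fun i => ∑ u, ∑ v, (V i u * V i v) * Z u v with hqdef
  have key : ∀ Y : Fin n → ℝ, (∑ u, ∑ v, (Y u * Y v) * P u v ^ 2)
      = ∑ a ∈ S, ∑ b ∈ S, (∑ u, Y u * (V a u * V b u))^2 := by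
    intro Y
    have e1 : (∑ u, ∑ v, (Y u * Y v) * P u v ^ 2)
        = ∑ u, ∑ v, ∑ a ∈ S, ∑ b ∈ S,
            ((Y u * (V a u * V b u)) * (Y v * (V a v * V b v))) := by
      apply Finset.sum_congr rfl; intro u _; apply Finset.sum_congr rfl; intro v _
      rw [hPdef]
      simp only []
      rw [sq, Finset.sum_mul_sum, Finset.mul_sum]
      apply Finset.sum_congr rfl; intro a _
      rw [Finset.mul_sum]
      apply Finset.sum_congr rfl; intro b _
      ring
    rw [e1]
    have e2 : (∑ u, ∑ v, ∑ a ∈ S, ∑ b ∈ S,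
            ((Y u * (V a u * V b u)) * (Y v * (V a v * V b v))))
        = ∑ a ∈ S, ∑ b ∈ S, ∑ u, ∑ v,
            ((Y u * (V a u * V b u)) * (Y v * (V a v * V b v))) := by
      calc (∑ u, ∑ v, ∑ a ∈ S, ∑ b ∈ S,
            ((Y u * (V a u * V b u)) * (Y v * (V a v * V b v))))
          = ∑ u, ∑ a ∈ S, ∑ v, ∑ b ∈ S,
            ((Y u * (V a u * V b u)) * (Y v * (V a v * V b v))) := by
            apply Finset.sum_congr rfl; intro u _; exact Finset.sum_comm
        _ = ∑ a ∈ S, ∑ u, ∑ v, ∑ b ∈ S,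
            ((Y u * (V a u * V b u)) * (Y v * (V a v * V b v))) := Finset.sum_comm
        _ = ∑ a ∈ S, ∑ u, ∑ b ∈ S, ∑ v,
            ((Y u * (V a u * V b u)) * (Y v * (V a v * V b v))) := by
            apply Finset.sum_congr rfl; intro a _; apply Finset.sum_congr rfl; intro u _
            exact Finset.sum_comm
        _ = ∑ a ∈ S, ∑ b ∈ S, ∑ u, ∑ v,
            ((Y u * (V a u * V b u)) * (Y v * (V a v * V b v))) := by
            apply Finset.sum_congr rfl; intro a _; exact Finset.sum_comm
    rw [e2]
    apply Finset.sum_congr rfl; intro a _; apply Finset.sum_congr rfl; intro b _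
    rw [sq, Finset.sum_mul_sum]
  have hqform : ∀ i, q i = ∑ a ∈ S, ∑ b ∈ S,
      (∑ u, (V i u * c u) * (V a u * V b u))^2 := by
    intro i
    rw [← key (fun u => V i u * c u)]
    rw [hqdef]
    simp only []
    apply Finset.sum_congr rfl; intro u _; apply Finset.sum_congr rfl; intro v _
    rw [hZdef]
    simp only []
    ring
  have hq0 : ∀ i, 0 ≤ q i := by
    intro i
    rw [hqform]
    exact Finset.sum_nonneg fun a _ => Finset.sum_nonneg fun b _ => sq_nonneg _
  have hq1 : ∀ i, q i ≤ 1 := by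
    intro i
    rw [hqform]
    have step1 : (∑ a ∈ S, ∑ b ∈ S, (∑ u, (V i u * c u) * (V a u * V b u))^2)
        ≤ ∑ a ∈ S, ∑ b, (∑ u, (V i u * c u) * (V a u * V b u))^2 := by
      apply Finset.sum_le_sum
      intro a _
      apply Finset.sum_le_sum_of_subset_of_nonneg (Finset.subset_univ S)
      intro b _ _
      exact sq_nonneg _
    have step2 : (∑ a ∈ S, ∑ b, (∑ u, (V i u * c u) * (V a u * V b u))^2)
        = ∑ a ∈ S, ∑ u, ((V i u * c u) * V a u)^2 := by
      apply Finset.sum_congr rfl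
      intro a _
      have := pars (fun u => (V i u * c u) * V a u)
      rw [← this]
      apply Finset.sum_congr rfl; intro b _
      congr 1
      apply Finset.sum_congr rfl; intro u _
      ring
    have step3 : (∑ a ∈ S, ∑ u, ((V i u * c u) * V a u)^2)
        = ∑ u, (V i u)^2 * (P u u * (c u * c u)) := by
      rw [Finset.sum_comm]
      apply Finset.sum_congr rfl
      intro u _
      rw [hPdef]
      simp only []
      rw [Finset.sum_mul, Finset.mul_sum]
      apply Finset.sum_congr rfl; intro a _
      ring
    have step4 : (∑ u, (V i u)^2 * (P u u * (c u * c u))) ≤ ∑ u, (V i u)^2 := by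
      apply Finset.sum_le_sum
      intro u _
      rw [hPc]
      by_cases h : P u u = 0
      · simp [h, sq_nonneg]
      · simp [h]
    have step5 : (∑ u, (V i u)^2) = 1 := by
      have := hVV i i
      rw [if_pos rfl] at this
      rw [← this]
      apply Finset.sum_congr rfl; intro u _; rw [sq]
    linarith [step1, step2 ▸ step3 ▸ step4, step5]
  have htrP : (∑ u, P u u) = (m:ℝ) := by
    have e0 : (∑ u, P u u) = ∑ u, ∑ a ∈ S, V a u * V a u := by
      apply Finset.sum_congr rfl; intro u _
      rw [hPdef]
    have e1 : (∑ u, P u u) = ∑ a ∈ S, ∑ u, V a u * V a u := e0.trans Finset.sum_comm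
    rw [e1]
    have e2 : ∀ a, (∑ u, V a u * V a u) = (1:ℝ) := by
      intro a
      have := hVV a a
      rwa [if_pos rfl] at this
    rw [Finset.sum_congr rfl (fun a _ => e2 a)]
    simp [hmdef]
  have swap3 : ∀ (w : Fin n → ℝ), (∑ i, w i * q i)
      = ∑ u, ∑ v, (∑ i, w i * (V i u * V i v)) * Z u v := by
    intro w
    calc (∑ i, w i * q i)
        = ∑ i, ∑ u, ∑ v, (w i * (V i u * V i v)) * Z u v := by
          apply Finset.sum_congr rfl; intro i _
          rw [hqdef]
          simp only []
          rw [Finset.mul_sum]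
          apply Finset.sum_congr rfl; intro u _
          rw [Finset.mul_sum]
          apply Finset.sum_congr rfl; intro v _
          ring
      _ = ∑ u, ∑ i, ∑ v, (w i * (V i u * V i v)) * Z u v := Finset.sum_comm
      _ = ∑ u, ∑ v, ∑ i, (w i * (V i u * V i v)) * Z u v := by
          apply Finset.sum_congr rfl; intro u _
          exact Finset.sum_comm
      _ = ∑ u, ∑ v, (∑ i, w i * (V i u * V i v)) * Z u v := by
          apply Finset.sum_congr rfl; intro u _
          apply Finset.sum_congr rfl; intro v _
          rw [Finset.sum_mul]
  have hqsum : (∑ i, q i) = (m:ℝ) := by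
    have h := swap3 (fun _ => 1)
    simp only [one_mul] at h
    rw [h]
    have e1 : ∀ u v : Fin n, (∑ i, V i u * V i v) * Z u v
        = (if u = v then Z u v else 0) := by
      intro u v
      rw [hV2]
      by_cases h' : u = v
      · simp [h']
      · simp [h']
    calc (∑ u, ∑ v, (∑ i, V i u * V i v) * Z u v)
        = ∑ u, ∑ v, (if u = v then Z u v else 0) := by
          apply Finset.sum_congr rfl; intro u _
          apply Finset.sum_congr rfl; intro v _
          exact e1 u v
      _ = ∑ u, Z u u := by
          apply Finset.sum_congr rfl; intro u _
          simp [Finset.sum_ite_eq]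
      _ = ∑ u, P u u := Finset.sum_congr rfl (fun u _ => hZdiag' u)
      _ = (m:ℝ) := htrP
  have hqA : (∑ i, μ i * q i) = ∑ u, ∑ v, A u v * Z u v := by
    rw [swap3 μ]
    apply Finset.sum_congr rfl; intro u _
    apply Finset.sum_congr rfl; intro v _
    rw [← hAuv u v]
  have htrAP : (∑ u, ∑ v, A u v * P u v) = ∑ a ∈ S, μ a := by
    have e1 : (∑ u, ∑ v, A u v * P u v)
        = ∑ u, ∑ v, ∑ a ∈ S, A u v * (V a u * V a v) := by
      apply Finset.sum_congr rfl; intro u _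
      apply Finset.sum_congr rfl; intro v _
      rw [hPdef]
      simp only []
      rw [Finset.mul_sum]
    rw [e1]
    have e2 : (∑ u, ∑ v, ∑ a ∈ S, A u v * (V a u * V a v))
        = ∑ a ∈ S, ∑ u, ∑ v, A u v * (V a u * V a v) := by
      calc (∑ u, ∑ v, ∑ a ∈ S, A u v * (V a u * V a v))
          = ∑ u, ∑ a ∈ S, ∑ v, A u v * (V a u * V a v) := by
            apply Finset.sum_congr rfl; intro u _; exact Finset.sum_comm
        _ = ∑ a ∈ S, ∑ u, ∑ v, A u v * (V a u * V a v) := Finset.sum_comm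
    rw [e2]
    apply Finset.sum_congr rfl; intro a _
    have e3 : ∀ u, (∑ v, A u v * (V a u * V a v)) = V a u * (∑ v, A u v * V a v) := by
      intro u
      rw [Finset.mul_sum]
      apply Finset.sum_congr rfl; intro v _
      ring
    calc (∑ u, ∑ v, A u v * (V a u * V a v))
        = ∑ u, V a u * (μ a * V a u) := by
          apply Finset.sum_congr rfl; intro u _
          rw [e3 u, hAV a u]
      _ = μ a * (∑ u, V a u * V a u) := by
          rw [Finset.mul_sum]
          apply Finset.sum_congr rfl; intro u _
          ring
      _ = μ a := by
          have := hVV a a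
          rw [if_pos rfl] at this
          rw [this, mul_one]
  have hN : lam * (m:ℝ) ≤ ∑ u, ∑ v, A u v * |P u v| := by
    have h1 : (∑ a ∈ S, μ a) ≤ -(lam * (m:ℝ)) := by
      calc (∑ a ∈ S, μ a) ≤ ∑ a ∈ S, (-lam) := Finset.sum_le_sum hμS
        _ = (m:ℝ) * (-lam) := by
            rw [Finset.sum_const, nsmul_eq_mul, hmdef]
        _ = -(lam * (m:ℝ)) := by ring
    have h2 : (0:ℝ) ≤ ∑ u, ∑ v, (A u v * P u v + A u v * |P u v|) := by
      apply Finset.sum_nonneg; intro u _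
      apply Finset.sum_nonneg; intro v _
      have : A u v * P u v + A u v * |P u v| = A u v * (P u v + |P u v|) := by ring
      rw [this]
      apply mul_nonneg (hpos u v)
      have := neg_abs_le (P u v)
      linarith
    have h3 : (∑ u, ∑ v, (A u v * P u v + A u v * |P u v|))
        = (∑ u, ∑ v, A u v * P u v) + ∑ u, ∑ v, A u v * |P u v| := by
      rw [← Finset.sum_add_distrib]
      apply Finset.sum_congr rfl; intro u _
      rw [← Finset.sum_add_distrib]
    rw [h3, htrAP] at h2
    linarith
  have hD : (∑ u, ∑ v, A u v * (d u * d v)) ≤ (m:ℝ) := by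
    have e1 : (∑ u, ∑ v, A u v * (d u * d v))
        = ∑ i, μ i * ((∑ u, d u * V i u) * (∑ v, d v * V i v)) := by
      have s1 : (∑ u, ∑ v, A u v * (d u * d v))
          = ∑ u, ∑ v, ∑ i, (μ i * ((d u * V i u) * (d v * V i v))) := by
        apply Finset.sum_congr rfl; intro u _
        apply Finset.sum_congr rfl; intro v _
        rw [hAuv u v, Finset.sum_mul]
        apply Finset.sum_congr rfl; intro i _
        ring
      rw [s1]
      have s2 : (∑ u, ∑ v, ∑ i, (μ i * ((d u * V i u) * (d v * V i v))))
          = ∑ i, ∑ u, ∑ v, (μ i * ((d u * V i u) * (d v * V i v))) := by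
        calc (∑ u, ∑ v, ∑ i, (μ i * ((d u * V i u) * (d v * V i v))))
            = ∑ u, ∑ i, ∑ v, (μ i * ((d u * V i u) * (d v * V i v))) := by
              apply Finset.sum_congr rfl; intro u _; exact Finset.sum_comm
          _ = ∑ i, ∑ u, ∑ v, (μ i * ((d u * V i u) * (d v * V i v))) := Finset.sum_comm
      rw [s2]
      apply Finset.sum_congr rfl; intro i _
      rw [Finset.sum_mul_sum, Finset.mul_sum]
      apply Finset.sum_congr rfl; intro u _
      rw [Finset.mul_sum]
    rw [e1]
    have e2 : (∑ i, μ i * ((∑ u, d u * V i u) * (∑ v, d v * V i v)))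
        ≤ ∑ i, (∑ u, d u * V i u)^2 := by
      apply Finset.sum_le_sum
      intro i _
      have : (∑ u, d u * V i u) * (∑ v, d v * V i v) = (∑ u, d u * V i u)^2 := by
        rw [sq]
      rw [this]
      calc μ i * (∑ u, d u * V i u)^2 ≤ 1 * (∑ u, d u * V i u)^2 :=
            mul_le_mul_of_nonneg_right (hμ1 i) (sq_nonneg _)
        _ = (∑ u, d u * V i u)^2 := one_mul _
    have e3 : (∑ i, (∑ u, d u * V i u)^2) = (m:ℝ) := by
      rw [pars d]
      calc (∑ u, d u ^ 2) = ∑ u, P u u := Finset.sum_congr rfl (fun u _ => hd2 u)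
        _ = (m:ℝ) := htrP
    linarith
  have hTrAZ0 : (0:ℝ) ≤ ∑ u, ∑ v, A u v * Z u v := by
    apply Finset.sum_nonneg; intro u _
    apply Finset.sum_nonneg; intro v _
    exact mul_nonneg (hpos u v) (hZ0 u v)
  have hCS : (∑ u, ∑ v, A u v * |P u v|)^2
      ≤ (∑ u, ∑ v, A u v * Z u v) * (∑ u, ∑ v, A u v * (d u * d v)) := by
    set F : Fin n × Fin n → ℝ :=
      fun p => Real.sqrt (A p.1 p.2) * (|P p.1 p.2| * Real.sqrt (c p.1 * c p.2)) with hF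
    set G : Fin n × Fin n → ℝ :=
      fun p => Real.sqrt (A p.1 p.2) * Real.sqrt (d p.1 * d p.2) with hG
    have hFG : ∀ p : Fin n × Fin n, F p * G p = A p.1 p.2 * |P p.1 p.2| := by
      rintro ⟨u, v⟩
      rw [hF, hG]
      simp only []
      by_cases h1 : P u u = 0
      · rw [hPzero u h1 v]
        simp
      · by_cases h2 : P v v = 0
        · rw [hPsym u v, hPzero v h2 u]
          simp
        · have hA2 : Real.sqrt (A u v) * Real.sqrt (A u v) = A u v :=
            Real.mul_self_sqrt (hpos u v)
          have hsq : Real.sqrt (c u * c v) * Real.sqrt (d u * d v)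
              = Real.sqrt ((c u * c v) * (d u * d v)) :=
            (Real.sqrt_mul (mul_nonneg (hc0 u) (hc0 v)) _).symm
          have hval : (c u * c v) * (d u * d v) = 1 := by
            have hu := hcd u; rw [if_neg h1] at hu
            have hv := hcd v; rw [if_neg h2] at hv
            calc (c u * c v) * (d u * d v) = (c u * d u) * (c v * d v) := by ring
              _ = 1 := by rw [hu, hv]; ring
          calc Real.sqrt (A u v) * (|P u v| * Real.sqrt (c u * c v))
                * (Real.sqrt (A u v) * Real.sqrt (d u * d v))
              = (Real.sqrt (A u v) * Real.sqrt (A u v)) * |P u v|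
                * (Real.sqrt (c u * c v) * Real.sqrt (d u * d v)) := by ring
            _ = A u v * |P u v| * Real.sqrt ((c u * c v) * (d u * d v)) := by
                rw [hA2, hsq]
            _ = A u v * |P u v| := by rw [hval, Real.sqrt_one, mul_one]
    have hF2 : ∀ p : Fin n × Fin n, F p ^ 2 = A p.1 p.2 * Z p.1 p.2 := by
      rintro ⟨u, v⟩
      rw [hF, hZdef]
      simp only []
      rw [mul_pow, mul_pow, Real.sq_sqrt (hpos u v), sq_abs,
        Real.sq_sqrt (mul_nonneg (hc0 u) (hc0 v))]
    have hG2 : ∀ p : Fin n × Fin n, G p ^ 2 = A p.1 p.2 * (d p.1 * d p.2) := by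
      rintro ⟨u, v⟩
      rw [hG]
      simp only []
      rw [mul_pow, Real.sq_sqrt (hpos u v), Real.sq_sqrt (mul_nonneg (hd0 u) (hd0 v))]
    have hcs := Finset.sum_mul_sq_le_sq_mul_sq Finset.univ F G
    have eFG : (∑ p : Fin n × Fin n, F p * G p) = ∑ u, ∑ v, A u v * |P u v| := by
      rw [Fintype.sum_prod_type]
      apply Finset.sum_congr rfl; intro u _
      apply Finset.sum_congr rfl; intro v _
      exact hFG (u, v)
    have eF2 : (∑ p : Fin n × Fin n, F p ^ 2) = ∑ u, ∑ v, A u v * Z u v := by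
      rw [Fintype.sum_prod_type]
      apply Finset.sum_congr rfl; intro u _
      apply Finset.sum_congr rfl; intro v _
      exact hF2 (u, v)
    have eG2 : (∑ p : Fin n × Fin n, G p ^ 2) = ∑ u, ∑ v, A u v * (d u * d v) := by
      rw [Fintype.sum_prod_type]
      apply Finset.sum_congr rfl; intro u _
      apply Finset.sum_congr rfl; intro v _
      exact hG2 (u, v)
    rw [eFG, eF2, eG2] at hcs
    exact hcs
  have hTrAZ : lam ^ 2 * (m:ℝ) ≤ ∑ u, ∑ v, A u v * Z u v := by
    have h1 : (lam * (m:ℝ))^2 ≤ (∑ u, ∑ v, A u v * |P u v|)^2 := by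
      apply pow_le_pow_left₀ (mul_nonneg hlam (le_of_lt hm0)) hN
    have h2 : (∑ u, ∑ v, A u v * Z u v) * (∑ u, ∑ v, A u v * (d u * d v))
        ≤ (∑ u, ∑ v, A u v * Z u v) * (m:ℝ) :=
      mul_le_mul_of_nonneg_left hD hTrAZ0
    have h3 : (lam ^ 2 * (m:ℝ)) * (m:ℝ) ≤ (∑ u, ∑ v, A u v * Z u v) * (m:ℝ) := by
      nlinarith [h1, hCS, h2]
    exact le_of_mul_le_mul_right h3 hm0
  set R : Finset (Fin n) := Finset.univ.filter (fun i => τ ≤ μ i) with hRdef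
  set Q : ℝ := ∑ i ∈ R, q i with hQdef
  have hQcard : Q ≤ (R.card : ℝ) := by
    rw [hQdef]
    calc (∑ i ∈ R, q i) ≤ ∑ i ∈ R, (1:ℝ) := Finset.sum_le_sum (fun i _ => hq1 i)
      _ = (R.card : ℝ) := by rw [Finset.sum_const, nsmul_eq_mul, mul_one]
  set Qc : ℝ := ∑ i ∈ Finset.univ.filter (fun i => ¬ (τ ≤ μ i)), q i with hQcdef
  have hQQc : Q + Qc = (m:ℝ) := by
    rw [hQdef, hQcdef, hRdef]
    rw [Finset.sum_filter_add_sum_filter_not]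
    exact hqsum
  have hQc0 : 0 ≤ Qc := by
    rw [hQcdef]
    exact Finset.sum_nonneg (fun i _ => hq0 i)
  clear_value Q Qc
  have hsplit : lam ^ 2 * (m:ℝ) ≤ Q + τ * Qc := by
    have hdec : (∑ i, μ i * q i)
        = (∑ i ∈ R, μ i * q i)
          + ∑ i ∈ Finset.univ.filter (fun i => ¬ (τ ≤ μ i)), μ i * q i := by
      rw [hRdef]
      rw [Finset.sum_filter_add_sum_filter_not]
    have h1 : (∑ i ∈ R, μ i * q i) ≤ Q := by
      rw [hQdef]
      apply Finset.sum_le_sum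
      intro i _
      calc μ i * q i ≤ 1 * q i := mul_le_mul_of_nonneg_right (hμ1 i) (hq0 i)
        _ = q i := one_mul _
    have h2 : (∑ i ∈ Finset.univ.filter (fun i => ¬ (τ ≤ μ i)), μ i * q i) ≤ τ * Qc := by
      rw [hQcdef, Finset.mul_sum]
      apply Finset.sum_le_sum
      intro i hi
      have hi2 : ¬ (τ ≤ μ i) := by
        simpa using (Finset.mem_filter.mp hi).2
      have : μ i ≤ τ := le_of_lt (lt_of_not_ge hi2)
      exact mul_le_mul_of_nonneg_right this (hq0 i)
    calc lam ^ 2 * (m:ℝ) ≤ ∑ u, ∑ v, A u v * Z u v := hTrAZ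
      _ = ∑ i, μ i * q i := hqA.symm
      _ = (∑ i ∈ R, μ i * q i)
          + ∑ i ∈ Finset.univ.filter (fun i => ¬ (τ ≤ μ i)), μ i * q i := hdec
      _ ≤ Q + τ * Qc := add_le_add h1 h2
  have hlam2 : lam ^ 2 ≤ 1 := by nlinarith
  have hQσ : σ * (m:ℝ) ≤ Q := by
    rcases eq_or_lt_of_le hlam2 with hc1 | hc2
    · -- lam^2 = 1, τ = 1
      have hτ1 : τ = 1 := by
        rw [hτdef, hc1]
        exact div_self (ne_of_gt hσ1')
      have hsum0 : (∑ i, (1 - μ i) * q i) = 0 := by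
        have e1 : (∑ i, (1 - μ i) * q i) = (∑ i, q i) - ∑ i, μ i * q i := by
          rw [← Finset.sum_sub_distrib]
          apply Finset.sum_congr rfl; intro i _; ring
        have hle : (∑ i, (1 - μ i) * q i) ≤ 0 := by
          rw [e1, hqsum, hqA]
          have := hTrAZ
          rw [hc1] at this
          linarith [this]
        have hge : 0 ≤ ∑ i, (1 - μ i) * q i :=
          Finset.sum_nonneg (fun i _ =>
            mul_nonneg (by linarith [hμ1 i]) (hq0 i))
        linarith
      have hall := (Finset.sum_eq_zero_iff_of_nonneg
        (fun i _ => mul_nonneg (by linarith [hμ1 i]) (hq0 i))).mp hsum0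
      have hQc00 : Qc = 0 := by
        rw [hQcdef]
        apply Finset.sum_eq_zero
        intro i hi
        have hi2 : ¬ (τ ≤ μ i) := by
          simpa using (Finset.mem_filter.mp hi).2
        have hμi : μ i < 1 := by
          rw [hτ1] at hi2
          exact lt_of_not_ge hi2
        have := hall i (Finset.mem_univ i)
        have h1μ : (1 - μ i) ≠ 0 := by linarith
        exact (mul_eq_zero.mp this).resolve_left h1μ
      have hQm : Q = (m:ℝ) := by linarith [hQQc, hQc00]
      rw [hQm]
      nlinarith [hm0]
    · -- lam^2 < 1
      have hτmul : τ * (1 - σ) = lam ^ 2 - σ := by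
        rw [hτdef]
        field_simp
      have key2 : (lam ^ 2 - τ) * (m:ℝ) ≤ (1 - τ) * Q := by nlinarith [hsplit, hQQc]
      have h2 : (1 - σ) * ((lam ^ 2 - τ) * (m:ℝ)) ≤ (1 - σ) * ((1 - τ) * Q) :=
        mul_le_mul_of_nonneg_left key2 (le_of_lt hσ1')
      have e1 : (1 - σ) * ((lam ^ 2 - τ) * (m:ℝ)) = σ * (1 - lam ^ 2) * (m:ℝ) := by
        linear_combination (-(m:ℝ)) * hτmul
      have e2 : (1 - σ) * ((1 - τ) * Q) = (1 - lam ^ 2) * Q := by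
        linear_combination (-Q) * hτmul
      rw [e1, e2] at h2
      have h1lam : (0:ℝ) < 1 - lam ^ 2 := by linarith
      nlinarith [h2, h1lam]
  have ht0 : (0:ℝ) ≤ (t:ℝ) := Nat.cast_nonneg t
  have hσσ : σ ^ 2 ≤ σ := by nlinarith
  calc σ ^ 2 * t ≤ σ * (t:ℝ) := mul_le_mul_of_nonneg_right hσσ ht0
    _ ≤ σ * (m:ℝ) := by nlinarith
    _ ≤ Q := hQσ
    _ ≤ (R.card : ℝ) := hQcard
end

section
/- Let A be a symmetric n×n real matrix with ‖A‖ ≤ 1. Suppose there exists a positive semidefinite matrix M with ⟨A, M⟩ ≥ 1 - ε (Frobenius inner product), ‖M‖_F² ≤ 1/r, and Tr(M) = 1. Then for all C > 1, the number of eigenvalues of A that are at least 1 - Cε is at least (1 - 1/C)² r. -/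
open Matrix Finset
open scoped Classical

theorem stmt2 {n : ℕ} (A M : Matrix (Fin n) (Fin n) ℝ) (hA : A.IsHermitian)
    (hnorm : ∀ i, |hA.eigenvalues i| ≤ 1)
    (hM : M.PosSemidef) (ε r : ℝ) (hr : 0 < r)
    (hip : 1 - ε ≤ Matrix.trace (Aᵀ * M))
    (hF : Matrix.trace (Mᵀ * M) ≤ 1 / r)
    (htr : Matrix.trace M = 1)
    (C : ℝ) (hC : 1 < C) :
    (1 - 1 / C) ^ 2 * r ≤
      ((Finset.univ.filter fun i => 1 - C * ε ≤ hA.eigenvalues i).card : ℝ) := by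
  set U : Matrix (Fin n) (Fin n) ℝ := ↑(hA.eigenvectorUnitary) with hU
  set N : Matrix (Fin n) (Fin n) ℝ := Uᴴ * M * U with hN
  have hNsd : N.PosSemidef := hM.conjTranspose_mul_mul_same U
  have hUU : U * Uᴴ = 1 := by
    rw [← Matrix.star_eq_conjTranspose]
    exact (Matrix.mem_unitaryGroup_iff).mp hA.eigenvectorUnitary.2
  have htrN : N.trace = M.trace := by
    rw [hN, Matrix.trace_mul_cycle, hUU, one_mul]
  have hd0 : ∀ i, 0 ≤ N i i := fun i => by simpa using hNsd.diag_nonneg (i := i)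
  have hspec : A = U * (diagonal hA.eigenvalues) * Uᴴ := by
    have := hA.spectral_theorem
    simpa [hU, Matrix.star_eq_conjTranspose, RCLike.ofReal_real_eq_id] using this
  have hAt : Aᵀ = A := by
    rw [← Matrix.conjTranspose_eq_transpose_of_trivial]; exact hA
  have hMt : Mᵀ = M := by
    rw [← Matrix.conjTranspose_eq_transpose_of_trivial]; exact hM.isHermitian
  have hAM : (A * M).trace = ∑ i, hA.eigenvalues i * N i i := by
    conv_lhs => rw [hspec]
    rw [mul_assoc (U * diagonal hA.eigenvalues) Uᴴ M, Matrix.trace_mul_comm, ← mul_assoc,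
      Matrix.trace_mul_comm, ← hN]
    simp [Matrix.trace, Matrix.diag_apply, Matrix.diagonal_mul]
  have hNsym : Nᴴ = N := hNsd.isHermitian
  have hNN : (N * N).trace = (M * M).trace := by
    rw [hN]
    rw [show Uᴴ * M * U * (Uᴴ * M * U) = Uᴴ * M * (U * Uᴴ * (M * U)) by
      simp only [Matrix.mul_assoc]]
    rw [hUU, one_mul, Matrix.trace_mul_comm,
      show M * U * (Uᴴ * M) = M * (U * Uᴴ) * M by simp only [Matrix.mul_assoc], hUU, mul_one]
  have hsymm : ∀ i j, N j i = N i j := by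
    intro i j
    have h := congrFun (congrFun hNsym j) i
    rw [Matrix.conjTranspose_apply, star_trivial] at h
    exact h.symm
  have hdiagsq : ∑ i, (N i i)^2 ≤ (N * N).trace := by
    have h1 : ∀ i, (N * N) i i = ∑ j, (N i j)^2 := by
      intro i
      rw [Matrix.mul_apply]
      refine Finset.sum_congr rfl fun j _ => ?_
      rw [hsymm j i, sq]
    rw [Matrix.trace]
    simp only [Matrix.diag_apply, h1]
    refine Finset.sum_le_sum fun i _ => ?_
    exact Finset.single_le_sum (f := fun j => (N i j)^2) (fun j _ => sq_nonneg _)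
      (Finset.mem_univ i)
  -- scalar facts
  have hsum : ∑ i, N i i = 1 := by
    have : N.trace = 1 := htrN.trans htr
    simpa [Matrix.trace, Matrix.diag_apply] using this
  have hlam : 1 - ε ≤ ∑ i, hA.eigenvalues i * N i i := by
    rw [← hAM]; rw [hAt] at hip; exact hip
  have hsq : ∑ i, (N i i)^2 ≤ 1 / r := by
    refine hdiagsq.trans (hNN.le.trans ?_)
    rw [hMt] at hF; exact hF
  have hle1 : ∀ i, hA.eigenvalues i ≤ 1 := fun i => (abs_le.mp (hnorm i)).2
  have hC0 : (0:ℝ) < C := lt_trans one_pos hC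
  have h1C : (0:ℝ) ≤ 1 - 1/C := by
    rw [sub_nonneg]
    exact (div_le_one hC0).mpr hC.le
  set S := Finset.univ.filter fun i => 1 - C * ε ≤ hA.eigenvalues i with hS
  set T := Finset.univ.filter fun i => ¬ (1 - C * ε ≤ hA.eigenvalues i) with hT
  have hsplit : ∑ i ∈ S, N i i + ∑ i ∈ T, N i i = 1 := by
    rw [hS, hT, Finset.sum_filter_add_sum_filter_not, hsum]
  have hterm0 : ∀ i, 0 ≤ (1 - hA.eigenvalues i) * N i i := fun i =>
    mul_nonneg (sub_nonneg.2 (hle1 i)) (hd0 i)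
  have hresid : ∑ i, (1 - hA.eigenvalues i) * N i i ≤ ε := by
    have he : ∑ i, (1 - hA.eigenvalues i) * N i i
        = ∑ i, N i i - ∑ i, hA.eigenvalues i * N i i := by
      rw [← Finset.sum_sub_distrib]
      exact Finset.sum_congr rfl fun i _ => by ring
    rw [he, hsum]
    linarith
  have hε0 : 0 ≤ ε := by
    by_contra h
    push_neg at h
    have h0 : (0:ℝ) ≤ ∑ i, (1 - hA.eigenvalues i) * N i i :=
      Finset.sum_nonneg fun i _ => hterm0 i
    linarith
  have hTsum : ∑ i ∈ T, N i i ≤ 1 / C := by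
    have hTresid : ∑ i ∈ T, (1 - hA.eigenvalues i) * N i i ≤ ε :=
      le_trans (Finset.sum_le_sum_of_subset_of_nonneg (Finset.subset_univ T)
        fun i _ _ => hterm0 i) hresid
    rcases eq_or_lt_of_le hε0 with h0 | hpos
    · have hall : ∀ i ∈ T, N i i = 0 := by
        have hz : ∑ i, (1 - hA.eigenvalues i) * N i i = 0 :=
          le_antisymm (hresid.trans h0.ge) (Finset.sum_nonneg fun i _ => hterm0 i)
        have hzero := (Finset.sum_eq_zero_iff_of_nonneg (fun i _ => hterm0 i)).mp hz
        intro i hi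
        have hi' : hA.eigenvalues i < 1 - C * ε := by
          rw [hT, Finset.mem_filter] at hi
          exact not_le.mp hi.2
        have hlt : 0 < 1 - hA.eigenvalues i := by
          rw [← h0] at hi'
          simp only [mul_zero, sub_zero] at hi'
          linarith
        have := hzero i (Finset.mem_univ i)
        exact (mul_eq_zero.mp this).resolve_left (ne_of_gt hlt)
      rw [Finset.sum_eq_zero hall]
      positivity
    · have h1 : C * ε * ∑ i ∈ T, N i i ≤ ∑ i ∈ T, (1 - hA.eigenvalues i) * N i i := by
        rw [Finset.mul_sum]
        refine Finset.sum_le_sum fun i hi => ?_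
        have hi' : hA.eigenvalues i < 1 - C * ε := by
          rw [hT, Finset.mem_filter] at hi
          exact not_le.mp hi.2
        exact mul_le_mul_of_nonneg_right (by linarith) (hd0 i)
      have hkey : C * ε * ∑ i ∈ T, N i i ≤ ε := h1.trans hTresid
      rw [le_div_iff₀ hC0]
      nlinarith [Finset.sum_nonneg (fun i (_ : i ∈ T) => hd0 i)]
  have hSsum : 1 - 1/C ≤ ∑ i ∈ S, N i i := by linarith
  have hCS : (∑ i ∈ S, N i i)^2 ≤ (S.card : ℝ) * ∑ i ∈ S, (N i i)^2 :=
    sq_sum_le_card_mul_sum_sq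
  have hsub : ∑ i ∈ S, (N i i)^2 ≤ 1 / r :=
    le_trans (Finset.sum_le_sum_of_subset_of_nonneg (Finset.subset_univ S)
      fun i _ _ => sq_nonneg _) hsq
  have hfinal : (1 - 1/C)^2 ≤ (S.card : ℝ) * (1/r) := by
    calc (1 - 1/C)^2 ≤ (∑ i ∈ S, N i i)^2 := pow_le_pow_left₀ h1C hSsum 2
      _ ≤ (S.card : ℝ) * ∑ i ∈ S, (N i i)^2 := hCS
      _ ≤ (S.card : ℝ) * (1/r) := by
          exact mul_le_mul_of_nonneg_left hsub (Nat.cast_nonneg _)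
  calc (1 - 1/C)^2 * r ≤ ((S.card : ℝ) * (1/r)) * r :=
        mul_le_mul_of_nonneg_right hfinal hr.le
    _ = (S.card : ℝ) := by rw [mul_assoc, one_div, inv_mul_cancel₀ hr.ne', mul_one]
end

section
/- Let A be a nonnegative symmetric n×n matrix with ‖A‖ ≤ 1, and suppose A has orthonormal eigenvectors u_1,…,u_t with eigenvalues each at most -λ for some λ ≥ 0. Then there exists a matrix V ∈ ℝ^{t²×n} such that ⟨A, VᵀV⟩ ≥ λ², ‖VᵀV‖_F² ≤ 1/t, and Tr(VᵀV) = 1. -/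
open Matrix Finset
open scoped Classical

lemma quad_le_aux {n : ℕ} (A : Matrix (Fin n) (Fin n) ℝ) (hA : A.IsHermitian)
    (hnorm : ∀ i, |hA.eigenvalues i| ≤ 1) (x : Fin n → ℝ) :
    x ⬝ᵥ A.mulVec x ≤ x ⬝ᵥ x := by
  have hspec := hA.spectral_theorem
  set U : Matrix (Fin n) (Fin n) ℝ := (hA.eigenvectorUnitary : Matrix (Fin n) (Fin n) ℝ) with hU
  have hUU : U * star U = 1 := (Matrix.mem_unitaryGroup_iff).mp hA.eigenvectorUnitary.2
  have hco : (RCLike.ofReal ∘ hA.eigenvalues : Fin n → ℝ) = hA.eigenvalues := by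
    funext i; simp
  have h1 : (1 : Matrix (Fin n) (Fin n) ℝ) - A
      = U * diagonal (fun i => 1 - hA.eigenvalues i) * star U := by
    have hdd : diagonal (fun i => (1:ℝ) - hA.eigenvalues i)
        = 1 - diagonal (RCLike.ofReal ∘ hA.eigenvalues) := by
      rw [hco, ← diagonal_one, ← diagonal_sub]
    rw [hdd, Matrix.mul_sub, Matrix.sub_mul, Matrix.mul_one, hUU]
    exact congrArg (fun M => 1 - M) hspec
  have hpsd : ((1 : Matrix (Fin n) (Fin n) ℝ) - A).PosSemidef := by
    rw [h1]
    exact (Matrix.posSemidef_diagonal_iff.mpr (fun i => by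
      have := abs_le.mp (hnorm i); linarith)).mul_mul_conjTranspose_same U
  have h2 := hpsd.dotProduct_mulVec_nonneg x
  simp only [star_trivial, Matrix.sub_mulVec, Matrix.one_mulVec, dotProduct_sub] at h2
  linarith

theorem stmt3 {n t : ℕ} (ht : 0 < t) (A : Matrix (Fin n) (Fin n) ℝ) (hA : A.IsHermitian)
    (hpos : ∀ i j, 0 ≤ A i j) (hnorm : ∀ i, |hA.eigenvalues i| ≤ 1)
    (lam : ℝ) (hlam : 0 ≤ lam)
    (u : Fin t → Fin n → ℝ) (μ : Fin t → ℝ)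
    (hortho : ∀ i j, u i ⬝ᵥ u j = if i = j then 1 else 0)
    (heig : ∀ i, A.mulVec (u i) = μ i • u i)
    (hμ : ∀ i, μ i ≤ -lam) :
    ∃ V : Matrix (Fin (t ^ 2)) (Fin n) ℝ,
      lam ^ 2 ≤ Matrix.trace (Aᵀ * (Vᵀ * V)) ∧
      Matrix.trace ((Vᵀ * V)ᵀ * (Vᵀ * V)) ≤ 1 / t ∧
      Matrix.trace (Vᵀ * V) = 1 := by
  have ht' : (0:ℝ) < (t:ℝ) := by exact_mod_cast ht
  set P : Fin n → Fin n → ℝ := fun k l => ∑ i, u i k * u i l with hPdef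
  set d : Fin n → ℝ := fun k => Real.sqrt (P k k) with hddef
  have hPnn : ∀ k, 0 ≤ P k k := fun k =>
    Finset.sum_nonneg fun i _ => mul_self_nonneg _
  have hdnn : ∀ k, 0 ≤ d k := fun k => Real.sqrt_nonneg _
  have hdsq : ∀ k, d k * d k = P k k := fun k => Real.mul_self_sqrt (hPnn k)
  have hPsym : ∀ k l, P k l = P l k := by
    intro k l; simp only [hPdef]
    exact Finset.sum_congr rfl fun i _ => mul_comm _ _
  have hd0 : ∀ k l, d k = 0 → P k l = 0 := by
    intro k l hk
    have hPkk : P k k = 0 := by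
      have := hdsq k; rw [hk] at this; linarith
    have hz : ∀ i ∈ Finset.univ, u i k * u i k = 0 := by
      rw [← Finset.sum_eq_zero_iff_of_nonneg (fun i _ => mul_self_nonneg (u i k))]
      exact hPkk
    have huz : ∀ i : Fin t, u i k = 0 := fun i =>
      mul_self_eq_zero.mp (hz i (Finset.mem_univ i))
    simp only [hPdef]
    exact Finset.sum_eq_zero fun i _ => by rw [huz i, zero_mul]
  have htrP : ∑ k, P k k = (t:ℝ) := by
    simp only [hPdef]
    rw [Finset.sum_comm]
    have : ∀ i : Fin t, ∑ k, u i k * u i k = 1 := by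
      intro i
      have := hortho i i
      simpa [dotProduct] using this
    rw [Finset.sum_congr rfl fun i _ => this i]
    simp
  have hCS : ∀ k l, P k l * P k l ≤ P k k * P l l := by
    intro k l
    have := Finset.sum_mul_sq_le_sq_mul_sq Finset.univ (fun i => u i k) (fun i => u i l)
    simp only [hPdef]
    calc (∑ i, u i k * u i l) * (∑ i, u i k * u i l)
        = (∑ i, u i k * u i l) ^ 2 := by ring
      _ ≤ (∑ i, (u i k) ^ 2) * (∑ i, (u i l) ^ 2) := this
      _ = (∑ i, u i k * u i k) * (∑ i, u i l * u i l) := by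
          congr 1 <;> exact Finset.sum_congr rfl fun i _ => by ring
  have hP2 : ∑ k, ∑ l, P k l * P k l = (t:ℝ) := by
    have step1 : ∀ k l : Fin n, P k l * P k l
        = ∑ i, ∑ j, (u i k * u j k) * (u i l * u j l) := by
      intro k l
      simp only [hPdef]
      rw [Finset.sum_mul_sum]
      exact Finset.sum_congr rfl fun i _ => Finset.sum_congr rfl fun j _ => by ring
    calc ∑ k, ∑ l, P k l * P k l
        = ∑ k, ∑ l, ∑ i, ∑ j, (u i k * u j k) * (u i l * u j l) := by
          exact Finset.sum_congr rfl fun k _ => Finset.sum_congr rfl fun l _ => step1 k l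
      _ = ∑ k, ∑ i, ∑ l, ∑ j, (u i k * u j k) * (u i l * u j l) :=
          Finset.sum_congr rfl fun k _ => Finset.sum_comm
      _ = ∑ i, ∑ k, ∑ l, ∑ j, (u i k * u j k) * (u i l * u j l) := Finset.sum_comm
      _ = ∑ i, ∑ k, ∑ j, ∑ l, (u i k * u j k) * (u i l * u j l) :=
          Finset.sum_congr rfl fun i _ => Finset.sum_congr rfl fun k _ => Finset.sum_comm
      _ = ∑ i, ∑ j, ∑ k, ∑ l, (u i k * u j k) * (u i l * u j l) :=
          Finset.sum_congr rfl fun i _ => Finset.sum_comm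
      _ = ∑ i, ∑ j, (∑ k, u i k * u j k) * (∑ l, u i l * u j l) := by
          refine Finset.sum_congr rfl fun i _ => Finset.sum_congr rfl fun j _ => ?_
          rw [Finset.sum_mul_sum]
      _ = ∑ i : Fin t, ∑ j : Fin t, (if i = j then (1:ℝ) else 0) * (if i = j then 1 else 0) := by
          refine Finset.sum_congr rfl fun i _ => Finset.sum_congr rfl fun j _ => ?_
          rw [show (∑ k, u i k * u j k) = u i ⬝ᵥ u j from rfl, hortho i j]
      _ = (t:ℝ) := by simp
  have hAP : ∑ k, ∑ l, A k l * P k l = ∑ i, μ i := by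
    have step1 : ∀ k : Fin n, ∑ l, A k l * P k l = ∑ i, u i k * (A.mulVec (u i)) k := by
      intro k
      simp only [hPdef, Finset.mul_sum]
      rw [Finset.sum_comm]
      refine Finset.sum_congr rfl fun i _ => ?_
      simp only [Matrix.mulVec, dotProduct, Finset.mul_sum]
      exact Finset.sum_congr rfl fun l _ => by ring
    calc ∑ k, ∑ l, A k l * P k l = ∑ k, ∑ i, u i k * (A.mulVec (u i)) k := by
          exact Finset.sum_congr rfl fun k _ => step1 k
      _ = ∑ i, ∑ k, u i k * (A.mulVec (u i)) k := Finset.sum_comm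
      _ = ∑ i, μ i := by
          refine Finset.sum_congr rfl fun i _ => ?_
          rw [heig i]
          have h1 : ∑ k, u i k * u i k = 1 := by
            simpa [dotProduct] using hortho i i
          simp only [Pi.smul_apply, smul_eq_mul]
          calc ∑ k, u i k * (μ i * u i k) = μ i * ∑ k, u i k * u i k := by
                rw [Finset.mul_sum]; exact Finset.sum_congr rfl fun k _ => by ring
            _ = μ i := by rw [h1, mul_one]
  -- the matrix V
  set e : Fin (t ^ 2) ≃ Fin t × Fin t := (finCongr (pow_two t)).trans finProdFinEquiv.symm with hedef
  set V : Matrix (Fin (t ^ 2)) (Fin n) ℝ :=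
    fun p k => u (e p).1 k * u (e p).2 k / (Real.sqrt t * d k) with hVdef
  have hst : Real.sqrt t * Real.sqrt t = (t:ℝ) := Real.mul_self_sqrt ht'.le
  have hM : ∀ k l, (Vᵀ * V) k l = P k l * P k l / ((t:ℝ) * (d k * d l)) := by
    intro k l
    rw [Matrix.mul_apply]
    simp only [Matrix.transpose_apply]
    have h1 : ∀ p : Fin (t ^ 2), V p k * V p l
        = ((fun q : Fin t × Fin t =>
            (u q.1 k * u q.1 l) * (u q.2 k * u q.2 l) / ((t:ℝ) * (d k * d l))) (e p)) := by
      intro p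
      simp only [hVdef]
      rw [div_mul_div_comm]
      congr 1
      · ring
      · rw [mul_mul_mul_comm, hst]
    calc ∑ p, V p k * V p l
        = ∑ p, (fun q : Fin t × Fin t =>
            (u q.1 k * u q.1 l) * (u q.2 k * u q.2 l) / ((t:ℝ) * (d k * d l))) (e p) :=
          Finset.sum_congr rfl fun p _ => h1 p
      _ = ∑ q : Fin t × Fin t,
            (u q.1 k * u q.1 l) * (u q.2 k * u q.2 l) / ((t:ℝ) * (d k * d l)) :=
          Fintype.sum_equiv e _ _ (fun p => rfl)
      _ = (∑ i, ∑ j, (u i k * u i l) * (u j k * u j l)) / ((t:ℝ) * (d k * d l)) := by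
          rw [Fintype.sum_prod_type]
          simp only [← Finset.sum_div]
      _ = P k l * P k l / ((t:ℝ) * (d k * d l)) := by
          congr 1
          rw [← Finset.sum_mul_sum]
  refine ⟨V, ?_, ?_, ?_⟩
  · -- first goal: lam ^ 2 ≤ trace (Aᵀ * (Vᵀ * V))
    have htr : Matrix.trace (Aᵀ * (Vᵀ * V)) = ∑ k, ∑ l, A l k * (Vᵀ * V) l k := by
      simp only [Matrix.trace, Matrix.diag, Matrix.mul_apply, Matrix.transpose_apply]
    obtain ⟨S1, hS1def⟩ : ∃ x : ℝ,
        x = ∑ k, ∑ l, A k l * (P k l * P k l / ((t:ℝ) * (d k * d l))) := ⟨_, rfl⟩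
    obtain ⟨S2, hS2def⟩ : ∃ x : ℝ, x = ∑ k, ∑ l, A k l * (d k * d l) := ⟨_, rfl⟩
    obtain ⟨SA, hSAdef⟩ : ∃ x : ℝ, x = ∑ k, ∑ l, A k l * |P k l| := ⟨_, rfl⟩
    have htr2 : Matrix.trace (Aᵀ * (Vᵀ * V)) = S1 := by
      rw [htr,
        show (∑ k, ∑ l, A l k * (Vᵀ * V) l k) = ∑ k, ∑ l, A k l * (Vᵀ * V) k l from
          Finset.sum_comm, hS1def]
      exact Finset.sum_congr rfl fun k _ => Finset.sum_congr rfl fun l _ => by rw [hM k l]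
    have hS1nn : 0 ≤ S1 := hS1def ▸
      Finset.sum_nonneg fun k _ => Finset.sum_nonneg fun l _ =>
        mul_nonneg (hpos k l) (div_nonneg (mul_self_nonneg _)
          (by positivity))
    -- step (a)
    have hmusum : ∑ i, μ i ≤ -(lam * (t:ℝ)) := by
      calc ∑ i, μ i ≤ ∑ _i : Fin t, (-lam) := Finset.sum_le_sum fun i _ => hμ i
        _ = -(lam * (t:ℝ)) := by
            simp [Finset.sum_const, Finset.card_univ, nsmul_eq_mul]; ring
    have hSA : lam * (t:ℝ) ≤ SA := by
      have h3 : ∑ k, ∑ l, -(A k l * P k l) ≤ SA := hSAdef ▸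
        Finset.sum_le_sum fun k _ => Finset.sum_le_sum fun l _ => by
          rw [← mul_neg]
          exact mul_le_mul_of_nonneg_left (neg_le_abs _) (hpos k l)
      have h4 : ∑ k, ∑ l, -(A k l * P k l) = -(∑ k, ∑ l, A k l * P k l) := by
        simp [Finset.sum_neg_distrib]
      rw [h4, hAP] at h3
      linarith
    have hSAnn : 0 ≤ SA := le_trans (mul_nonneg hlam ht'.le) hSA
    -- step (b): Cauchy-Schwarz
    have hF2 : ∑ q : Fin n × Fin n,
        (Real.sqrt (A q.1 q.2 * (P q.1 q.2 * P q.1 q.2 / ((t:ℝ) * (d q.1 * d q.2))))) ^ 2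
        = S1 := by
      rw [Fintype.sum_prod_type, hS1def]
      refine Finset.sum_congr rfl fun k _ => Finset.sum_congr rfl fun l _ => ?_
      exact Real.sq_sqrt (mul_nonneg (hpos k l)
        (div_nonneg (mul_self_nonneg _) (by positivity)))
    have hG2 : ∑ q : Fin n × Fin n, (Real.sqrt (A q.1 q.2 * (d q.1 * d q.2))) ^ 2 = S2 := by
      rw [Fintype.sum_prod_type, hS2def]
      refine Finset.sum_congr rfl fun k _ => Finset.sum_congr rfl fun l _ => ?_
      exact Real.sq_sqrt (mul_nonneg (hpos k l) (mul_nonneg (hdnn k) (hdnn l)))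
    have hFGterm : ∀ q : Fin n × Fin n,
        Real.sqrt (A q.1 q.2 * (P q.1 q.2 * P q.1 q.2 / ((t:ℝ) * (d q.1 * d q.2)))) *
          Real.sqrt (A q.1 q.2 * (d q.1 * d q.2))
        = A q.1 q.2 * |P q.1 q.2| / Real.sqrt (t:ℝ) := by
      rintro ⟨k, l⟩
      simp only
      by_cases hk : d k = 0
      · rw [hd0 k l hk, hk]; simp
      by_cases hl : d l = 0
      · rw [show P k l = 0 from (hPsym k l).trans (hd0 l k hl), hl]; simp
      · have hdk : 0 < d k := (hdnn k).lt_of_ne (Ne.symm hk)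
        have hdl : 0 < d l := (hdnn l).lt_of_ne (Ne.symm hl)
        rw [← Real.sqrt_mul (mul_nonneg (hpos k l)
          (div_nonneg (mul_self_nonneg _) (by positivity)))]
        have hrw : A k l * (P k l * P k l / ((t:ℝ) * (d k * d l))) * (A k l * (d k * d l))
            = (A k l * |P k l| / Real.sqrt (t:ℝ)) ^ 2 := by
          rw [div_pow, mul_pow, sq_abs, Real.sq_sqrt ht'.le]
          field_simp
        rw [hrw, Real.sqrt_sq (div_nonneg (mul_nonneg (hpos k l) (abs_nonneg _)) (Real.sqrt_nonneg _))]
    have hsum : ∑ q : Fin n × Fin n,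
        Real.sqrt (A q.1 q.2 * (P q.1 q.2 * P q.1 q.2 / ((t:ℝ) * (d q.1 * d q.2)))) *
          Real.sqrt (A q.1 q.2 * (d q.1 * d q.2))
        = SA / Real.sqrt (t:ℝ) := by
      rw [Finset.sum_congr rfl fun q _ => hFGterm q, ← Finset.sum_div]
      congr 1
      rw [Fintype.sum_prod_type, hSAdef]
    have hb : SA ^ 2 / (t:ℝ) ≤ S1 * S2 := by
      have hFG := Finset.sum_mul_sq_le_sq_mul_sq Finset.univ
        (fun q : Fin n × Fin n =>
          Real.sqrt (A q.1 q.2 * (P q.1 q.2 * P q.1 q.2 / ((t:ℝ) * (d q.1 * d q.2)))))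
        (fun q : Fin n × Fin n => Real.sqrt (A q.1 q.2 * (d q.1 * d q.2)))
      beta_reduce at hFG
      rw [hsum, hF2, hG2] at hFG
      rwa [div_pow, Real.sq_sqrt ht'.le] at hFG
    -- step (c)
    have hS2nn : 0 ≤ S2 := hS2def ▸
      Finset.sum_nonneg fun k _ => Finset.sum_nonneg fun l _ =>
        mul_nonneg (hpos k l) (mul_nonneg (hdnn k) (hdnn l))
    have hS2t : S2 ≤ (t:ℝ) := by
      have hql := quad_le_aux A hA hnorm d
      have he1 : d ⬝ᵥ A.mulVec d = S2 := by
        simp only [dotProduct, Matrix.mulVec, Finset.mul_sum, hS2def]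
        exact Finset.sum_congr rfl fun k _ => Finset.sum_congr rfl fun l _ => by ring
      have he2 : d ⬝ᵥ d = (t:ℝ) := by
        simp only [dotProduct]
        rw [Finset.sum_congr rfl fun k _ => hdsq k, htrP]
      rw [he1, he2] at hql
      exact hql
    -- combine
    rw [htr2]
    have h5 : (lam * (t:ℝ)) ^ 2 ≤ SA ^ 2 :=
      pow_le_pow_left₀ (mul_nonneg hlam ht'.le) hSA 2
    have h6 : SA ^ 2 ≤ (t:ℝ) * (S1 * S2) :=
      le_of_le_of_eq ((div_le_iff₀ ht').mp hb) (by ring)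
    have h7 : S1 * S2 ≤ S1 * (t:ℝ) := mul_le_mul_of_nonneg_left hS2t hS1nn
    have h9 : lam ^ 2 * ((t:ℝ) * (t:ℝ)) ≤ S1 * ((t:ℝ) * (t:ℝ)) := by
      calc lam ^ 2 * ((t:ℝ) * (t:ℝ)) = (lam * (t:ℝ)) ^ 2 := by ring
        _ ≤ SA ^ 2 := h5
        _ ≤ (t:ℝ) * (S1 * S2) := h6
        _ ≤ (t:ℝ) * (S1 * (t:ℝ)) := mul_le_mul_of_nonneg_left h7 ht'.le
        _ = S1 * ((t:ℝ) * (t:ℝ)) := by ring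
    exact le_of_mul_le_mul_right h9 (mul_pos ht' ht')
  · -- second goal
    have htr : Matrix.trace ((Vᵀ * V)ᵀ * (Vᵀ * V)) = ∑ k, ∑ l, (Vᵀ * V) l k * (Vᵀ * V) l k := by
      simp only [Matrix.trace, Matrix.diag, Matrix.mul_apply, Matrix.transpose_apply]
    have hterm : ∀ k l, (Vᵀ * V) k l * (Vᵀ * V) k l ≤ P k l * P k l / ((t:ℝ) * (t:ℝ)) := by
      intro k l
      rw [hM k l]
      by_cases hk : d k = 0
      · rw [hd0 k l hk]; simp
      by_cases hl : d l = 0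
      · rw [hPsym k l, hd0 l k hl]; simp
      · have hdk : 0 < d k := (hdnn k).lt_of_ne (Ne.symm hk)
        have hdl : 0 < d l := (hdnn l).lt_of_ne (Ne.symm hl)
        have hcs : P k l * P k l ≤ (d k * d l) * (d k * d l) := by
          rw [mul_mul_mul_comm, hdsq k, hdsq l]; exact hCS k l
        rw [div_mul_div_comm, div_le_div_iff₀ (by positivity) (by positivity)]
        nlinarith [mul_nonneg (mul_nonneg (mul_pos ht' ht').le (mul_self_nonneg (P k l)))
          (sub_nonneg.mpr hcs)]
    rw [htr]
    calc ∑ k, ∑ l, (Vᵀ * V) l k * (Vᵀ * V) l k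
        ≤ ∑ k, ∑ l, P l k * P l k / ((t:ℝ) * (t:ℝ)) :=
          Finset.sum_le_sum fun k _ => Finset.sum_le_sum fun l _ => hterm l k
      _ = (∑ k, ∑ l, P l k * P l k) / ((t:ℝ) * (t:ℝ)) := by
          simp only [← Finset.sum_div]
      _ = (t:ℝ) / ((t:ℝ) * (t:ℝ)) := by
          rw [show (∑ k, ∑ l, P l k * P l k) = ∑ k, ∑ l, P k l * P k l from Finset.sum_comm, hP2]
      _ = 1 / (t:ℝ) := by
          rw [div_eq_div_iff (by positivity : ((t:ℝ)*(t:ℝ)) ≠ 0) ht'.ne']; ring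
  · -- trace = 1
    have : Matrix.trace (Vᵀ * V) = ∑ k, (Vᵀ * V) k k := rfl
    rw [this]
    have hterm : ∀ k, (Vᵀ * V) k k = P k k / (t:ℝ) := by
      intro k
      rw [hM k k]
      by_cases hk : d k = 0
      · rw [hd0 k k hk, hk]
        simp
      · have hPkk : P k k ≠ 0 := by rw [← hdsq k]; exact mul_ne_zero hk hk
        rw [hdsq k]
        field_simp
    rw [Finset.sum_congr rfl fun k _ => hterm k, ← Finset.sum_div, htrP,
      div_self (ne_of_gt ht')]
end

section
/- Let X be a symmetric n×n real matrix with eigenvectors v_1,…,v_k having eigenvalues λ_1,…,λ_k all of absolute value at least λ > 0. Let Y be a symmetric n×n matrix and let P be the orthogonal projection onto the span of eigenvectors of Y with eigenvalues of absolute value less than λ - η for some η > 0. Then for any orthonormal basis u_1,…,u_k of span(v_1,…,v_k), ∑_{i=1}^k ‖P u_i‖² ≤ (1/η²) ∑_{i=1}^k ‖(X - Y) u_i‖². -/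
open Matrix Finset
open scoped Classical

lemma combo_dot {n k : ℕ} (u : Fin k → Fin n → ℝ)
    (hu : ∀ i i', u i ⬝ᵥ u i' = if i = i' then 1 else 0)
    (s : Finset (Fin k)) (c d : Fin k → ℝ) :
    (∑ i ∈ s, c i • u i) ⬝ᵥ (∑ i ∈ s, d i • u i) = ∑ i ∈ s, c i * d i := by
  have h1 : (∑ i ∈ s, c i • u i) ⬝ᵥ (∑ i ∈ s, d i • u i)
      = ∑ p, ∑ i ∈ s, ∑ i' ∈ s, (c i * d i') * (u i p * u i' p) := by
    apply Finset.sum_congr rfl; intro p _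
    simp only [Finset.sum_apply, Pi.smul_apply, smul_eq_mul, Finset.sum_mul, Finset.mul_sum]
    rw [Finset.sum_comm]
    apply Finset.sum_congr rfl; intro i _
    apply Finset.sum_congr rfl; intro i' _
    ring
  rw [h1, Finset.sum_comm]
  apply Finset.sum_congr rfl; intro i hi
  rw [Finset.sum_comm]
  have h2 : ∀ i' ∈ s, ∑ p, (c i * d i') * (u i p * u i' p)
      = if i = i' then c i * d i' else 0 := by
    intro i' _
    rw [← Finset.mul_sum]
    have : ∑ p, u i p * u i' p = u i ⬝ᵥ u i' := rfl
    rw [this, hu, mul_ite, mul_one, mul_zero]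
  rw [Finset.sum_congr rfl h2, Finset.sum_ite_eq s i (fun i' => c i * d i'), if_pos hi]

lemma expand_ortho {n k : ℕ} (u : Fin k → Fin n → ℝ)
    (hu : ∀ i i', u i ⬝ᵥ u i' = if i = i' then 1 else 0)
    {y : Fin n → ℝ} (hy : y ∈ Submodule.span ℝ (Set.range u)) :
    y = ∑ i, (u i ⬝ᵥ y) • u i := by
  induction hy using Submodule.span_induction with
  | mem x hx =>
    obtain ⟨m, rfl⟩ := hx
    simp [hu, ite_smul]
  | zero => simp
  | add x y hx hy ihx ihy =>
    have h : ∑ i, (u i ⬝ᵥ (x + y)) • u i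
        = (∑ i, (u i ⬝ᵥ x) • u i) + ∑ i, (u i ⬝ᵥ y) • u i := by
      simp [dotProduct_add, add_smul, Finset.sum_add_distrib]
    rw [h, ← ihx, ← ihy]
  | smul a x hx ih =>
    have h : ∑ i, (u i ⬝ᵥ (a • x)) • u i = a • ∑ i, (u i ⬝ᵥ x) • u i := by
      rw [Finset.smul_sum]
      apply Finset.sum_congr rfl; intro i _
      rw [dotProduct_smul, smul_smul, smul_eq_mul]
    rw [h, ← ih]

lemma span_invariant {n k : ℕ} (X : Matrix (Fin n) (Fin n) ℝ) (v : Fin k → Fin n → ℝ)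
    (μ : Fin k → ℝ) (hev : ∀ i, X.mulVec (v i) = μ i • v i)
    {x : Fin n → ℝ} (hx : x ∈ Submodule.span ℝ (Set.range v)) :
    X *ᵥ x ∈ Submodule.span ℝ (Set.range v) := by
  induction hx using Submodule.span_induction with
  | mem y hy =>
    obtain ⟨i, rfl⟩ := hy
    rw [hev]
    exact Submodule.smul_mem _ _ (Submodule.subset_span ⟨i, rfl⟩)
  | zero => simp [Matrix.mulVec_zero]
  | add x y hx hy ihx ihy => rw [Matrix.mulVec_add]; exact Submodule.add_mem _ ihx ihy
  | smul a x hx ih => rw [Matrix.mulVec_smul]; exact Submodule.smul_mem _ _ ih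

lemma parseval' {n : ℕ} (e : Fin n → Fin n → ℝ)
    (he : ∀ j j', e j ⬝ᵥ e j' = if j = j' then 1 else 0) (y z : Fin n → ℝ) :
    y ⬝ᵥ z = ∑ j, (e j ⬝ᵥ y) * (e j ⬝ᵥ z) := by
  set E : Matrix (Fin n) (Fin n) ℝ := Matrix.of e with hE
  have h1 : E * Eᵀ = 1 := by
    ext j j'
    simpa [hE, Matrix.mul_apply, Matrix.one_apply, dotProduct] using he j j'
  have h2 : Eᵀ * E = 1 := mul_eq_one_comm.mp h1
  have h3 : y ⬝ᵥ z = y ⬝ᵥ ((Eᵀ * E) *ᵥ z) := by rw [h2, Matrix.one_mulVec]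
  rw [h3, ← Matrix.mulVec_mulVec, Matrix.dotProduct_mulVec, ← Matrix.mulVec_transpose,
    Matrix.transpose_transpose]
  simp [Matrix.mulVec, dotProduct, hE, mul_comm]

lemma dot_symm {n : ℕ} (M : Matrix (Fin n) (Fin n) ℝ) (hM : M.IsHermitian)
    (a b : Fin n → ℝ) : a ⬝ᵥ (M *ᵥ b) = (M *ᵥ a) ⬝ᵥ b := by
  have hMt : Mᵀ = M := by
    have := hM.eq
    rwa [Matrix.conjTranspose_eq_transpose_of_trivial] at this
  rw [Matrix.dotProduct_mulVec, ← Matrix.mulVec_transpose, hMt]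

lemma key_spectral {n k : ℕ} (X : Matrix (Fin n) (Fin n) ℝ) (hX : X.IsHermitian)
    (v : Fin k → Fin n → ℝ) (μ : Fin k → ℝ) (lam : ℝ) (hlam : 0 < lam)
    (hev : ∀ i, X.mulVec (v i) = μ i • v i) (hμ : ∀ i, lam ≤ |μ i|)
    {x : Fin n → ℝ} (hx : x ∈ Submodule.span ℝ (Set.range v)) :
    lam ^ 2 * (x ⬝ᵥ x) ≤ (X *ᵥ x) ⬝ᵥ (X *ᵥ x) := by
  set e : Fin n → Fin n → ℝ := fun m => ⇑(hX.eigenvectorBasis m) with hedef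
  set τ : Fin n → ℝ := hX.eigenvalues with hτdef
  have heig : ∀ m, X *ᵥ e m = τ m • e m := fun m => hX.mulVec_eigenvectorBasis m
  have he : ∀ m m', e m ⬝ᵥ e m' = if m = m' then 1 else 0 := by
    intro m m'
    have := orthonormal_iff_ite.mp hX.eigenvectorBasis.orthonormal m m'
    rw [EuclideanSpace.inner_eq_star_dotProduct] at this
    simpa [dotProduct, hedef, mul_comm] using this
  -- e m ⬝ᵥ (X *ᵥ y) = τ m * (e m ⬝ᵥ y)
  have hXdot : ∀ m (y : Fin n → ℝ), e m ⬝ᵥ (X *ᵥ y) = τ m * (e m ⬝ᵥ y) := by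
    intro m y
    rw [dot_symm X hX, heig, smul_dotProduct, smul_eq_mul]
  -- orthogonality for small eigenvalues
  have horth : ∀ m, |τ m| < lam → e m ⬝ᵥ x = 0 := by
    intro m hm
    induction hx using Submodule.span_induction with
    | mem y hy =>
      obtain ⟨i, rfl⟩ := hy
      have h1 : e m ⬝ᵥ (X *ᵥ v i) = τ m * (e m ⬝ᵥ v i) := hXdot m (v i)
      have h2 : e m ⬝ᵥ (X *ᵥ v i) = μ i * (e m ⬝ᵥ v i) := by
        rw [hev, dotProduct_smul, smul_eq_mul]
      have hne : τ m ≠ μ i := by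
        intro h
        rw [h] at hm
        exact absurd (hμ i) (not_le.mpr hm)
      have := h1.symm.trans h2
      have hz : (τ m - μ i) * (e m ⬝ᵥ v i) = 0 := by linarith [this]
      rcases mul_eq_zero.mp hz with h | h
      · exact absurd (sub_eq_zero.mp h) hne
      · exact h
    | zero => simp
    | add a b _ _ iha ihb => rw [dotProduct_add, iha, ihb, add_zero]
    | smul c a _ ih => rw [dotProduct_smul, ih, smul_zero]
  rw [parseval' e he x x, parseval' e he (X *ᵥ x) (X *ᵥ x)]
  have hre : ∀ m, (e m ⬝ᵥ (X *ᵥ x)) * (e m ⬝ᵥ (X *ᵥ x))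
      = τ m ^ 2 * ((e m ⬝ᵥ x) * (e m ⬝ᵥ x)) := by
    intro m; rw [hXdot]; ring
  rw [Finset.sum_congr rfl (fun m _ => hre m), Finset.mul_sum]
  apply Finset.sum_le_sum
  intro m _
  rcases lt_or_ge (|τ m|) lam with h | h
  · rw [horth m h]; simp
  · have h1 : lam ^ 2 ≤ τ m ^ 2 := by nlinarith [abs_nonneg (τ m), sq_abs (τ m)]
    have h2 : 0 ≤ (e m ⬝ᵥ x) * (e m ⬝ᵥ x) := mul_self_nonneg _
    exact mul_le_mul_of_nonneg_right h1 h2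

lemma KF2 {n k : ℕ} (X : Matrix (Fin n) (Fin n) ℝ) (hX : X.IsHermitian)
    (v : Fin k → Fin n → ℝ) (μ : Fin k → ℝ) (lam : ℝ) (hlam : 0 < lam)
    (hev : ∀ i, X.mulVec (v i) = μ i • v i) (hμ : ∀ i, lam ≤ |μ i|)
    (u : Fin k → Fin n → ℝ)
    (huortho : ∀ i i', u i ⬝ᵥ u i' = if i = i' then 1 else 0)
    (hspan : Submodule.span ℝ (Set.range u) = Submodule.span ℝ (Set.range v))
    (m : Fin k → ℝ) :
    lam ^ 2 * (∑ i, m i ^ 2) ≤ ∑ i, (∑ l, (u i ⬝ᵥ (X *ᵥ u l)) * m l) ^ 2 := by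
  set x : Fin n → ℝ := ∑ l, m l • u l with hxdef
  have hxu : x ∈ Submodule.span ℝ (Set.range u) :=
    Submodule.sum_mem _ (fun l _ => Submodule.smul_mem _ _ (Submodule.subset_span ⟨l, rfl⟩))
  have hxv : x ∈ Submodule.span ℝ (Set.range v) := hspan ▸ hxu
  have hxx : x ⬝ᵥ x = ∑ i, m i ^ 2 := by
    rw [hxdef, combo_dot u huortho]
    exact Finset.sum_congr rfl (fun i _ => (sq (m i)).symm)
  have hXx : X *ᵥ x = ∑ l, m l • (X *ᵥ u l) := by
    rw [hxdef]
    rw [show (∑ l, m l • u l) = ∑ l, m l • u l from rfl]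
    rw [← Matrix.mulVecLin_apply, map_sum]
    exact Finset.sum_congr rfl (fun l _ => by rw [_root_.map_smul, Matrix.mulVecLin_apply])
  have hXxu : X *ᵥ x ∈ Submodule.span ℝ (Set.range u) :=
    hspan ▸ span_invariant X v μ hev hxv
  have hcoef : ∀ i, u i ⬝ᵥ (X *ᵥ x) = ∑ l, (u i ⬝ᵥ (X *ᵥ u l)) * m l := by
    intro i
    rw [hXx]
    have : u i ⬝ᵥ (∑ l, m l • (X *ᵥ u l)) = ∑ l, m l * (u i ⬝ᵥ (X *ᵥ u l)) := by
      simp [dotProduct, Finset.mul_sum, Finset.sum_apply]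
      rw [Finset.sum_comm]
      apply Finset.sum_congr rfl; intro l _
      apply Finset.sum_congr rfl; intro p _
      ring
    rw [this]
    exact Finset.sum_congr rfl (fun l _ => mul_comm _ _)
  have hpar : (X *ᵥ x) ⬝ᵥ (X *ᵥ x) = ∑ i, (u i ⬝ᵥ (X *ᵥ x)) ^ 2 := by
    conv_lhs => rw [expand_ortho u huortho hXxu]
    rw [combo_dot u huortho]
    exact Finset.sum_congr rfl (fun i _ => (sq _).symm)
  calc lam ^ 2 * (∑ i, m i ^ 2) = lam ^ 2 * (x ⬝ᵥ x) := by rw [hxx]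
    _ ≤ (X *ᵥ x) ⬝ᵥ (X *ᵥ x) := key_spectral X hX v μ lam hlam hev hμ hxv
    _ = ∑ i, (u i ⬝ᵥ (X *ᵥ x)) ^ 2 := hpar
    _ = ∑ i, (∑ l, (u i ⬝ᵥ (X *ᵥ u l)) * m l) ^ 2 :=
        Finset.sum_congr rfl (fun i _ => by rw [hcoef])

lemma dot_sum_smul {n : ℕ} {ι : Type*} (a : Fin n → ℝ) (s : Finset ι)
    (c : ι → ℝ) (b : ι → Fin n → ℝ) :
    a ⬝ᵥ (∑ i ∈ s, c i • b i) = ∑ i ∈ s, c i * (a ⬝ᵥ b i) := by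
  simp only [dotProduct, Finset.sum_apply, Pi.smul_apply, smul_eq_mul, Finset.mul_sum]
  rw [Finset.sum_comm]
  apply Finset.sum_congr rfl; intro i _
  apply Finset.sum_congr rfl; intro p _
  ring

lemma sum_matrix_mulVec {n : ℕ} {ι : Type*} (s : Finset ι)
    (M : ι → Matrix (Fin n) (Fin n) ℝ) (y : Fin n → ℝ) :
    (∑ j ∈ s, M j) *ᵥ y = ∑ j ∈ s, (M j *ᵥ y) := by
  ext p
  simp only [Matrix.mulVec, dotProduct, Finset.sum_apply, Matrix.sum_apply, Finset.sum_mul]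
  rw [Finset.sum_comm]

theorem stmt4 {n k : ℕ} (X Y : Matrix (Fin n) (Fin n) ℝ)
    (hX : X.IsHermitian) (hY : Y.IsHermitian)
    (v : Fin k → Fin n → ℝ) (μ : Fin k → ℝ) (lam η : ℝ) (hlam : 0 < lam) (hη : 0 < η)
    (hev : ∀ i, X.mulVec (v i) = μ i • v i) (hμ : ∀ i, lam ≤ |μ i|)
    (w : Fin n → Fin n → ℝ) (ν : Fin n → ℝ)
    (hw : ∀ j, Y.mulVec (w j) = ν j • w j)
    (hwortho : ∀ j j', w j ⬝ᵥ w j' = if j = j' then 1 else 0)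
    (P : Matrix (Fin n) (Fin n) ℝ)
    (hP : P = ∑ j ∈ Finset.univ.filter (fun j => |ν j| < lam - η),
      Matrix.vecMulVec (w j) (w j))
    (u : Fin k → Fin n → ℝ)
    (huortho : ∀ i i', u i ⬝ᵥ u i' = if i = i' then 1 else 0)
    (hspan : Submodule.span ℝ (Set.range u) = Submodule.span ℝ (Set.range v)) :
    ∑ i, (P.mulVec (u i)) ⬝ᵥ (P.mulVec (u i)) ≤
      (1 / η ^ 2) * ∑ i, ((X - Y).mulVec (u i)) ⬝ᵥ ((X - Y).mulVec (u i)) := by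
  have hRnonneg : 0 ≤ ∑ i, ((X - Y).mulVec (u i)) ⬝ᵥ ((X - Y).mulVec (u i)) := by
    apply Finset.sum_nonneg; intro i _
    exact Finset.sum_nonneg (fun p _ => mul_self_nonneg _)
  set S := Finset.univ.filter (fun j => |ν j| < lam - η) with hSdef
  rcases le_or_gt (lam - η) 0 with hle | hpos
  · -- trivial case : S is empty, P = 0
    have hSempty : S = ∅ := by
      rw [hSdef, Finset.filter_eq_empty_iff]
      intro j _
      exact not_lt.mpr (le_trans hle (abs_nonneg _))
    have hP0 : P = 0 := by rw [hP, hSempty, Finset.sum_empty]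
    rw [hP0]
    simp only [Matrix.zero_mulVec, zero_dotProduct, Finset.sum_const_zero]
    exact mul_nonneg (by positivity) hRnonneg
  -- main case
  set B : Fin n → Fin k → ℝ := fun j i => w j ⬝ᵥ u i with hBdef
  set A : Fin k → Fin k → ℝ := fun l i => u l ⬝ᵥ (X *ᵥ u i) with hAdef
  set G : Fin n → Fin k → ℝ := fun j i => ∑ l, A l i * B j l with hGdef
  -- LHS
  have hPu : ∀ i, P *ᵥ u i = ∑ j ∈ S, B j i • w j := by
    intro i
    rw [hP, sum_matrix_mulVec]
    apply Finset.sum_congr rfl; intro j _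
    ext p
    simp only [Matrix.mulVec, dotProduct, Matrix.vecMulVec_apply, Pi.smul_apply, smul_eq_mul,
      hBdef]
    rw [Finset.sum_mul]
    apply Finset.sum_congr rfl; intro q _
    ring
  have hL : ∑ i, (P *ᵥ u i) ⬝ᵥ (P *ᵥ u i) = ∑ i, ∑ j ∈ S, (B j i) ^ 2 := by
    apply Finset.sum_congr rfl; intro i _
    rw [hPu i, combo_dot w hwortho S]
    exact Finset.sum_congr rfl (fun j _ => (sq _).symm)
  -- entry identity
  have hEntry : ∀ j i, w j ⬝ᵥ ((X - Y) *ᵥ u i) = G j i - ν j * B j i := by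
    intro j i
    rw [Matrix.sub_mulVec, dotProduct_sub]
    congr 1
    · have hmem : X *ᵥ u i ∈ Submodule.span ℝ (Set.range u) := by
        rw [hspan]
        exact span_invariant X v μ hev (hspan ▸ Submodule.subset_span ⟨i, rfl⟩)
      conv_lhs => rw [expand_ortho u huortho hmem]
      rw [dot_sum_smul]
    · rw [dot_symm Y hY, hw, smul_dotProduct, smul_eq_mul]
  -- Parseval on the RHS, restricted to S
  have hRge : ∀ i, ∑ j ∈ S, (G j i - ν j * B j i) ^ 2
      ≤ ((X - Y) *ᵥ u i) ⬝ᵥ ((X - Y) *ᵥ u i) := by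
    intro i
    rw [parseval' w hwortho]
    calc ∑ j ∈ S, (G j i - ν j * B j i) ^ 2
        = ∑ j ∈ S, (w j ⬝ᵥ ((X - Y) *ᵥ u i)) * (w j ⬝ᵥ ((X - Y) *ᵥ u i)) := by
          apply Finset.sum_congr rfl; intro j _; rw [hEntry j i, sq]
      _ ≤ ∑ j, (w j ⬝ᵥ ((X - Y) *ᵥ u i)) * (w j ⬝ᵥ ((X - Y) *ᵥ u i)) := by
          apply Finset.sum_le_sum_of_subset_of_nonneg (Finset.filter_subset _ _)
          intro j _ _
          exact mul_self_nonneg _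
  -- core inequality
  set s : Finset (Fin n × Fin k) := S ×ˢ Finset.univ with hsdef
  set T : ℝ := ∑ p ∈ s, B p.1 p.2 ^ 2 with hTdef
  set g2 : ℝ := ∑ p ∈ s, G p.1 p.2 ^ 2 with hg2def
  set h2 : ℝ := ∑ p ∈ s, (ν p.1 * B p.1 p.2) ^ 2 with hh2def
  set GH : ℝ := ∑ p ∈ s, G p.1 p.2 * (ν p.1 * B p.1 p.2) with hGHdef
  have hT0 : 0 ≤ T := Finset.sum_nonneg (fun p _ => sq_nonneg _)
  have hg20 : 0 ≤ g2 := Finset.sum_nonneg (fun p _ => sq_nonneg _)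
  have hh20 : 0 ≤ h2 := Finset.sum_nonneg (fun p _ => sq_nonneg _)
  have hAsymm : ∀ l i, A l i = A i l := by
    intro l i
    rw [hAdef]
    simp only
    rw [dot_symm X hX, dotProduct_comm]
  have hg2ge : lam ^ 2 * T ≤ g2 := by
    rw [hTdef, hg2def, hsdef, Finset.sum_product, Finset.sum_product, Finset.mul_sum]
    apply Finset.sum_le_sum
    intro j _
    have h := KF2 X hX v μ lam hlam hev hμ u huortho hspan (B j)
    calc lam ^ 2 * ∑ i, B j i ^ 2 ≤ ∑ i, (∑ l, (u i ⬝ᵥ (X *ᵥ u l)) * B j l) ^ 2 := h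
      _ = ∑ i, G j i ^ 2 := by
          apply Finset.sum_congr rfl; intro i _
          congr 1
          rw [hGdef]
          apply Finset.sum_congr rfl; intro l _
          rw [hAsymm l i]
  have hh2le : h2 ≤ (lam - η) ^ 2 * T := by
    rw [hTdef, hh2def, Finset.mul_sum]
    apply Finset.sum_le_sum
    intro p hp
    have hpS : p.1 ∈ S := (Finset.mem_product.mp hp).1
    have hν : |ν p.1| < lam - η := by
      rw [hSdef] at hpS
      exact (Finset.mem_filter.mp hpS).2
    have h1 : ν p.1 ^ 2 ≤ (lam - η) ^ 2 := by
      nlinarith [sq_abs (ν p.1), abs_nonneg (ν p.1)]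
    calc (ν p.1 * B p.1 p.2) ^ 2 = ν p.1 ^ 2 * B p.1 p.2 ^ 2 := by ring
      _ ≤ (lam - η) ^ 2 * B p.1 p.2 ^ 2 :=
          mul_le_mul_of_nonneg_right h1 (sq_nonneg _)
  have hGHle : GH ≤ Real.sqrt g2 * Real.sqrt h2 := by
    rcases le_or_gt GH 0 with h | h
    · exact le_trans h (mul_nonneg (Real.sqrt_nonneg _) (Real.sqrt_nonneg _))
    · have hcs : GH ^ 2 ≤ g2 * h2 :=
        Finset.sum_mul_sq_le_sq_mul_sq s (fun p => G p.1 p.2) (fun p => ν p.1 * B p.1 p.2)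
      calc GH = Real.sqrt (GH ^ 2) := (Real.sqrt_sq h.le).symm
        _ ≤ Real.sqrt (g2 * h2) := Real.sqrt_le_sqrt hcs
        _ = Real.sqrt g2 * Real.sqrt h2 := Real.sqrt_mul hg20 h2
  have hg : lam * Real.sqrt T ≤ Real.sqrt g2 := by
    have h := Real.sqrt_le_sqrt hg2ge
    rwa [Real.sqrt_mul (sq_nonneg lam), Real.sqrt_sq hlam.le] at h
  have hh : Real.sqrt h2 ≤ (lam - η) * Real.sqrt T := by
    have h := Real.sqrt_le_sqrt hh2le
    rwa [Real.sqrt_mul (sq_nonneg _), Real.sqrt_sq hpos.le] at h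
  have hgh : η * Real.sqrt T ≤ Real.sqrt g2 - Real.sqrt h2 := by nlinarith [hg, hh]
  have h0 : 0 ≤ η * Real.sqrt T := mul_nonneg hη.le (Real.sqrt_nonneg T)
  have hsq : (η * Real.sqrt T) * (η * Real.sqrt T)
      ≤ (Real.sqrt g2 - Real.sqrt h2) * (Real.sqrt g2 - Real.sqrt h2) :=
    mul_le_mul hgh hgh h0 (le_trans h0 hgh)
  have hrT : Real.sqrt T ^ 2 = T := Real.sq_sqrt hT0
  have hgg : Real.sqrt g2 ^ 2 = g2 := Real.sq_sqrt hg20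
  have hhh : Real.sqrt h2 ^ 2 = h2 := Real.sq_sqrt hh20
  have hcore : η ^ 2 * T ≤ ∑ p ∈ s, (G p.1 p.2 - ν p.1 * B p.1 p.2) ^ 2 := by
    have hsplit : ∑ p ∈ s, (G p.1 p.2 - ν p.1 * B p.1 p.2) ^ 2 = g2 - 2 * GH + h2 := by
      rw [hg2def, hh2def, hGHdef, Finset.mul_sum, ← Finset.sum_sub_distrib,
        ← Finset.sum_add_distrib]
      apply Finset.sum_congr rfl; intro p _
      ring
    rw [hsplit]
    nlinarith [hsq, hGHle, hgg, hhh, hrT]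
  -- assemble
  rw [hL]
  have hmid : ∑ i, ∑ j ∈ S, (G j i - ν j * B j i) ^ 2
      ≤ ∑ i, ((X - Y) *ᵥ u i) ⬝ᵥ ((X - Y) *ᵥ u i) :=
    Finset.sum_le_sum (fun i _ => hRge i)
  have hswapT : T = ∑ i, ∑ j ∈ S, B j i ^ 2 := by
    rw [hTdef, hsdef, Finset.sum_product]
    exact Finset.sum_comm
  have hswapC : ∑ p ∈ s, (G p.1 p.2 - ν p.1 * B p.1 p.2) ^ 2
      = ∑ i, ∑ j ∈ S, (G j i - ν j * B j i) ^ 2 := by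
    rw [hsdef, Finset.sum_product]
    exact Finset.sum_comm
  have hη2 : (0:ℝ) < η ^ 2 := by positivity
  calc ∑ i, ∑ j ∈ S, B j i ^ 2 = (1 / η ^ 2) * (η ^ 2 * T) := by
        rw [← hswapT]; field_simp
    _ ≤ (1 / η ^ 2) * ∑ i, ((X - Y) *ᵥ u i) ⬝ᵥ ((X - Y) *ᵥ u i) := by
        apply mul_le_mul_of_nonneg_left _ (by positivity)
        calc η ^ 2 * T ≤ ∑ p ∈ s, (G p.1 p.2 - ν p.1 * B p.1 p.2) ^ 2 := hcore
          _ = ∑ i, ∑ j ∈ S, (G j i - ν j * B j i) ^ 2 := hswapC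
          _ ≤ _ := hmid
end

section
/- Let G be an n-vertex d-regular graph with adjacency matrix A satisfying λ₂(A/d) ≤ c for some 0 < c < 1. Then for any vertex subset S, the number of edges of G with both endpoints in S is at most (d|S|/2)(|S|/n + c). -/
open Matrix Finset
open scoped Classical

theorem stmt6 {n d : ℕ} (G : SimpleGraph (Fin n)) [DecidableRel G.Adj]
    (hreg : G.IsRegularOfDegree d) (hd : 0 < d) (c : ℝ) (hc0 : 0 < c) (hc1 : c < 1)
    (hexp : ∀ f : Fin n → ℝ, (∑ x, f x) = 0 →
      f ⬝ᵥ (((d : ℝ)⁻¹ • G.adjMatrix ℝ).mulVec f) ≤ c * (f ⬝ᵥ f))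
    (S : Finset (Fin n)) :
    ∑ x ∈ S, ∑ y ∈ S, (G.adjMatrix ℝ) x y ≤
      (d : ℝ) * S.card * ((S.card : ℝ) / n + c) := by
  rcases Nat.eq_zero_or_pos n with h0 | hn
  · subst h0
    have hS : S = ∅ := Finset.eq_empty_of_forall_notMem (fun x _ => x.elim0)
    subst hS
    simp
  set A := G.adjMatrix ℝ with hA
  set N := (n : ℝ) with hNdef
  set s := (S.card : ℝ) with hsdef
  have hN : (0:ℝ) < N := by rw [hNdef]; exact_mod_cast hn
  have hs0 : (0:ℝ) ≤ s := by positivity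
  set a : ℝ := s / N with ha
  have ha0 : 0 ≤ a := by positivity
  have haN : a * N = s := div_mul_cancel₀ _ (ne_of_gt hN)
  set f : Fin n → ℝ := fun x => (if x ∈ S then (1:ℝ) else 0) - a with hf
  have hrow : ∀ x, ∑ y, A x y = (d:ℝ) := by
    intro x
    simp only [hA, SimpleGraph.adjMatrix_apply]
    rw [Finset.sum_boole]
    have : (Finset.univ.filter (G.Adj x)) = G.neighborFinset x := by
      ext y; simp [SimpleGraph.mem_neighborFinset]
    rw [this]
    rw [SimpleGraph.card_neighborFinset_eq_degree, hreg x]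
  have hsym : ∀ x y, A x y = A y x := by
    intro x y; simp [hA, SimpleGraph.adjMatrix_apply, G.adj_comm]
  have hgsum : ∑ x, (if x ∈ S then (1:ℝ) else 0) = s := by
    rw [Finset.sum_boole]
    simp [hsdef]
  have hsum0 : ∑ x, f x = 0 := by
    simp only [hf, Finset.sum_sub_distrib, hgsum, Finset.sum_const, Finset.card_univ,
      Fintype.card_fin, nsmul_eq_mul]
    rw [← hNdef, ha]
    field_simp
    ring
  set E := ∑ x ∈ S, ∑ y ∈ S, A x y with hE
  have hinner : ∀ x, (A.mulVec f) x = (∑ y ∈ S, A x y) - a * d := by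
    intro x
    simp only [Matrix.mulVec, dotProduct, hf, mul_sub]
    rw [Finset.sum_sub_distrib]
    congr 1
    · simp [mul_ite, Finset.sum_ite_mem]
    · rw [← Finset.sum_mul, hrow x]; ring
  have hRsum : ∑ x, ∑ y ∈ S, A x y = d * s := by
    refine Finset.sum_comm.trans ?_
    have : ∀ y ∈ S, ∑ x, A y x = (d:ℝ) := fun y _ => hrow y
    calc ∑ y ∈ S, ∑ x : Fin n, A x y = ∑ y ∈ S, ∑ x : Fin n, A y x := by
          refine Finset.sum_congr rfl fun y _ => ?_
          exact Finset.sum_congr rfl fun x _ => (hsym x y)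
      _ = ∑ y ∈ S, (d:ℝ) := Finset.sum_congr rfl this
      _ = d * s := by rw [Finset.sum_const, nsmul_eq_mul, hsdef, mul_comm]
  have hQ : f ⬝ᵥ A.mulVec f = E - a * d * s := by
    have h1 : ∀ x, f x * (A.mulVec f) x
        = (if x ∈ S then (∑ y ∈ S, A x y) else 0) - a * (∑ y ∈ S, A x y)
          - (a*d) * (if x ∈ S then (1:ℝ) else 0) + a*(a*d) := by
      intro x
      rw [hinner x]
      by_cases hx : x ∈ S <;> simp [hf, hx] <;> ring
    rw [dotProduct]
    simp only [h1]
    rw [Finset.sum_add_distrib, Finset.sum_sub_distrib, Finset.sum_sub_distrib]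
    rw [Finset.sum_ite_mem, Finset.univ_inter, ← Finset.mul_sum, hRsum,
      ← Finset.mul_sum, hgsum, Finset.sum_const, Finset.card_univ, Fintype.card_fin,
      nsmul_eq_mul, ← hNdef, ← hE]
    have : N * (a * (a * d)) = a * d * s := by
      rw [show N * (a * (a * d)) = a * d * (a * N) by ring, haN]
    rw [this]
    ring
  have hff : f ⬝ᵥ f = s - a * s := by
    have h1 : ∀ x, f x * f x
        = (if x ∈ S then (1:ℝ) else 0) - 2 * a * (if x ∈ S then (1:ℝ) else 0) + a * a := by
      intro x; by_cases hx : x ∈ S <;> simp [hf, hx] <;> ring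
    rw [dotProduct]
    simp only [h1]
    rw [Finset.sum_add_distrib, Finset.sum_sub_distrib, hgsum, ← Finset.mul_sum, hgsum,
      Finset.sum_const, Finset.card_univ, Fintype.card_fin, nsmul_eq_mul, ← hNdef]
    have : N * (a * a) = a * s := by
      rw [show N * (a * a) = a * (a * N) by ring, haN]
    rw [this]
    ring
  have hd' : (0:ℝ) < d := by exact_mod_cast hd
  have hkey := hexp f hsum0
  rw [Matrix.smul_mulVec, dotProduct_smul, smul_eq_mul, hQ, hff] at hkey
  rw [inv_mul_le_iff₀ hd'] at hkey
  have hQle : E - a * d * s ≤ c * d * (s - a * s) := by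
    calc E - a * d * s ≤ d * (c * (s - a * s)) := hkey
      _ = c * d * (s - a * s) := by ring
  have hgoal : E ≤ d * s * (a + c) := by nlinarith [mul_nonneg (mul_nonneg hc0.le hd'.le) (mul_nonneg ha0 hs0)]
  calc E ≤ d * s * (a + c) := hgoal
    _ = (d:ℝ) * s * (s / N + c) := by rw [ha]
end

section
/- Let G be an n-vertex d-regular graph with adjacency matrix A satisfying λ₂(A/d) ≤ c for some 0 < c < 1. Then for any vertex subset S with |S| ≤ αn, the number of vertices outside S adjacent to at least one vertex of S is at least (1/(c + √α) − 1)|S|. -/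
open Matrix Finset
open scoped Classical

theorem stmt7 {n d : ℕ} (G : SimpleGraph (Fin n)) [DecidableRel G.Adj]
    (hreg : G.IsRegularOfDegree d) (hd : 0 < d) (c : ℝ) (hc0 : 0 < c) (hc1 : c < 1)
    (hexp : ∀ f : Fin n → ℝ, (∑ x, f x) = 0 →
      f ⬝ᵥ (((d : ℝ)⁻¹ • G.adjMatrix ℝ).mulVec f) ≤ c * (f ⬝ᵥ f))
    (α : ℝ) (hα : 0 ≤ α) (S : Finset (Fin n)) (hS : (S.card : ℝ) ≤ α * n) :
    (1 / (c + Real.sqrt α) - 1) * S.card ≤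
      ((Finset.univ.filter fun y => y ∉ S ∧ ∃ x ∈ S, G.Adj x y).card : ℝ) := by
  have hk0 : 0 < c + Real.sqrt α := by positivity
  set T : Finset (Fin n) := Finset.univ.filter fun y => y ∉ S ∧ ∃ x ∈ S, G.Adj x y with hT
  rcases Nat.eq_zero_or_pos n with hn | hn
  · have hs0 : S.card = 0 := by
      have h1 := S.card_le_univ
      simp only [Finset.card_univ, Fintype.card_fin, hn, Nat.le_zero] at h1
      exact h1
    rw [hs0]
    push_cast
    rw [mul_zero]
    positivity
  -- main case n > 0
  have hn0 : (0:ℝ) < n := by exact_mod_cast hn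
  set B : Finset (Fin n) := S ∪ T with hB
  have hdisj : Disjoint S T := by
    rw [Finset.disjoint_left]
    intro a haS haT
    rw [hT, Finset.mem_filter] at haT
    exact haT.2.1 haS
  have hbcard : (B.card : ℝ) = S.card + T.card := by
    rw [hB, Finset.card_union_of_disjoint hdisj]; push_cast; ring
  set b : ℝ := (B.card : ℝ) with hbdef
  set s : ℝ := (S.card : ℝ) with hsdef
  set t : ℝ := (T.card : ℝ) with htdef
  have hb0 : 0 ≤ b := by positivity
  have hs0 : 0 ≤ s := by positivity
  have ht0 : 0 ≤ t := by positivity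
  -- neighbors of S are in B
  have hnbr : ∀ x ∈ S, ∀ u ∈ G.neighborFinset x, u ∈ B := by
    intro x hx u hu
    rw [SimpleGraph.mem_neighborFinset] at hu
    by_cases huS : u ∈ S
    · exact Finset.mem_union_left _ huS
    · refine Finset.mem_union_right _ ?_
      rw [hT, Finset.mem_filter]
      exact ⟨Finset.mem_univ u, huS, x, hx, hu⟩
  set χ : Fin n → ℝ := fun x => if x ∈ B then 1 else 0 with hχ
  set β : ℝ := b / n with hβ
  have hχsum : ∑ x, χ x = b := by
    rw [hχ]
    simp [Finset.sum_ite_mem]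
    exact hbdef.symm
  have h0 : (∑ x, (χ x - β)) = 0 := by
    rw [Finset.sum_sub_distrib, hχsum, Finset.sum_const, Finset.card_univ,
      Fintype.card_fin, nsmul_eq_mul, hβ]
    field_simp
    ring
  have HE := hexp (fun x => χ x - β) h0
  -- identify the function with a pointwise subtraction
  have hfun : (fun x => χ x - β) = χ - Function.const (Fin n) β := rfl
  rw [hfun] at HE
  -- compute mulVec
  have hmv : G.adjMatrix ℝ *ᵥ (χ - Function.const (Fin n) β)
      = (G.adjMatrix ℝ *ᵥ χ) - Function.const (Fin n) ((d : ℝ) * β) := by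
    rw [mulVec_sub]
    congr 1
    funext x
    exact SimpleGraph.adjMatrix_mulVec_const_apply_of_regular hreg
  -- basic dot products
  have hdotconst : ∀ (v : Fin n → ℝ) (a : ℝ), v ⬝ᵥ Function.const (Fin n) a = (∑ x, v x) * a := by
    intro v a
    simp [dotProduct, Finset.sum_mul]
  have hconstdot : ∀ (v : Fin n → ℝ) (a : ℝ), Function.const (Fin n) a ⬝ᵥ v = a * (∑ x, v x) := by
    intro v a
    simp [dotProduct, Finset.mul_sum]
  have hχχ : χ ⬝ᵥ χ = b := by
    rw [← hχsum]
    apply Finset.sum_congr rfl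
    intro x _
    rw [hχ]
    by_cases hx : x ∈ B <;> simp [hx]
  -- sum of A *ᵥ χ  = d * b  (column sums are d)
  have hAχsum : ∑ x, (G.adjMatrix ℝ *ᵥ χ) x = (d : ℝ) * b := by
    have : ∀ x, (G.adjMatrix ℝ *ᵥ χ) x = ∑ u, G.adjMatrix ℝ x u * χ u := by
      intro x; rfl
    calc ∑ x, (G.adjMatrix ℝ *ᵥ χ) x = ∑ x, ∑ u, G.adjMatrix ℝ x u * χ u := by
          exact Finset.sum_congr rfl fun x _ => this x
      _ = ∑ u, ∑ x, G.adjMatrix ℝ x u * χ u := Finset.sum_comm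
      _ = ∑ u, (∑ x, G.adjMatrix ℝ x u) * χ u := by
          exact Finset.sum_congr rfl fun u _ => (Finset.sum_mul _ _ _).symm
      _ = ∑ u, (d : ℝ) * χ u := by
          refine Finset.sum_congr rfl fun u _ => ?_
          congr 1
          have : ∑ x, G.adjMatrix ℝ x u = ∑ x, G.adjMatrix ℝ u x := by
            refine Finset.sum_congr rfl fun x _ => ?_
            simp [SimpleGraph.adjMatrix_apply, G.adj_comm]
          rw [this]
          have := G.adjMatrix_mulVec_const_apply_of_regular (α := ℝ) (a := (1:ℝ)) hreg (v := u)
          simpa [mulVec, dotProduct] using this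
      _ = (d : ℝ) * b := by rw [← Finset.mul_sum, hχsum]
  -- main quadratic form bound: Q := χ ⬝ᵥ (A *ᵥ χ) ≥ d * s
  have hQ : (d : ℝ) * s ≥ 0 ∧ (d : ℝ) * s ≤ χ ⬝ᵥ (G.adjMatrix ℝ *ᵥ χ) := by
    constructor
    · positivity
    · have hterm : ∀ x, 0 ≤ χ x * (G.adjMatrix ℝ *ᵥ χ) x := by
        intro x
        have hχnn : ∀ y, (0:ℝ) ≤ χ y := by
          intro y
          by_cases hy : y ∈ B <;> simp [hχ, hy]
        apply mul_nonneg (hχnn x)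
        rw [G.adjMatrix_mulVec_apply]
        exact Finset.sum_nonneg fun u _ => hχnn u
      calc (d : ℝ) * s = ∑ x ∈ S, (d : ℝ) := by
            rw [Finset.sum_const, nsmul_eq_mul, hsdef]; ring
        _ ≤ ∑ x ∈ S, χ x * (G.adjMatrix ℝ *ᵥ χ) x := by
            refine Finset.sum_le_sum fun x hx => ?_
            have hχx : χ x = 1 := if_pos (Finset.mem_union_left _ hx)
            rw [hχx, one_mul, G.adjMatrix_mulVec_apply]
            have : ∀ u ∈ G.neighborFinset x, χ u = 1 := by
              intro u hu
              exact if_pos (hnbr x hx u hu)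
            rw [Finset.sum_congr rfl this, Finset.sum_const, nsmul_eq_mul,
              G.card_neighborFinset_eq_degree, hreg x]
            simp
        _ ≤ ∑ x, χ x * (G.adjMatrix ℝ *ᵥ χ) x :=
            Finset.sum_le_sum_of_subset_of_nonneg (Finset.subset_univ S)
              (fun x _ _ => hterm x)
        _ = χ ⬝ᵥ (G.adjMatrix ℝ *ᵥ χ) := rfl
  set Q : ℝ := χ ⬝ᵥ (G.adjMatrix ℝ *ᵥ χ) with hQdef
  -- expand HE
  have hβn : β * n = b := by rw [hβ]; field_simp
  have hconstsum : ∀ a : ℝ, ∑ x : Fin n, Function.const (Fin n) a x = n * a := by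
    intro a
    simp [Function.const, mul_comm]
  have HE2 : (d : ℝ)⁻¹ * (Q - 2 * ((d:ℝ) * β) * b + n * (β * ((d:ℝ) * β)))
      ≤ c * (b - 2 * β * b + n * β^2) := by
    have hlhs : (χ - Function.const (Fin n) β) ⬝ᵥ
        (((d : ℝ)⁻¹ • G.adjMatrix ℝ) *ᵥ (χ - Function.const (Fin n) β))
        = (d : ℝ)⁻¹ * (Q - 2 * ((d:ℝ) * β) * b + n * (β * ((d:ℝ) * β))) := by
      rw [smul_mulVec, dotProduct_smul, hmv, smul_eq_mul]
      congr 1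
      rw [dotProduct_sub, sub_dotProduct, sub_dotProduct, hconstdot, hconstdot,
        hdotconst, hχsum, hAχsum, hconstsum, ← hQdef]
      ring
    have hrhs : (χ - Function.const (Fin n) β) ⬝ᵥ (χ - Function.const (Fin n) β)
        = b - 2 * β * b + n * β^2 := by
      rw [dotProduct_sub, sub_dotProduct, sub_dotProduct, hconstdot, hconstdot,
        hdotconst, hχχ, hχsum, hconstsum]
      ring
    rw [hlhs, hrhs] at HE
    exact HE
  -- simplify using β * n = b to: s ≤ c * b + b^2 / n
  have hkey : s ≤ c * b + b^2 / n := by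
    have hd0 : (0:ℝ) < d := by exact_mod_cast hd
    have hnd : (d:ℝ)⁻¹ * (d:ℝ) = 1 := inv_mul_cancel₀ (ne_of_gt hd0)
    have hnβ2 : (n:ℝ) * (β * β) = β * b := by
      have h' : (n:ℝ) * (β * β) = β * (β * n) := by ring
      rw [h', hβn]
    have e1 : (d : ℝ)⁻¹ * (Q - 2 * ((d:ℝ) * β) * b + n * (β * ((d:ℝ) * β)))
        = (d:ℝ)⁻¹ * Q - β * b := by
      have h1 : (d : ℝ)⁻¹ * (Q - 2 * ((d:ℝ) * β) * b + n * (β * ((d:ℝ) * β)))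
          = (d:ℝ)⁻¹ * Q - ((d:ℝ)⁻¹ * (d:ℝ)) * (2 * β * b) + ((d:ℝ)⁻¹ * (d:ℝ)) * ((n:ℝ) * (β * β)) := by
        ring
      rw [h1, hnd, hnβ2]
      ring
    have e2 : c * (b - 2 * β * b + n * β^2) = c * (b - β * b) := by
      rw [pow_two, hnβ2]
      ring
    rw [e1, e2] at HE2
    have hQs : s ≤ (d:ℝ)⁻¹ * Q := by
      rw [le_inv_mul_iff₀ hd0]
      exact hQ.2
    have hβb : β * b = b^2 / n := by rw [hβ, pow_two]; ring
    have hcb : c * (b - β * b) ≤ c * b := by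
      have h2 : 0 ≤ β * b := by
        apply mul_nonneg _ hb0
        rw [hβ]; positivity
      have h3 : c * (b - β * b) = c * b - c * (β * b) := by ring
      have h4 : 0 ≤ c * (β * b) := mul_nonneg hc0.le h2
      rw [h3]
      linarith
    linarith [HE2, hQs, hβb, hcb]
  clear_value b s t
  clear HE2 hQ hQdef Q hAχsum hχχ hχsum h0 HE hmv hfun hβn hconstsum hdotconst hconstdot hχ hβ χ β hnbr hdisj hbdef hsdef htdef hB hT B T hexp hreg
  -- s ≤ (c + √α) * b
  have hsb : s ≤ (c + Real.sqrt α) * b := by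
    rcases le_or_gt b (Real.sqrt α * n) with hcase | hcase
    · have : b^2 / n ≤ Real.sqrt α * b := by
        rw [div_le_iff₀ hn0, pow_two]
        nlinarith [hb0]
      nlinarith [hkey]
    · have hα' : Real.sqrt α * Real.sqrt α = α := Real.mul_self_sqrt hα
      have : s ≤ Real.sqrt α * b := by
        calc s ≤ α * n := hS
          _ = Real.sqrt α * (Real.sqrt α * n) := by linear_combination (-(n:ℝ)) * hα'
          _ ≤ Real.sqrt α * b := by
              apply mul_le_mul_of_nonneg_left (le_of_lt hcase) (Real.sqrt_nonneg α)
      nlinarith [mul_nonneg hc0.le hb0]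
  -- conclude
  have hfinal : (1 / (c + Real.sqrt α) - 1) * s ≤ t := by
    rw [div_sub' (ne_of_gt hk0), div_mul_eq_mul_div, div_le_iff₀ hk0]
    rw [hbcard] at hsb
    nlinarith
  exact hfinal
end

section
/- Let G be an n-vertex d-regular graph with normalized adjacency matrix Ã = A/d whose second eigenvalue is λ₂. Let χ : [n] → [k] be a partition with each class of size at least cn, and suppose G has at most δdn monochromatic edges. For x ∈ [n] and a ∈ [k], let D(x,a) = ∑_{y ∈ χ⁻¹(a)} Ã_{xy}. Then for all a, b ∈ [k], the variance of D(x,b) over uniformly random x ∈ χ⁻¹(a) is at most O(λ₂/c + δ/(λ₂ c)). -/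
open Matrix Finset
open scoped Classical

set_option maxHeartbeats 1000000 in
lemma stmt8_arith (lam2 u nR V c sR : ℝ) (hlam2 : 0 < lam2) (hl1 : lam2 ≤ 1)
    (hu0 : 0 ≤ u) (hn0 : 0 < nR) (hV0 : 0 ≤ V) (hc : 0 < c) (hsR : 0 < sR)
    (hsize : c * nR ≤ sR)
    (hVsq : V ^ 2 ≤ (lam2 * V + 2 * (lam2 * u) * nR) * (lam2 * nR + nR)) :
    sR⁻¹ * V ≤ 3 * (lam2 / c) + u / c := by
  have hfac' : 0 ≤ lam2 * V + 2 * (lam2 * u) * nR :=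
    add_nonneg (mul_nonneg hlam2.le hV0)
      (mul_nonneg (mul_nonneg (by norm_num) (mul_nonneg hlam2.le hu0)) hn0.le)
  have h2 : V ^ 2 ≤ 2 * lam2 * nR * V + 4 * (lam2 * u) * nR ^ 2 := by
    have hmul : 0 ≤ (lam2 * V + 2 * (lam2 * u) * nR) * (nR - lam2 * nR) :=
      mul_nonneg hfac' (by nlinarith)
    nlinarith [hVsq, hmul]
  have hVle : V ≤ (3 * lam2 + u) * nR := by
    by_contra hcon
    push_neg at hcon
    have hR0 : 0 < (3 * lam2 + u) * nR := mul_pos (by linarith) hn0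
    have hV1 : 0 < V := lt_trans hR0 hcon
    have hkey2 : 0 < (V - (3 * lam2 + u) * nR) * (V + (3 * lam2 + u) * nR - 2 * lam2 * nR) := by
      apply mul_pos (by linarith)
      nlinarith [mul_pos hlam2 hn0, mul_nonneg hu0 hn0.le]
    nlinarith [hkey2, h2, mul_nonneg hu0 hn0.le, mul_pos hlam2 hn0, sq_nonneg (u * nR),
      mul_pos (mul_pos hlam2 hlam2) (mul_pos hn0 hn0)]
  calc sR⁻¹ * V ≤ (c * nR)⁻¹ * V :=
        mul_le_mul_of_nonneg_right (inv_anti₀ (by positivity) hsize) hV0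
    _ ≤ (c * nR)⁻¹ * ((3 * lam2 + u) * nR) :=
        mul_le_mul_of_nonneg_left hVle (by positivity)
    _ = 3 * (lam2 / c) + u / c := by field_simp

set_option maxHeartbeats 4000000 in
lemma stmt8_aux (n d : ℕ) (hn : 0 < n) (hd : 0 < d)
    (A : Matrix (Fin n) (Fin n) ℝ)
    (hsym : ∀ i j, A i j = A j i) (hA0 : ∀ i j, 0 ≤ A i j)
    (hrow : ∀ i, ∑ j, A i j = d)
    (lam2 : ℝ) (hlam2 : 0 < lam2)
    (hray : ∀ f : Fin n → ℝ, (∑ x, f x) = 0 →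
      f ⬝ᵥ (((d : ℝ)⁻¹ • A).mulVec f) ≤ lam2 * (f ⬝ᵥ f))
    (S T : Finset (Fin n)) (c δ : ℝ) (hc : 0 < c) (hδ : 0 ≤ δ)
    (hsizeS : c * n ≤ (S.card : ℝ))
    (hcase : S = T ∨ Disjoint S T)
    (hmonoS : ∑ x ∈ S, ∑ y ∈ S, A x y ≤ 2 * δ * d * n) :
    ((S.card : ℝ))⁻¹ *
      ∑ x ∈ S, ((∑ y ∈ T, (d : ℝ)⁻¹ * A x y) -
        ((S.card : ℝ))⁻¹ * ∑ x' ∈ S, ∑ y ∈ T, (d : ℝ)⁻¹ * A x' y) ^ 2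
      ≤ 3 * (lam2 / c + δ / (lam2 * c)) := by
  have hd0 : (0 : ℝ) < (d : ℝ) := by exact_mod_cast hd
  have hn0 : (0 : ℝ) < (n : ℝ) := by exact_mod_cast hn
  set D : Fin n → ℝ := fun x => ∑ y ∈ T, (d : ℝ)⁻¹ * A x y with hDdef
  set sR : ℝ := (S.card : ℝ) with hsRdef
  set Db : ℝ := sR⁻¹ * ∑ x' ∈ S, D x' with hDbdef
  set V : ℝ := ∑ x ∈ S, (D x - Db) ^ 2 with hVdef
  have hs0 : (0 : ℝ) < sR := lt_of_lt_of_le (by positivity) hsizeS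
  have hsn : sR ≤ (n : ℝ) := by
    rw [hsRdef]
    exact_mod_cast (Finset.card_le_univ S).trans_eq (by simp)
  have hc1 : c ≤ 1 := by nlinarith
  have hTn : (T.card : ℝ) ≤ (n : ℝ) := by
    exact_mod_cast (Finset.card_le_univ T).trans_eq (by simp)
  have hrow' : ∀ x, ∑ y, (d : ℝ)⁻¹ * A x y = 1 := by
    intro x
    rw [← Finset.mul_sum, hrow x]
    field_simp
  have hcol' : ∀ y, ∑ x, (d : ℝ)⁻¹ * A x y = 1 := by
    intro y
    have : ∀ x, (d : ℝ)⁻¹ * A x y = (d : ℝ)⁻¹ * A y x := by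
      intro x; rw [hsym x y]
    simp_rw [this]
    exact hrow' y
  have hD0 : ∀ x, 0 ≤ D x := by
    intro x
    rw [hDdef]
    exact Finset.sum_nonneg fun y _ => mul_nonneg (by positivity) (hA0 x y)
  have hD1 : ∀ x, D x ≤ 1 := by
    intro x
    rw [hDdef, ← hrow' x]
    exact Finset.sum_le_sum_of_subset_of_nonneg (Finset.subset_univ T)
      (fun y _ _ => mul_nonneg (by positivity) (hA0 x y))
  have hDb0 : 0 ≤ Db := by
    rw [hDbdef]
    have : 0 ≤ ∑ x' ∈ S, D x' := Finset.sum_nonneg fun x _ => hD0 x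
    positivity
  have hDb1 : Db ≤ 1 := by
    rw [hDbdef]
    have h1 : ∑ x' ∈ S, D x' ≤ sR := by
      calc ∑ x' ∈ S, D x' ≤ ∑ x' ∈ S, 1 := Finset.sum_le_sum fun x _ => hD1 x
        _ = sR := by simp [hsRdef]
    calc sR⁻¹ * ∑ x' ∈ S, D x' ≤ sR⁻¹ * sR := by
          exact mul_le_mul_of_nonneg_left h1 (by positivity)
      _ = 1 := by field_simp
  have hV0 : 0 ≤ V := Finset.sum_nonneg fun x _ => sq_nonneg _
  show sR⁻¹ * V ≤ 3 * (lam2 / c + δ / (lam2 * c))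
  set tR : ℝ := (T.card : ℝ) / n with htRdef
  have htR0 : 0 ≤ tR := by rw [htRdef]; positivity
  have htR1 : tR ≤ 1 := by rw [htRdef, div_le_one hn0]; exact hTn
  set f : Fin n → ℝ := fun x => if x ∈ S then D x - Db else 0 with hfdef
  set g : Fin n → ℝ := fun x => (if x ∈ T then (1 : ℝ) else 0) - tR with hgdef
  have hfS : ∀ x, x ∉ S → f x = 0 := by
    intro x hx; rw [hfdef]; simp [hx]
  have hfb : ∀ x, -1 ≤ f x ∧ f x ≤ 1 := by
    intro x
    rw [hfdef]
    by_cases hx : x ∈ S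
    · simp only [hx, if_true]
      constructor <;> nlinarith [hD0 x, hD1 x]
    · simp [hx]
  have hgb : ∀ x, -1 ≤ g x ∧ g x ≤ 1 := by
    intro x
    by_cases hx : x ∈ T
    · rw [hgdef]; simp only [hx, if_true]; constructor <;> linarith
    · rw [hgdef]; simp only [hx, if_false]; constructor <;> linarith
  have hsumfS : ∑ x ∈ S, (D x - Db) = 0 := by
    rw [Finset.sum_sub_distrib, Finset.sum_const, nsmul_eq_mul, hDbdef]
    rw [← hsRdef]
    field_simp
    ring
  have hsumf : ∑ x, f x = 0 := by
    rw [hfdef]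
    rw [Finset.sum_ite_mem, Finset.univ_inter]
    exact hsumfS
  have hsumg : ∑ x, g x = 0 := by
    rw [hgdef]
    rw [Finset.sum_sub_distrib, Finset.sum_ite_mem, Finset.univ_inter,
      Finset.sum_const, Finset.sum_const, nsmul_eq_mul, nsmul_eq_mul]
    simp only [mul_one, Finset.card_univ, Fintype.card_fin]
    rw [htRdef]
    field_simp
    ring
  have hsumf2 : ∑ x, f x * f x = V := by
    have hpt : ∀ x, f x * f x = if x ∈ S then (D x - Db) ^ 2 else 0 := by
      intro x; by_cases hx : x ∈ S <;> simp [hfdef, hx, sq]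
    calc ∑ x, f x * f x = ∑ x, (if x ∈ S then (D x - Db) ^ 2 else 0) :=
          Finset.sum_congr rfl fun x _ => hpt x
      _ = ∑ x ∈ S, (D x - Db) ^ 2 := by rw [Finset.sum_ite_mem, Finset.univ_inter]
      _ = V := by rw [hVdef]
  have hsumg2 : ∑ x, g x * g x ≤ (n : ℝ) := by
    calc ∑ x, g x * g x ≤ ∑ _x : Fin n, (1 : ℝ) := by
          apply Finset.sum_le_sum
          intro x _
          nlinarith [(hgb x).1, (hgb x).2]
      _ = (n : ℝ) := by simp
  have hfg0 : ∑ x, f x * g x = 0 := by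
    have hgc : ∃ gc : ℝ, ∀ x ∈ S, g x = gc := by
      rcases hcase with rfl | hdisj
      · exact ⟨1 - tR, fun x hx => by rw [hgdef]; simp [hx]⟩
      · refine ⟨-tR, fun x hx => ?_⟩
        have : x ∉ T := Finset.disjoint_left.mp hdisj hx
        rw [hgdef]; simp [this]
    obtain ⟨gc, hgc⟩ := hgc
    have h1 : ∑ x, f x * g x = ∑ x ∈ S, (D x - Db) * g x := by
      have hpt : ∀ x, f x * g x = if x ∈ S then (D x - Db) * g x else 0 := by
        intro x; by_cases hx : x ∈ S <;> simp [hfdef, hx]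
      calc ∑ x, f x * g x = ∑ x, (if x ∈ S then (D x - Db) * g x else 0) :=
            Finset.sum_congr rfl fun x _ => hpt x
        _ = ∑ x ∈ S, (D x - Db) * g x := by rw [Finset.sum_ite_mem, Finset.univ_inter]
    rw [h1]
    calc ∑ x ∈ S, (D x - Db) * g x = ∑ x ∈ S, (D x - Db) * gc := by
          exact Finset.sum_congr rfl fun x hx => by rw [hgc x hx]
      _ = (∑ x ∈ S, (D x - Db)) * gc := by rw [Finset.sum_mul]
      _ = 0 := by rw [hsumfS, zero_mul]
  set B : (Fin n → ℝ) → (Fin n → ℝ) → ℝ :=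
    fun u v => ∑ x, ∑ y, u x * ((d : ℝ)⁻¹ * A x y) * v y with hBdef
  clear_value B g f tR V Db sR D
  have hBray : ∀ u : Fin n → ℝ, (∑ x, u x) = 0 → B u u ≤ lam2 * ∑ x, u x * u x := by
    intro u hu
    have h := hray u hu
    have h1 : u ⬝ᵥ (((d : ℝ)⁻¹ • A).mulVec u) = B u u := by
      rw [hBdef]
      simp only [dotProduct, Matrix.mulVec, Matrix.smul_apply, smul_eq_mul,
        Finset.mul_sum]
      exact Finset.sum_congr rfl fun x _ => Finset.sum_congr rfl fun y _ => by ring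
    have h2 : u ⬝ᵥ u = ∑ x, u x * u x := rfl
    rw [h1, h2] at h
    exact h
  have hBsym : ∀ u v, B u v = B v u := by
    intro u v
    simp only [hBdef]
    rw [Finset.sum_comm]
    exact Finset.sum_congr rfl fun x _ => Finset.sum_congr rfl fun y _ => by
      rw [hsym y x]; ring
  have hinner : ∀ x, ∑ y, (d : ℝ)⁻¹ * A x y * g y = D x - tR := by
    intro x
    have hpt : ∀ y, (d : ℝ)⁻¹ * A x y * g y =
        (if y ∈ T then (d : ℝ)⁻¹ * A x y else 0) - tR * ((d : ℝ)⁻¹ * A x y) := by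
      intro y
      by_cases hy : y ∈ T <;> simp [hgdef, hy] <;> ring
    calc ∑ y, (d : ℝ)⁻¹ * A x y * g y
        = ∑ y, ((if y ∈ T then (d : ℝ)⁻¹ * A x y else 0) - tR * ((d : ℝ)⁻¹ * A x y)) :=
          Finset.sum_congr rfl fun y _ => hpt y
      _ = (∑ y, if y ∈ T then (d : ℝ)⁻¹ * A x y else 0) - tR * ∑ y, (d : ℝ)⁻¹ * A x y := by
          rw [Finset.sum_sub_distrib, Finset.mul_sum]
      _ = D x - tR := by
          rw [Finset.sum_ite_mem, Finset.univ_inter, hrow', hDdef, mul_one]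
  have hBfg : B f g = V := by
    rw [hBdef]
    have hre : ∀ x, ∑ y, f x * ((d : ℝ)⁻¹ * A x y) * g y = f x * (D x - tR) := by
      intro x
      rw [← hinner x, Finset.mul_sum]
      exact Finset.sum_congr rfl fun y _ => by ring
    calc ∑ x, ∑ y, f x * ((d : ℝ)⁻¹ * A x y) * g y = ∑ x, f x * (D x - tR) :=
          Finset.sum_congr rfl fun x _ => hre x
      _ = ∑ x, (if x ∈ S then (D x - Db) * (D x - tR) else 0) := by
          refine Finset.sum_congr rfl fun x _ => ?_
          by_cases hx : x ∈ S <;> simp [hfdef, hx]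
      _ = ∑ x ∈ S, (D x - Db) * (D x - tR) := by
          rw [Finset.sum_ite_mem, Finset.univ_inter]
      _ = ∑ x ∈ S, ((D x - Db) ^ 2 + (D x - Db) * (Db - tR)) := by
          exact Finset.sum_congr rfl fun x _ => by ring
      _ = V + (∑ x ∈ S, (D x - Db)) * (Db - tR) := by
          rw [Finset.sum_add_distrib, ← Finset.sum_mul, hVdef]
      _ = V := by rw [hsumfS, zero_mul, add_zero]
  have hsumD : ∑ x, D x = (T.card : ℝ) := by
    rw [hDdef]
    rw [Finset.sum_comm]
    calc ∑ y ∈ T, ∑ x, (d : ℝ)⁻¹ * A x y = ∑ y ∈ T, (1 : ℝ) :=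
          Finset.sum_congr rfl fun y _ => hcol' y
      _ = (T.card : ℝ) := by simp
  have htRn : tR * n = (T.card : ℝ) := by rw [htRdef]; field_simp
  have hBgg : B g g = (∑ x ∈ T, D x) - tR * T.card := by
    rw [hBdef]
    have hre : ∀ x, ∑ y, g x * ((d : ℝ)⁻¹ * A x y) * g y = g x * (D x - tR) := by
      intro x
      rw [← hinner x, Finset.mul_sum]
      exact Finset.sum_congr rfl fun y _ => by ring
    calc ∑ x, ∑ y, g x * ((d : ℝ)⁻¹ * A x y) * g y = ∑ x, g x * (D x - tR) :=
          Finset.sum_congr rfl fun x _ => hre x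
      _ = ∑ x, ((if x ∈ T then D x - tR else 0) - tR * (D x - tR)) := by
          refine Finset.sum_congr rfl fun x _ => ?_
          by_cases hx : x ∈ T <;> simp [hgdef, hx] <;> ring
      _ = (∑ x ∈ T, (D x - tR)) - tR * ∑ x, (D x - tR) := by
          rw [Finset.sum_sub_distrib, Finset.sum_ite_mem, Finset.univ_inter, Finset.mul_sum]
      _ = (∑ x ∈ T, D x) - tR * T.card := by
          rw [Finset.sum_sub_distrib, Finset.sum_sub_distrib, hsumD]
          simp only [Finset.sum_const, nsmul_eq_mul, mul_one, Finset.card_univ,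
            Fintype.card_fin]
          linear_combination tR * htRn
  have hBgg_lower : -(n : ℝ) ≤ B g g := by
    rw [hBgg]
    have h1 : 0 ≤ ∑ x ∈ T, D x := Finset.sum_nonneg fun x _ => hD0 x
    have h2 : tR * T.card ≤ (n : ℝ) := by nlinarith [hTn, htR0, htR1]
    linarith
  have hBff_lower : -(2 * δ * (n : ℝ)) ≤ B f f := by
    have hpt : ∀ x y, -((d : ℝ)⁻¹ * (if x ∈ S ∧ y ∈ S then A x y else 0)) ≤
        f x * ((d : ℝ)⁻¹ * A x y) * f y := by
      intro x y
      by_cases h : x ∈ S ∧ y ∈ S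
      · rw [if_pos h]
        have h1 : -1 ≤ f x * f y := by
          nlinarith [mul_nonneg (show 0 ≤ 1 + f x by linarith [(hfb x).1]) (show 0 ≤ 1 + f y by linarith [(hfb y).1]),
            mul_nonneg (show 0 ≤ 1 - f x by linarith [(hfb x).2]) (show 0 ≤ 1 - f y by linarith [(hfb y).2])]
        have hC : 0 ≤ (d : ℝ)⁻¹ * A x y := mul_nonneg (by positivity) (hA0 x y)
        nlinarith [mul_nonneg hC (show 0 ≤ f x * f y + 1 by linarith)]
      · have hz : f x * ((d : ℝ)⁻¹ * A x y) * f y = 0 := by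
          rcases not_and_or.mp h with hx | hy
          · rw [hfS x hx]; ring
          · rw [hfS y hy]; ring
        rw [hz]
        simp only [h, if_false]
        simp
    have h1 : ∑ x, ∑ y, -((d : ℝ)⁻¹ * (if x ∈ S ∧ y ∈ S then A x y else 0)) ≤ B f f := by
      simp only [hBdef]
      exact Finset.sum_le_sum fun x _ => Finset.sum_le_sum fun y _ => hpt x y
    have h2 : ∑ x, ∑ y, ((d : ℝ)⁻¹ * (if x ∈ S ∧ y ∈ S then A x y else 0))
        = (d : ℝ)⁻¹ * ∑ x ∈ S, ∑ y ∈ S, A x y := by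
      calc ∑ x, ∑ y, ((d : ℝ)⁻¹ * (if x ∈ S ∧ y ∈ S then A x y else 0))
          = ∑ x, (if x ∈ S then ∑ y, (if y ∈ S then (d : ℝ)⁻¹ * A x y else 0) else 0) := by
            refine Finset.sum_congr rfl fun x _ => ?_
            by_cases hx : x ∈ S
            · simp only [hx, true_and, if_true]
              exact Finset.sum_congr rfl fun y _ => by by_cases hy : y ∈ S <;> simp [hy]
            · simp only [hx, false_and, if_false]
              simp
        _ = ∑ x ∈ S, ∑ y, (if y ∈ S then (d : ℝ)⁻¹ * A x y else 0) := by
            rw [Finset.sum_ite_mem, Finset.univ_inter]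
        _ = ∑ x ∈ S, ∑ y ∈ S, (d : ℝ)⁻¹ * A x y := by
            exact Finset.sum_congr rfl fun x _ => by
              rw [Finset.sum_ite_mem, Finset.univ_inter]
        _ = (d : ℝ)⁻¹ * ∑ x ∈ S, ∑ y ∈ S, A x y := by
            rw [Finset.mul_sum]
            exact Finset.sum_congr rfl fun x _ => by rw [Finset.mul_sum]
    have h3 : ∑ x, ∑ y, -((d : ℝ)⁻¹ * (if x ∈ S ∧ y ∈ S then A x y else 0))
        = -((d : ℝ)⁻¹ * ∑ x ∈ S, ∑ y ∈ S, A x y) := by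
      rw [← h2]
      simp only [Finset.sum_neg_distrib]
    have h4 : (d : ℝ)⁻¹ * (∑ x ∈ S, ∑ y ∈ S, A x y) ≤ (d : ℝ)⁻¹ * (2 * δ * d * n) :=
      mul_le_mul_of_nonneg_left hmonoS (by positivity)
    have h5 : (d : ℝ)⁻¹ * (2 * δ * d * n) = 2 * δ * n := by field_simp
    rw [h3] at h1
    linarith
  set Qff : ℝ := lam2 * V - B f f with hQffdef
  set Qgg : ℝ := lam2 * (∑ x, g x * g x) - B g g with hQggdef
  have hQff0 : 0 ≤ Qff := by
    have h := hBray f hsumf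
    rw [hsumf2] at h
    rw [hQffdef]; linarith
  have hQgg0 : 0 ≤ Qgg := by
    have h := hBray g hsumg
    rw [hQggdef]; linarith
  have hkey : ∀ r : ℝ, 0 ≤ Qgg * (r * r) + 2 * (-V) * r + Qff := by
    intro r
    have husum : ∑ x, (f x + r * g x) = 0 := by
      rw [Finset.sum_add_distrib, ← Finset.mul_sum, hsumf, hsumg]; ring
    have h := hBray (fun x => f x + r * g x) husum
    have hBexp : B (fun x => f x + r * g x) (fun x => f x + r * g x)
        = B f f + 2 * r * B f g + r ^ 2 * B g g := by
      simp only [hBdef]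
      calc ∑ x, ∑ y, (f x + r * g x) * ((d : ℝ)⁻¹ * A x y) * (f y + r * g y)
          = ∑ x, ∑ y, (f x * ((d : ℝ)⁻¹ * A x y) * f y
              + r * (f x * ((d : ℝ)⁻¹ * A x y) * g y)
              + r * (g x * ((d : ℝ)⁻¹ * A x y) * f y)
              + r ^ 2 * (g x * ((d : ℝ)⁻¹ * A x y) * g y)) :=
            Finset.sum_congr rfl fun x _ => Finset.sum_congr rfl fun y _ => by ring
        _ = (∑ x, ∑ y, f x * ((d : ℝ)⁻¹ * A x y) * f y)
            + r * (∑ x, ∑ y, f x * ((d : ℝ)⁻¹ * A x y) * g y)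
            + r * (∑ x, ∑ y, g x * ((d : ℝ)⁻¹ * A x y) * f y)
            + r ^ 2 * (∑ x, ∑ y, g x * ((d : ℝ)⁻¹ * A x y) * g y) := by
            simp only [Finset.sum_add_distrib, ← Finset.mul_sum]
        _ = _ := by
            have hgf := hBsym g f
            simp only [hBdef] at hgf
            rw [hgf]; ring
    have hsqexp : ∑ x, (f x + r * g x) * (f x + r * g x)
        = (∑ x, f x * f x) + 2 * r * (∑ x, f x * g x) + r ^ 2 * ∑ x, g x * g x := by
      calc ∑ x, (f x + r * g x) * (f x + r * g x)
          = ∑ x, (f x * f x + 2 * r * (f x * g x) + r ^ 2 * (g x * g x)) :=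
            Finset.sum_congr rfl fun x _ => by ring
        _ = _ := by simp only [Finset.sum_add_distrib, ← Finset.mul_sum]
    rw [hBexp, hsqexp, hsumf2, hfg0, hBfg] at h
    rw [hQggdef, hQffdef]
    nlinarith [h, sq_abs r]
  have hdisc := discrim_le_zero hkey
  rw [discrim] at hdisc
  have hCS : V ^ 2 ≤ Qff * Qgg := by nlinarith [hdisc]
  have hQff_le : Qff ≤ lam2 * V + 2 * δ * n := by
    rw [hQffdef]; linarith [hBff_lower]
  have hQgg_le : Qgg ≤ lam2 * n + n := by
    rw [hQggdef]
    have h1 : lam2 * (∑ x, g x * g x) ≤ lam2 * n :=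
      mul_le_mul_of_nonneg_left hsumg2 hlam2.le
    linarith [hBgg_lower]
  have hfac : 0 ≤ lam2 * V + 2 * δ * (n : ℝ) := by
    have := mul_nonneg hlam2.le hV0
    have := mul_nonneg (mul_nonneg (by norm_num : (0:ℝ) ≤ 2) hδ) hn0.le
    linarith
  have hVsq : V ^ 2 ≤ (lam2 * V + 2 * δ * n) * (lam2 * n + n) := by
    calc V ^ 2 ≤ Qff * Qgg := hCS
      _ ≤ (lam2 * V + 2 * δ * n) * (lam2 * n + n) := by
          apply mul_le_mul hQff_le hQgg_le hQgg0 hfac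
  have hδlc : 0 ≤ δ / (lam2 * c) := div_nonneg hδ (by positivity)
  by_cases hl1 : lam2 ≤ 1
  · have hlu : lam2 * (δ / lam2) = δ := by field_simp
    have hVsq2 : V ^ 2 ≤ (lam2 * V + 2 * (lam2 * (δ / lam2)) * n) * (lam2 * n + n) := by
      rw [hlu]; exact hVsq
    have hmain := stmt8_arith lam2 (δ / lam2) n V c sR hlam2 hl1
      (div_nonneg hδ hlam2.le) hn0 hV0 hc hs0 hsizeS hVsq2
    have he : (δ / lam2) / c = δ / (lam2 * c) := by rw [div_div]
    rw [he] at hmain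
    linarith [hδlc]
  · push_neg at hl1
    have hVs : V ≤ sR := by
      rw [hVdef]
      calc ∑ x ∈ S, (D x - Db) ^ 2 ≤ ∑ x ∈ S, 1 :=
            Finset.sum_le_sum fun x hx => by
              have e1 := hD0 x
              have e2 := hD1 x
              clear * - e1 e2 hDb0 hDb1
              nlinarith
        _ = sR := by rw [Finset.sum_const, nsmul_eq_mul, mul_one, hsRdef]
    have h1 : sR⁻¹ * V ≤ 1 := by
      calc sR⁻¹ * V ≤ sR⁻¹ * sR := mul_le_mul_of_nonneg_left hVs (by positivity)
        _ = 1 := by field_simp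
    have h2 : 1 ≤ lam2 / c := (one_le_div hc).mpr (le_trans hc1 hl1.le)
    linarith [hδlc]

theorem stmt8 :
    ∃ C : ℝ, 0 < C ∧
      ∀ (n k d : ℕ), 0 < d →
      ∀ A : Matrix (Fin n) (Fin n) ℝ,
        (∀ i j, A i j = A j i) →
        (∀ i j, A i j = 0 ∨ A i j = 1) →
        (∀ i, A i i = 0) →
        (∀ i, ∑ j, A i j = d) →
      ∀ lam2 : ℝ, 0 < lam2 →
        (∀ f : Fin n → ℝ, (∑ x, f x) = 0 →
          f ⬝ᵥ (((d : ℝ)⁻¹ • A).mulVec f) ≤ lam2 * (f ⬝ᵥ f)) →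
      ∀ (χ : Fin n → Fin k) (c δ : ℝ), 0 < c → 0 ≤ δ →
        (∀ a : Fin k, c * n ≤ ((Finset.univ.filter fun x => χ x = a).card : ℝ)) →
        ((∑ x, ∑ y, (if χ x = χ y then A x y else 0)) ≤ 2 * δ * d * n) →
      ∀ a b : Fin k,
        (((Finset.univ.filter fun x => χ x = a).card : ℝ))⁻¹ *
          ∑ x ∈ Finset.univ.filter (fun x => χ x = a),
            ((∑ y ∈ Finset.univ.filter (fun y => χ y = b), (d : ℝ)⁻¹ * A x y) -
              (((Finset.univ.filter fun x => χ x = a).card : ℝ))⁻¹ *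
                ∑ x' ∈ Finset.univ.filter (fun x => χ x = a),
                  ∑ y ∈ Finset.univ.filter (fun y => χ y = b), (d : ℝ)⁻¹ * A x' y) ^ 2
          ≤ C * (lam2 / c + δ / (lam2 * c)) := by
  refine ⟨3, by norm_num, ?_⟩
  intro n k d hd A hsym h01 hdiag hrow lam2 hlam2 hray χ c δ hc hδ hsize hmono a b
  have hA0 : ∀ i j, 0 ≤ A i j := fun i j => by
    rcases h01 i j with h | h <;> rw [h] <;> norm_num
  by_cases hn : n = 0
  · subst hn
    have h1 : 0 ≤ lam2 / c := by positivity
    have h2 : 0 ≤ δ / (lam2 * c) := div_nonneg hδ (by positivity)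
    simp only [Finset.univ_eq_empty, Finset.filter_empty, Finset.sum_empty,
      Finset.card_empty, Nat.cast_zero, _root_.inv_zero, zero_mul, mul_zero]
    linarith
  · have hn' : 0 < n := Nat.pos_of_ne_zero hn
    have hite : ∀ x y, 0 ≤ (if χ x = χ y then A x y else 0) := fun x y => by
      by_cases h : χ x = χ y <;> simp [h, hA0 x y]
    refine stmt8_aux n d hn' hd A hsym hA0 hrow lam2 hlam2 hray
      (Finset.univ.filter fun x => χ x = a) (Finset.univ.filter fun y => χ y = b)
      c δ hc hδ (hsize a) ?_ ?_
    · by_cases hab : a = b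
      · left; subst hab; rfl
      · right
        rw [Finset.disjoint_left]
        intro x hx hx'
        rw [Finset.mem_filter] at hx hx'
        exact hab (hx.2.symm.trans hx'.2 ▸ rfl)
    · have step1 : ∑ x ∈ Finset.univ.filter (fun x => χ x = a),
          ∑ y ∈ Finset.univ.filter (fun x => χ x = a), A x y
          = ∑ x ∈ Finset.univ.filter (fun x => χ x = a),
            ∑ y ∈ Finset.univ.filter (fun x => χ x = a), (if χ x = χ y then A x y else 0) :=
        Finset.sum_congr rfl fun x hx => Finset.sum_congr rfl fun y hy => by
          rw [Finset.mem_filter] at hx hy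
          rw [if_pos (hx.2.trans hy.2.symm)]
      rw [step1]
      calc ∑ x ∈ Finset.univ.filter (fun x => χ x = a),
            ∑ y ∈ Finset.univ.filter (fun x => χ x = a), (if χ x = χ y then A x y else 0)
          ≤ ∑ x ∈ Finset.univ.filter (fun x => χ x = a),
            ∑ y, (if χ x = χ y then A x y else 0) :=
            Finset.sum_le_sum fun x _ =>
              Finset.sum_le_sum_of_subset_of_nonneg (Finset.subset_univ _)
                (fun y _ _ => hite x y)
        _ ≤ ∑ x, ∑ y, (if χ x = χ y then A x y else 0) :=
            Finset.sum_le_sum_of_subset_of_nonneg (Finset.subset_univ _)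
              (fun x _ _ => Finset.sum_nonneg fun y _ => hite x y)
        _ ≤ 2 * δ * d * n := hmono
end

section
/- Let G be an n-vertex graph with adjacency matrix A, Ã = A/d for some d > 0, and χ : [n] → [k] a partition with each class of size at least cn, with partition matrix Z (indicator matrix) and B = ZᵀZ. Suppose for any a, b ∈ [k], the variance of D(x,b) = ∑_{y∈χ⁻¹(b)} Ã_{xy} over uniform x ∈ χ⁻¹(a) is at most δ. Then for W = Z M(Ã,χ) B⁻¹ Zᵀ, where M(Ã,χ) = B⁻¹ Zᵀ Ã Z, it holds for each a ∈ [k] that ‖Ã·(Z_a/‖Z_a‖) − W·(Z_a/‖Z_a‖)‖² ≤ δ/c. -/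
open Matrix Finset
open scoped Classical

theorem stmt9 {n k : ℕ} (A : Matrix (Fin n) (Fin n) ℝ) (d : ℝ) (hd : 0 < d)
    (χ : Fin n → Fin k) (c δ : ℝ) (hc : 0 < c) (hδ : 0 ≤ δ)
    (Z : Matrix (Fin n) (Fin k) ℝ) (hZ : ∀ x a, Z x a = if χ x = a then 1 else 0)
    (hclass : ∀ a : Fin k, c * n ≤ ((Finset.univ.filter fun x => χ x = a).card : ℝ))
    (hvar : ∀ a b : Fin k,
      (((Finset.univ.filter fun x => χ x = a).card : ℝ))⁻¹ *
        ∑ x ∈ Finset.univ.filter (fun x => χ x = a),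
          ((∑ y ∈ Finset.univ.filter (fun y => χ y = b), d⁻¹ * A x y) -
            (((Finset.univ.filter fun x => χ x = a).card : ℝ))⁻¹ *
              ∑ x' ∈ Finset.univ.filter (fun x => χ x = a),
                ∑ y ∈ Finset.univ.filter (fun y => χ y = b), d⁻¹ * A x' y) ^ 2 ≤ δ) :
    ∀ a : Fin k,
      ((((d⁻¹ • A) -
          Z * ((Zᵀ * Z)⁻¹ * Zᵀ * (d⁻¹ • A) * Z) * (Zᵀ * Z)⁻¹ * Zᵀ).mulVec
            (fun x => Z x a)) ⬝ᵥ
        (((d⁻¹ • A) -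
          Z * ((Zᵀ * Z)⁻¹ * Zᵀ * (d⁻¹ • A) * Z) * (Zᵀ * Z)⁻¹ * Zᵀ).mulVec
            (fun x => Z x a))) /
        ((fun x => Z x a) ⬝ᵥ (fun x => Z x a))
      ≤ δ / c := by
  intro a
  by_cases hn : n = 0
  · subst hn
    have hdot : ((fun x => Z x a) ⬝ᵥ (fun x => Z x a)) = 0 := by
      simp [dotProduct]
    rw [hdot, div_zero]
    positivity
  have hn' : 0 < n := Nat.pos_of_ne_zero hn
  set At : Matrix (Fin n) (Fin n) ℝ := d⁻¹ • A with hAt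
  set S : Fin k → Finset (Fin n) := fun b => Finset.univ.filter (fun x => χ x = b) with hS
  set m : Fin k → ℝ := fun b => ((S b).card : ℝ) with hm
  have hmpos : ∀ b, 0 < m b := fun b =>
    lt_of_lt_of_le (by positivity) (hclass b)
  have hmne : ∀ b, m b ≠ 0 := fun b => (hmpos b).ne'
  -- key sum computation
  have key : ∀ b e : Fin k,
      (∑ x, (if χ x = b then (1:ℝ) else 0) * (if χ x = e then 1 else 0))
        = if b = e then m b else 0 := by
    intro b e
    by_cases hbe : b = e
    · subst hbe
      rw [if_pos rfl]
      have : ∀ x, (if χ x = b then (1:ℝ) else 0) * (if χ x = b then 1 else 0)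
          = if χ x = b then 1 else 0 := by
        intro x; by_cases h : χ x = b <;> simp [h]
      rw [Finset.sum_congr rfl fun x _ => this x]
      simp [hm, hS]
    · rw [if_neg hbe]
      apply Finset.sum_eq_zero
      intro x _
      by_cases h1 : χ x = b
      · have h2 : χ x ≠ e := fun h => hbe (h1 ▸ h)
        simp [h1, h2, hbe]
      · simp [h1]
  have hZZ : Zᵀ * Z = Matrix.diagonal m := by
    ext b e
    simp only [Matrix.mul_apply, Matrix.transpose_apply, hZ, Matrix.diagonal_apply]
    exact key b e
  have hinv : (Zᵀ * Z)⁻¹ = Matrix.diagonal (fun b => (m b)⁻¹) := by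
    rw [hZZ]
    apply Matrix.inv_eq_right_inv
    rw [Matrix.diagonal_mul_diagonal]
    have he : (fun i => m i * (m i)⁻¹) = fun _ => (1:ℝ) :=
      funext fun b => mul_inv_cancel₀ (hmne b)
    rw [he, Matrix.diagonal_one]
  set v : Fin n → ℝ := fun x => Z x a with hv
  set μ : Fin k → ℝ := fun b => (m b)⁻¹ * ∑ x ∈ S b, ∑ y ∈ S a, d⁻¹ * A x y with hμ
  set Dinv : Matrix (Fin k) (Fin k) ℝ := Matrix.diagonal (fun b => (m b)⁻¹) with hD
  have hdiagmul : ∀ (w : Fin k → ℝ), Dinv.mulVec w = fun b => (m b)⁻¹ * w b := by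
    intro w
    funext b
    simp [hD, Matrix.mulVec, dotProduct, Matrix.diagonal_apply, Finset.sum_ite_eq,
      ite_mul, zero_mul]
  -- At v
  have hAv : At.mulVec v = fun x => ∑ y ∈ S a, d⁻¹ * A x y := by
    funext x
    simp only [Matrix.mulVec, dotProduct, hv, hZ, hAt, Matrix.smul_apply, smul_eq_mul]
    rw [Finset.sum_filter]
    exact Finset.sum_congr rfl fun y _ => by by_cases h : χ y = a <;> simp [h]
  -- Zᵀ v
  have h1 : Zᵀ.mulVec v = fun b => if b = a then m b else 0 := by
    funext b
    simp only [Matrix.mulVec, dotProduct, Matrix.transpose_apply, hZ, hv]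
    exact key b a
  have h2 : Dinv.mulVec (Zᵀ.mulVec v) = fun b => if b = a then 1 else 0 := by
    rw [h1, hdiagmul]
    funext b
    by_cases h : b = a <;> simp [h, hmne]
  have h3 : Z.mulVec (fun b => if b = a then (1:ℝ) else 0) = v := by
    funext x
    simp only [Matrix.mulVec, dotProduct, hZ, hv]
    rw [Finset.sum_eq_single a]
    · simp
    · intro b _ hb; simp [hb]
    · simp
  have h4 : Zᵀ.mulVec (At.mulVec v) = fun b => ∑ x ∈ S b, ∑ y ∈ S a, d⁻¹ * A x y := by
    rw [hAv]
    funext b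
    simp only [Matrix.mulVec, dotProduct, Matrix.transpose_apply, hZ]
    rw [Finset.sum_filter]
    exact Finset.sum_congr rfl fun x _ => by by_cases h : χ x = b <;> simp [h]
  have h5 : Z.mulVec μ = fun x => μ (χ x) := by
    funext x
    simp only [Matrix.mulVec, dotProduct, hZ]
    rw [Finset.sum_eq_single (χ x)]
    · simp
    · intro b _ hb; simp [Ne.symm hb]
    · simp
  -- W v = μ ∘ χ
  have hWv : (Z * (Dinv * Zᵀ * At * Z) * Dinv * Zᵀ).mulVec v = fun x => μ (χ x) := by
    have e1 : (Z * (Dinv * Zᵀ * At * Z) * Dinv * Zᵀ).mulVec v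
        = Z.mulVec ((Dinv * Zᵀ * At * Z).mulVec (Dinv.mulVec (Zᵀ.mulVec v))) := by
      rw [Matrix.mulVec_mulVec, Matrix.mulVec_mulVec, Matrix.mulVec_mulVec]
    rw [e1, h2]
    have e2 : (Dinv * Zᵀ * At * Z).mulVec (fun b => if b = a then (1:ℝ) else 0)
        = Dinv.mulVec (Zᵀ.mulVec (At.mulVec (Z.mulVec (fun b => if b = a then (1:ℝ) else 0)))) := by
      rw [Matrix.mulVec_mulVec, Matrix.mulVec_mulVec, Matrix.mulVec_mulVec]
    rw [e2, h3, h4, hdiagmul]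
    exact h5
  -- numerator
  have hEv : (At - Z * (Dinv * Zᵀ * At * Z) * Dinv * Zᵀ).mulVec v
      = fun x => (∑ y ∈ S a, d⁻¹ * A x y) - μ (χ x) := by
    rw [Matrix.sub_mulVec, hAv, hWv]
    rfl
  have hnum : ((At - Z * (Dinv * Zᵀ * At * Z) * Dinv * Zᵀ).mulVec v) ⬝ᵥ
      ((At - Z * (Dinv * Zᵀ * At * Z) * Dinv * Zᵀ).mulVec v)
      = ∑ x, ((∑ y ∈ S a, d⁻¹ * A x y) - μ (χ x)) ^ 2 := by
    rw [hEv]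
    simp [dotProduct, sq]
  -- bound the numerator
  have hfib : ∑ x, ((∑ y ∈ S a, d⁻¹ * A x y) - μ (χ x)) ^ 2
      = ∑ b, ∑ x ∈ S b, ((∑ y ∈ S a, d⁻¹ * A x y) - μ (χ x)) ^ 2 :=
    (Finset.sum_fiberwise Finset.univ χ _).symm
  have hfib2 : ∀ b, ∑ x ∈ S b, ((∑ y ∈ S a, d⁻¹ * A x y) - μ (χ x)) ^ 2
      = ∑ x ∈ S b, ((∑ y ∈ S a, d⁻¹ * A x y) - μ b) ^ 2 := by
    intro b
    apply Finset.sum_congr rfl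
    intro x hx
    have : χ x = b := (Finset.mem_filter.mp hx).2
    rw [this]
  have hb_bound : ∀ b, ∑ x ∈ S b, ((∑ y ∈ S a, d⁻¹ * A x y) - μ b) ^ 2 ≤ m b * δ := by
    intro b
    have := hvar b a
    have hrw : (m b)⁻¹ * ∑ x ∈ S b, ((∑ y ∈ S a, d⁻¹ * A x y) - μ b) ^ 2 ≤ δ := this
    calc ∑ x ∈ S b, ((∑ y ∈ S a, d⁻¹ * A x y) - μ b) ^ 2
        = m b * ((m b)⁻¹ * ∑ x ∈ S b, ((∑ y ∈ S a, d⁻¹ * A x y) - μ b) ^ 2) := by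
          rw [← mul_assoc, mul_inv_cancel₀ (hmne b), one_mul]
      _ ≤ m b * δ := by
          exact mul_le_mul_of_nonneg_left hrw (hmpos b).le
  have hsum_m : ∑ b, m b = (n : ℝ) := by
    have : (Finset.univ : Finset (Fin n)).card = ∑ b, (S b).card :=
      Finset.card_eq_sum_card_fiberwise (fun x _ => Finset.mem_univ (χ x))
    simp only [Finset.card_univ, Fintype.card_fin] at this
    have := congrArg (fun q : ℕ => (q : ℝ)) this
    push_cast at this
    exact this.symm
  have hnum_le : ∑ x, ((∑ y ∈ S a, d⁻¹ * A x y) - μ (χ x)) ^ 2 ≤ δ * n := by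
    rw [hfib]
    calc ∑ b, ∑ x ∈ S b, ((∑ y ∈ S a, d⁻¹ * A x y) - μ (χ x)) ^ 2
        = ∑ b, ∑ x ∈ S b, ((∑ y ∈ S a, d⁻¹ * A x y) - μ b) ^ 2 :=
          Finset.sum_congr rfl fun b _ => hfib2 b
      _ ≤ ∑ b, m b * δ := Finset.sum_le_sum fun b _ => hb_bound b
      _ = (∑ b, m b) * δ := by rw [Finset.sum_mul]
      _ = δ * n := by rw [hsum_m, mul_comm]
  -- denominator
  have hden : (v ⬝ᵥ v) = m a := by
    have := key a a
    simp only [if_pos rfl] at this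
    simpa [dotProduct, hv, hZ] using this
  -- finish
  rw [hinv, hnum, hden]
  have hcn : (0:ℝ) < c * n := by positivity
  have h0 : (0:ℝ) ≤ δ * n := by positivity
  calc (∑ x, ((∑ y ∈ S a, d⁻¹ * A x y) - μ (χ x)) ^ 2) / m a
      ≤ (δ * n) / (c * n) := by
        apply div_le_div₀ h0 hnum_le hcn (hclass a)
    _ = δ / c := by
        have hn0 : (n:ℝ) ≠ 0 := Nat.cast_ne_zero.mpr hn
        field_simp
end

section
/- Let M be a 3×3 reversible row-stochastic matrix with nonnegative entries, zero diagonal, stationary distribution π satisfying max_a π_a ≤ 1/2 − γ for some γ > 0. Then any two distinct rows M^{(a)}, M^{(b)} of M satisfy ‖M^{(a)} − M^{(b)}‖ ≥ γ. -/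
open Matrix Finset

lemma sum3_eq (f : Fin 3 → ℝ) (a b c : Fin 3) (hab : a ≠ b) (hac : a ≠ c) (hbc : b ≠ c) :
    ∑ j, f j = f a + f b + f c := by
  have h : ({a, b, c} : Finset (Fin 3)) = univ := by
    fin_cases a <;> fin_cases b <;> fin_cases c <;> simp_all <;> decide
  rw [← h, Finset.sum_insert (by simp [hab, hac]), Finset.sum_insert (by simp [hbc]),
    Finset.sum_singleton]
  ring

lemma key_arith (p q r x y γ : ℝ) (hp : 0 < p) (hq : 0 < q) (hr0 : 0 < r)
    (hγ : 0 < γ) (hsum : p + q + r = 1) (hr : r = p * (1 - x) + q * (1 - y))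
    (hrb : r ≤ 1 / 2 - γ) (hx : x < γ) (hy : y < γ) : False := by
  have hγ2 : γ < 1 / 2 := by linarith
  have h1 : r > (p + q) * (1 - γ) := by
    nlinarith [mul_pos hp (sub_pos.mpr hx), mul_pos hq (sub_pos.mpr hy)]
  have h2 : p + q = 1 - r := by linarith
  rw [h2] at h1
  nlinarith [mul_pos hγ (show (0:ℝ) < 3 / 2 - γ by linarith)]

theorem stmt12 (M : Matrix (Fin 3) (Fin 3) ℝ)
    (hnn : ∀ a b, 0 ≤ M a b) (hrow : ∀ a, ∑ b, M a b = 1) (hdiag : ∀ a, M a a = 0)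
    (π : Fin 3 → ℝ) (hπpos : ∀ a, 0 < π a) (hπsum : (∑ a, π a) = 1)
    (hrev : ∀ a b, π a * M a b = π b * M b a)
    (γ : ℝ) (hγ : 0 < γ) (hmax : ∀ a, π a ≤ 1 / 2 - γ) :
    ∀ a b : Fin 3, a ≠ b → γ ≤ Real.sqrt (∑ j, (M a j - M b j) ^ 2) := by
  intro a b hab
  by_contra h
  push_neg at h
  have hS : (∑ j, (M a j - M b j) ^ 2) < γ ^ 2 := by
    have h0 : 0 ≤ ∑ j, (M a j - M b j) ^ 2 :=
      Finset.sum_nonneg fun j _ => sq_nonneg _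
    exact (Real.sqrt_lt' hγ).mp h
  have hterm : ∀ j : Fin 3, (M a j - M b j) ^ 2 < γ ^ 2 := by
    intro j
    have := Finset.single_le_sum (f := fun j => (M a j - M b j) ^ 2)
      (fun i _ => sq_nonneg _) (Finset.mem_univ j)
    linarith
  have hx : M a b < γ := by
    have := hterm b
    rw [hdiag b] at this
    nlinarith [hnn a b]
  have hy : M b a < γ := by
    have := hterm a
    rw [hdiag a] at this
    nlinarith [hnn b a]
  have hex : ∀ a b : Fin 3, a ≠ b → ∃ c, c ≠ a ∧ c ≠ b := by decide
  obtain ⟨c, hca, hcb⟩ := hex a b hab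
  have hac : a ≠ c := Ne.symm hca
  have hbc : b ≠ c := hcb.symm
  have h1 : M a b + M a c = 1 := by
    have := sum3_eq (M a) a b c hab (Ne.symm hca) hbc
    rw [hrow a, hdiag a] at this; linarith
  have h2 : M b a + M b c = 1 := by
    have := sum3_eq (M b) b a c hab.symm (Ne.symm hcb) (Ne.symm hca)
    rw [hrow b, hdiag b] at this; linarith
  have h3 : M c a + M c b = 1 := by
    have := sum3_eq (M c) c a b hca hcb hab
    rw [hrow c, hdiag c] at this; linarith
  have hπ3 : π a + π b + π c = 1 := by
    have := sum3_eq π a b c hab (Ne.symm hca) hbc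
    rw [hπsum] at this; linarith
  have hπc : π c = π a * (1 - M a b) + π b * (1 - M b a) := by
    have e1 : π c * M c a = π a * M a c := hrev c a
    have e2 : π c * M c b = π b * M b c := hrev c b
    have : π c * (M c a + M c b) = π a * M a c + π b * M b c := by
      rw [mul_add, e1, e2]
    rw [h3, mul_one] at this
    have ha' : M a c = 1 - M a b := by linarith
    have hb' : M b c = 1 - M b a := by linarith
    rw [this, ha', hb']
  exact key_arith (π a) (π b) (π c) (M a b) (M b a) γ (hπpos a) (hπpos b) (hπpos c) hγ hπ3 hπc
    (hmax c) hx hy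
end

section
/- Let G be an n-vertex d-regular graph with adjacency matrix A and Ã = A/d. Suppose G contains an independent set I of size (1/2 − γ)n for some 0 < γ < 1/4, and that Ã has at most t eigenvalues ≤ −λ for some 0 < λ < 1. Let u ∈ ℝⁿ have u_x = 1/√n for x ∈ I and u_x = −1/√n otherwise. Then the orthogonal projection Pu of u to the span of the bottom t eigenvectors of Ã satisfies ‖u − Pu‖² ≤ 4γ/(1 − λ). -/
open Matrix Finset
open scoped Classical

set_option maxHeartbeats 1000000 in
theorem stmt13 {n d t : ℕ} (G : SimpleGraph (Fin n)) [DecidableRel G.Adj]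
    (hreg : G.IsRegularOfDegree d) (hd : 0 < d)
    (γ lam : ℝ) (hγ0 : 0 < γ) (hγ1 : γ < 1 / 4) (hlam0 : 0 < lam) (hlam1 : lam < 1)
    (I : Finset (Fin n)) (hind : ∀ x ∈ I, ∀ y ∈ I, ¬ G.Adj x y)
    (hIcard : (I.card : ℝ) = (1 / 2 - γ) * n)
    (w : Fin n → Fin n → ℝ) (ν : Fin n → ℝ)
    (hortho : ∀ i j, w i ⬝ᵥ w j = if i = j then 1 else 0)
    (heig : ∀ j, ((d : ℝ)⁻¹ • G.adjMatrix ℝ).mulVec (w j) = ν j • w j)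
    (T : Finset (Fin n)) (hT : T.card = t)
    (hout : ∀ j ∉ T, -lam < ν j)
    (u : Fin n → ℝ)
    (hu : u = fun x => if x ∈ I then 1 / Real.sqrt n else -(1 / Real.sqrt n))
    (P : Matrix (Fin n) (Fin n) ℝ)
    (hP : P = ∑ j ∈ T, Matrix.vecMulVec (w j) (w j)) :
    (u - P.mulVec u) ⬝ᵥ (u - P.mulVec u) ≤ 4 * γ / (1 - lam) := by
  have hlam' : (0:ℝ) < 1 - lam := by linarith
  rcases Nat.eq_zero_or_pos n with hn | hn
  · subst hn
    have : (u - P.mulVec u) ⬝ᵥ (u - P.mulVec u) = 0 := by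
      simp [dotProduct]
    rw [this]
    positivity
  set M := G.adjMatrix ℝ with hM
  have hn0 : (0:ℝ) < n := by exact_mod_cast hn
  have hd0 : (0:ℝ) < d := by exact_mod_cast hd
  -- row and column sums of the adjacency matrix
  have hrow : ∀ x, ∑ y, M x y = (d : ℝ) := by
    intro x
    simp only [hM, SimpleGraph.adjMatrix_apply]
    rw [Finset.sum_boole]
    rw [← SimpleGraph.neighborFinset_eq_filter, ← SimpleGraph.degree, hreg x]
  have hsym : ∀ x y, M x y = M y x := by
    intro x y; simp [hM, SimpleGraph.adjMatrix_apply, G.adj_comm]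
  have hnonneg : ∀ x y, 0 ≤ M x y := by
    intro x y; simp only [hM, SimpleGraph.adjMatrix_apply]; split_ifs <;> norm_num
  -- completeness of the orthonormal system
  have hcomp : ∀ v : Fin n → ℝ, ∀ x, ∑ j, (w j ⬝ᵥ v) * w j x = v x := by
    intro v x
    have hWWt : Matrix.of w * (Matrix.of w)ᵀ = 1 := by
      ext i j
      simpa [Matrix.mul_apply, Matrix.one_apply, dotProduct] using hortho i j
    have hWtW : (Matrix.of w)ᵀ * Matrix.of w = 1 := mul_eq_one_comm.mp hWWt
    have h := congrFun (congrArg (fun N => N *ᵥ v) hWtW) x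
    simp only [Matrix.one_mulVec] at h
    rw [← h]
    simp [Matrix.mulVec, dotProduct, Matrix.mul_apply, Finset.sum_mul, Finset.mul_sum]
    rw [Finset.sum_comm]
    exact Finset.sum_congr rfl fun j _ => Finset.sum_congr rfl fun y _ => by ring
  set c : Fin n → ℝ := fun j => w j ⬝ᵥ u with hc
  have hueq : u = fun x => ∑ j, c j * w j x := funext fun x => (hcomp u x).symm
  -- norms of partial expansions
  have hnorm : ∀ S : Finset (Fin n),
      (fun x => ∑ j ∈ S, c j * w j x) ⬝ᵥ (fun x => ∑ j ∈ S, c j * w j x)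
        = ∑ j ∈ S, c j ^ 2 := by
    intro S
    simp only [dotProduct]
    simp_rw [Finset.sum_mul_sum]
    rw [Finset.sum_comm]
    have h1 : ∀ j ∈ S, ∑ x, ∑ k ∈ S, (c j * w j x) * (c k * w k x)
        = ∑ k ∈ S, (c j * c k) * (w j ⬝ᵥ w k) := by
      intro j _
      rw [Finset.sum_comm]
      refine Finset.sum_congr rfl fun k _ => ?_
      simp only [dotProduct, Finset.mul_sum]
      exact Finset.sum_congr rfl fun x _ => by ring
    rw [Finset.sum_congr rfl h1]
    refine Finset.sum_congr rfl fun j hj => ?_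
    rw [Finset.sum_congr rfl (fun k (_ : k ∈ S) => by rw [hortho j k])]
    simp only [mul_ite, mul_one, mul_zero]
    rw [Finset.sum_ite_eq S j (fun k => c j * c k)]
    simp [hj, sq]
  -- u has unit norm
  have hsq : Real.sqrt n * Real.sqrt n = n := Real.mul_self_sqrt hn0.le
  have huu : u ⬝ᵥ u = 1 := by
    have h1 : ∀ x, u x * u x = 1 / n := by
      intro x; rw [hu]
      by_cases h : x ∈ I <;> simp [h] <;>
        rw [← mul_inv, hsq]
    simp only [dotProduct]
    rw [Finset.sum_congr rfl fun x _ => h1 x]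
    simp only [Finset.sum_const, Finset.card_univ, Fintype.card_fin, nsmul_eq_mul]
    field_simp
  have hpar : ∑ j, c j ^ 2 = 1 := by
    rw [← huu]; conv_rhs => rw [hueq]
    exact (hnorm Finset.univ).symm
  -- the quadratic form lower bound
  have hquad : ∀ v : Fin n → ℝ, -((d:ℝ) * (v ⬝ᵥ v)) ≤ v ⬝ᵥ (M *ᵥ v) := by
    intro v
    have key : 0 ≤ ∑ x, ∑ y, M x y * (v x + v y) ^ 2 :=
      Finset.sum_nonneg fun x _ => Finset.sum_nonneg fun y _ =>
        mul_nonneg (hnonneg x y) (sq_nonneg _)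
    have expand : ∑ x, ∑ y, M x y * (v x + v y) ^ 2
        = (d : ℝ) * (v ⬝ᵥ v) + 2 * (v ⬝ᵥ (M *ᵥ v)) + (d : ℝ) * (v ⬝ᵥ v) := by
      have e1 : ∀ x y, M x y * (v x + v y) ^ 2
          = M x y * v x ^ 2 + 2 * (v x * (M x y * v y)) + M x y * v y ^ 2 := by
        intro x y; ring
      simp_rw [e1, Finset.sum_add_distrib]
      congr 1
      · congr 1
        · simp_rw [← Finset.sum_mul, hrow]
          simp [dotProduct, Finset.mul_sum, sq, mul_comm]
        · simp [dotProduct, Matrix.mulVec, Finset.mul_sum]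
      · rw [Finset.sum_comm]
        have hcol : ∀ y, ∑ x, M x y * v y ^ 2 = (d : ℝ) * v y ^ 2 := by
          intro y
          rw [← Finset.sum_mul]
          congr 1
          calc ∑ x, M x y = ∑ x, M y x := Finset.sum_congr rfl fun x _ => hsym x y
            _ = d := hrow y
        simp_rw [hcol]
        simp [dotProduct, Finset.mul_sum, sq, mul_comm]
    nlinarith [key, expand]
  -- all eigenvalues are at least -1
  have hnu : ∀ j, -1 ≤ ν j := by
    intro j
    have hww : w j ⬝ᵥ w j = 1 := by simpa using hortho j j
    have hAq : w j ⬝ᵥ (((d : ℝ)⁻¹ • M) *ᵥ w j) = ν j := by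
      rw [heig j, dotProduct_smul, smul_eq_mul, hww, mul_one]
    have hAM : w j ⬝ᵥ (((d : ℝ)⁻¹ • M) *ᵥ w j) = (d:ℝ)⁻¹ * (w j ⬝ᵥ (M *ᵥ w j)) := by
      rw [Matrix.smul_mulVec, dotProduct_smul, smul_eq_mul]
    have hq := hquad (w j)
    rw [hww, mul_one] at hq
    have hMq : (d:ℝ) * ν j = w j ⬝ᵥ (M *ᵥ w j) := by
      rw [← hAq, hAM]; field_simp
    nlinarith [hq, hMq, hd0]
  -- spectral expansion of the quadratic form
  have hAu : ∀ x, (((d : ℝ)⁻¹ • M) *ᵥ u) x = ∑ j, c j * (ν j * w j x) := by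
    intro x
    have h1 : (((d : ℝ)⁻¹ • M) *ᵥ u) x = ∑ j, c j * ((((d : ℝ)⁻¹ • M) *ᵥ w j) x) := by
      conv_lhs => rw [hueq]
      simp only [Matrix.mulVec, dotProduct, Finset.mul_sum]
      rw [Finset.sum_comm]
      exact Finset.sum_congr rfl fun j _ => Finset.sum_congr rfl fun y _ => by ring
    rw [h1]
    refine Finset.sum_congr rfl fun j _ => ?_
    rw [heig j]
    simp [Pi.smul_apply, smul_eq_mul]
  have hspec : u ⬝ᵥ (((d : ℝ)⁻¹ • M) *ᵥ u) = ∑ j, ν j * c j ^ 2 := by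
    simp only [dotProduct]
    rw [Finset.sum_congr rfl fun x _ => by rw [hAu x]]
    calc ∑ x, u x * ∑ j, c j * (ν j * w j x)
        = ∑ j, ∑ x, u x * (c j * (ν j * w j x)) := by
          simp_rw [Finset.mul_sum]; exact Finset.sum_comm
      _ = ∑ j, (ν j * c j) * (w j ⬝ᵥ u) := by
          refine Finset.sum_congr rfl fun j _ => ?_
          simp only [dotProduct, Finset.mul_sum]
          exact Finset.sum_congr rfl fun x _ => by ring
      _ = ∑ j, ν j * c j ^ 2 := by
          refine Finset.sum_congr rfl fun j _ => ?_
          rw [show w j ⬝ᵥ u = c j from rfl]; ring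
  -- combinatorial computation of the quadratic form on u
  set f : Fin n → ℝ := fun x => if x ∈ I then 1 else 0 with hf
  have hufx : ∀ x, u x = (2 * f x - 1) / Real.sqrt n := by
    intro x; rw [hu]
    by_cases h : x ∈ I <;> simp [hf, h] <;> ring_nf
  have hprod : ∀ x y, u x * u y = (4 * (f x * f y) - 2 * f x - 2 * f y + 1) / n := by
    intro x y
    rw [hufx x, hufx y, div_mul_div_comm, hsq]
    congr 1; ring
  have hfsum : ∑ x, f x = (I.card : ℝ) := by
    simp [hf, Finset.sum_boole, Finset.filter_mem_eq_inter]
  have hMff : ∀ x y, M x y * (f x * f y) = 0 := by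
    intro x y
    by_cases hx : x ∈ I
    · by_cases hy : y ∈ I
      · have : ¬ G.Adj x y := hind x hx y hy
        simp [hM, SimpleGraph.adjMatrix_apply, this]
      · simp [hf, hy]
    · simp [hf, hx]
  have hMfx : ∑ x, ∑ y, M x y * f x = (d:ℝ) * I.card := by
    have h1 : ∀ x, ∑ y, M x y * f x = (d:ℝ) * f x := by
      intro x; rw [← Finset.sum_mul, hrow]
    simp_rw [h1, ← Finset.mul_sum, hfsum]
  have hMfy : ∑ x, ∑ y, M x y * f y = (d:ℝ) * I.card := by
    rw [Finset.sum_comm]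
    have h1 : ∀ y, ∑ x, M x y * f y = (d:ℝ) * f y := by
      intro y
      rw [← Finset.sum_mul]
      have h2 : ∑ x, M x y = (d:ℝ) := by
        calc ∑ x, M x y = ∑ x, M y x := Finset.sum_congr rfl fun x _ => hsym x y
          _ = d := hrow y
      rw [h2]
    simp_rw [h1, ← Finset.mul_sum, hfsum]
  have hMsum : ∑ x, ∑ y, M x y = (d:ℝ) * n := by
    simp_rw [hrow]
    simp [mul_comm]
  have hdotM : u ⬝ᵥ (M *ᵥ u) = ((d:ℝ) * n - 4 * d * I.card) / n := by
    have hdot : u ⬝ᵥ (M *ᵥ u) = ∑ x, ∑ y, M x y * (u x * u y) := by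
      simp only [dotProduct, Matrix.mulVec, Finset.mul_sum]
      exact Finset.sum_congr rfl fun x _ => Finset.sum_congr rfl fun y _ => by ring
    rw [hdot]
    have hterm : ∀ x y, M x y * (u x * u y)
        = (4 * (M x y * (f x * f y)) - 2 * (M x y * f x) - 2 * (M x y * f y) + M x y) / n := by
      intro x y; rw [hprod x y]; ring
    simp_rw [hterm, ← Finset.sum_div, Finset.sum_add_distrib, Finset.sum_sub_distrib, hMff]
    rw [show (∑ _x : Fin n, ∑ _y : Fin n, 4 * (0:ℝ)) = 0 by simp]
    simp_rw [← Finset.mul_sum, hMfx, hMfy, hMsum]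
    ring
  have hmain : u ⬝ᵥ (((d : ℝ)⁻¹ • M) *ᵥ u) = 4 * γ - 1 := by
    rw [Matrix.smul_mulVec, dotProduct_smul, smul_eq_mul, hdotM, hIcard]
    field_simp
    ring
  -- identify the left-hand side
  have hPu : P *ᵥ u = fun x => ∑ j ∈ T, c j * w j x := by
    rw [hP]
    funext x
    simp only [Matrix.mulVec, dotProduct, Matrix.sum_apply, Matrix.vecMulVec_apply,
      Finset.sum_mul]
    rw [Finset.sum_comm]
    refine Finset.sum_congr rfl fun j _ => ?_
    rw [show c j = w j ⬝ᵥ u from rfl]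
    simp only [dotProduct, Finset.sum_mul]
    exact Finset.sum_congr rfl fun y _ => by ring
  have hdiff : u - P *ᵥ u = fun x => ∑ j ∈ Finset.univ \ T, c j * w j x := by
    funext x
    have hsplit : ∑ j ∈ Finset.univ \ T, c j * w j x + ∑ j ∈ T, c j * w j x
        = ∑ j, c j * w j x := Finset.sum_sdiff (Finset.subset_univ T)
    have hux : u x = ∑ j, c j * w j x := by conv_lhs => rw [hueq]
    simp only [Pi.sub_apply, hPu, hux]
    linarith [hsplit]
  have hLHS : (u - P.mulVec u) ⬝ᵥ (u - P.mulVec u) = ∑ j ∈ Finset.univ \ T, c j ^ 2 := by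
    rw [show P.mulVec u = P *ᵥ u from rfl, hdiff]
    exact hnorm _
  rw [hLHS]
  -- final inequality
  set ε := ∑ j ∈ Finset.univ \ T, c j ^ 2 with hε
  set s := ∑ j ∈ T, c j ^ 2 with hs
  have hsumsplit : ε + s = 1 := by
    rw [hε, hs, Finset.sum_sdiff (Finset.subset_univ T), hpar]
  have hsplitnu : ∑ j, ν j * c j ^ 2
      = ∑ j ∈ Finset.univ \ T, ν j * c j ^ 2 + ∑ j ∈ T, ν j * c j ^ 2 :=
    (Finset.sum_sdiff (Finset.subset_univ T)).symm
  have hb1 : -lam * ε ≤ ∑ j ∈ Finset.univ \ T, ν j * c j ^ 2 := by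
    rw [hε, Finset.mul_sum]
    refine Finset.sum_le_sum fun j hj => ?_
    exact mul_le_mul_of_nonneg_right (le_of_lt (hout j (Finset.mem_sdiff.mp hj).2))
      (sq_nonneg _)
  have hb2 : -s ≤ ∑ j ∈ T, ν j * c j ^ 2 := by
    rw [hs, ← Finset.sum_neg_distrib]
    refine Finset.sum_le_sum fun j _ => ?_
    have := mul_le_mul_of_nonneg_right (hnu j) (sq_nonneg (c j))
    linarith [this]
  have hkey : -lam * ε - s ≤ 4 * γ - 1 := by
    rw [← hmain, hspec, hsplitnu]
    linarith [hb1, hb2]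
  rw [le_div_iff₀ hlam']
  nlinarith [hkey, hsumsplit]
end

section
/- Let Ā_H = A_H/c and Ā_G = A_G/c be adjacency matrices of graphs H and G normalized by the same c > 0, where G is obtained from H by deleting all monochromatic edges of a k-partition of the vertices. If Ā_H has at most t₁ eigenvalues ≥ r₁ and at most t₂ eigenvalues ≤ −r₂, then Ā_G has at most k·t₁ + t₂ eigenvalues ≤ −(r₁ + r₂) and at most t₁ + k·t₂ eigenvalues ≥ r₁ + r₂. -/
open Matrix Finset Module LinearMap
open scoped Classical
variable {n : ℕ} {A : Matrix (Fin n) (Fin n) ℝ}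

noncomputable def yv (hA : A.IsHermitian) (x : Fin n → ℝ) : Fin n → ℝ :=
  (star (hA.eigenvectorUnitary : Matrix (Fin n) (Fin n) ℝ)) *ᵥ x

lemma star_mulVec_eq (U : Matrix (Fin n) (Fin n) ℝ) (x : Fin n → ℝ) :
    star U *ᵥ x = x ᵥ* U := by
  rw [star_eq_conjTranspose, conjTranspose_eq_transpose_of_trivial, mulVec_transpose]

lemma quad_repr (hA : A.IsHermitian) (x : Fin n → ℝ) :
    x ⬝ᵥ (A *ᵥ x) = ∑ i, hA.eigenvalues i * (yv hA x i)^2 := by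
  set U := (hA.eigenvectorUnitary : Matrix (Fin n) (Fin n) ℝ) with hU
  have hsp := hA.spectral_theorem
  calc x ⬝ᵥ (A *ᵥ x)
      = x ⬝ᵥ ((U * (diagonal (RCLike.ofReal ∘ hA.eigenvalues)) * star U) *ᵥ x) := congrArg (fun M => x ⬝ᵥ (M *ᵥ x)) hsp
    _ = (star U *ᵥ x) ⬝ᵥ ((diagonal (RCLike.ofReal ∘ hA.eigenvalues)) *ᵥ (star U *ᵥ x)) := by
        rw [← mulVec_mulVec, ← mulVec_mulVec, dotProduct_mulVec, star_mulVec_eq]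
    _ = ∑ i, hA.eigenvalues i * (yv hA x i)^2 := by
        simp only [dotProduct, mulVec_diagonal, yv, hU]
        exact Finset.sum_congr rfl fun i _ => by simp [RCLike.ofReal]; ring

lemma dot_repr (hA : A.IsHermitian) (x : Fin n → ℝ) :
    x ⬝ᵥ x = ∑ i, (yv hA x i)^2 := by
  set U := (hA.eigenvectorUnitary : Matrix (Fin n) (Fin n) ℝ) with hU
  have h1 : U * star U = 1 := (Matrix.mem_unitaryGroup_iff).mp hA.eigenvectorUnitary.2
  calc x ⬝ᵥ x = x ⬝ᵥ ((U * star U) *ᵥ x) := by rw [h1, one_mulVec]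
    _ = (star U *ᵥ x) ⬝ᵥ (star U *ᵥ x) := by
        rw [← mulVec_mulVec, dotProduct_mulVec, star_mulVec_eq]
    _ = ∑ i, (yv hA x i)^2 := by simp [dotProduct, yv, hU, sq]
noncomputable def projMap (hA : A.IsHermitian) (p : Fin n → Prop) :
    (Fin n → ℝ) →ₗ[ℝ] ({i // p i} → ℝ) :=
  (LinearMap.funLeft ℝ ℝ Subtype.val).comp
    (Matrix.mulVecLin (star (hA.eigenvectorUnitary : Matrix (Fin n) (Fin n) ℝ)))

lemma projMap_apply (hA : A.IsHermitian) (p : Fin n → Prop) (x : Fin n → ℝ)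
    (i : {i // p i}) : projMap hA p x i = yv hA x i.1 := rfl


lemma exists_yv_ne (hA : A.IsHermitian) {x : Fin n → ℝ} (hx : x ≠ 0) :
    ∃ i, yv hA x i ≠ 0 := by
  by_contra hc
  push_neg at hc
  have h0 : x ⬝ᵥ x = 0 := by rw [dot_repr hA]; simp [hc]
  have hj : ∃ j, x j ≠ 0 := by
    by_contra hj; push_neg at hj; exact hx (funext hj)
  obtain ⟨j, hj⟩ := hj
  have : (0:ℝ) < x ⬝ᵥ x := by
    have : (0:ℝ) < ∑ i, x i * x i :=
      Finset.sum_pos' (fun i _ => mul_self_nonneg _) ⟨j, Finset.mem_univ j, mul_self_pos.mpr hj⟩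
    simpa [dotProduct] using this
  linarith [this, h0.le]

lemma L1up (hA : A.IsHermitian) (r : ℝ) {t : ℕ}
    (h : (Finset.univ.filter fun i => r ≤ hA.eigenvalues i).card ≤ t) :
    ∃ (ι : Type) (_ : Fintype ι) (T : (Fin n → ℝ) →ₗ[ℝ] (ι → ℝ)),
      Fintype.card ι ≤ t ∧ ∀ x, x ≠ 0 → T x = 0 → x ⬝ᵥ (A *ᵥ x) < r * (x ⬝ᵥ x) := by
  refine ⟨{i // r ≤ hA.eigenvalues i}, inferInstance, projMap hA _, ?_, ?_⟩
  · rw [Fintype.card_subtype]; exact h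
  intro x hx hTx
  have hyz : ∀ i, r ≤ hA.eigenvalues i → yv hA x i = 0 := fun i hi => by
    have := congr_fun hTx ⟨i, hi⟩; simpa [projMap_apply] using this
  obtain ⟨j, hj⟩ := exists_yv_ne hA hx
  have hjlt : hA.eigenvalues j < r := by
    by_contra hc; push_neg at hc; exact hj (hyz j hc)
  rw [quad_repr hA, dot_repr hA, Finset.mul_sum]
  apply Finset.sum_lt_sum
  · intro i _
    by_cases hi : r ≤ hA.eigenvalues i
    · simp [hyz i hi]
    · exact mul_le_mul_of_nonneg_right (le_of_lt (not_le.mp hi)) (sq_nonneg _)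
  · exact ⟨j, Finset.mem_univ j,
      mul_lt_mul_of_pos_right hjlt (by positivity)⟩

lemma L1lo (hA : A.IsHermitian) (r : ℝ) {t : ℕ}
    (h : (Finset.univ.filter fun i => hA.eigenvalues i ≤ -r).card ≤ t) :
    ∃ (ι : Type) (_ : Fintype ι) (T : (Fin n → ℝ) →ₗ[ℝ] (ι → ℝ)),
      Fintype.card ι ≤ t ∧ ∀ x, x ≠ 0 → T x = 0 → -(r * (x ⬝ᵥ x)) < x ⬝ᵥ (A *ᵥ x) := by
  refine ⟨{i // hA.eigenvalues i ≤ -r}, inferInstance, projMap hA _, ?_, ?_⟩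
  · rw [Fintype.card_subtype]; exact h
  intro x hx hTx
  have hyz : ∀ i, hA.eigenvalues i ≤ -r → yv hA x i = 0 := fun i hi => by
    have := congr_fun hTx ⟨i, hi⟩; simpa [projMap_apply] using this
  obtain ⟨j, hj⟩ := exists_yv_ne hA hx
  have hjlt : -r < hA.eigenvalues j := by
    by_contra hc; push_neg at hc; exact hj (hyz j hc)
  have : ∑ i, (-r) * (yv hA x i)^2 < ∑ i, hA.eigenvalues i * (yv hA x i)^2 := by
    apply Finset.sum_lt_sum
    · intro i _
      by_cases hi : hA.eigenvalues i ≤ -r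
      · simp [hyz i hi]
      · exact mul_le_mul_of_nonneg_right (le_of_lt (not_le.mp hi)) (sq_nonneg _)
    · exact ⟨j, Finset.mem_univ j, mul_lt_mul_of_pos_right hjlt (by positivity)⟩
  rw [quad_repr hA, dot_repr hA]
  calc -(r * ∑ i, (yv hA x i)^2) = ∑ i, (-r) * (yv hA x i)^2 := by
        rw [Finset.mul_sum, ← Finset.sum_neg_distrib]; simp [neg_mul]
    _ < _ := this

lemma dim_lemma {ι : Type} [Fintype ι] (hA : A.IsHermitian)
    (T : (Fin n → ℝ) →ₗ[ℝ] (ι → ℝ)) (p : Fin n → Prop)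
    (hcard : Fintype.card ι < (Finset.univ.filter fun i => p i).card) :
    ∃ x : Fin n → ℝ, x ≠ 0 ∧ T x = 0 ∧ (∀ i, ¬ p i → yv hA x i = 0) := by
  set T2 := projMap hA (fun i => ¬ p i) with hT2
  have hn : finrank ℝ (Fin n → ℝ) = n := by
    rw [Module.finrank_fintype_fun_eq_card]; simp
  have h1 := LinearMap.finrank_range_add_finrank_ker T
  have h2 := LinearMap.finrank_range_add_finrank_ker T2
  rw [hn] at h1 h2
  have hr1 : finrank ℝ (LinearMap.range T) ≤ Fintype.card ι :=
    le_trans (Submodule.finrank_le _) (le_of_eq (Module.finrank_fintype_fun_eq_card _))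
  have hr2 : finrank ℝ (LinearMap.range T2) ≤ Fintype.card {i // ¬ p i} :=
    le_trans (Submodule.finrank_le _) (le_of_eq (Module.finrank_fintype_fun_eq_card _))
  have hcompl : Fintype.card {i // ¬ p i} + (Finset.univ.filter fun i => p i).card = n := by
    rw [Fintype.card_subtype_compl, Fintype.card_subtype]
    have hFle : (Finset.univ.filter fun i => p i).card ≤ n := by
      simpa using Finset.card_filter_le Finset.univ (fun i => p i)
    simp only [Fintype.card_fin]
    omega
  have hsup := Submodule.finrank_sup_add_finrank_inf_eq (LinearMap.ker T) (LinearMap.ker T2)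
  have hsupn : finrank ℝ ↥(LinearMap.ker T ⊔ LinearMap.ker T2) ≤ n :=
    le_trans (Submodule.finrank_le _) (le_of_eq hn)
  have hpos : 0 < finrank ℝ ↥(LinearMap.ker T ⊓ LinearMap.ker T2) := by omega
  have hne : LinearMap.ker T ⊓ LinearMap.ker T2 ≠ ⊥ := by
    intro hbot; rw [hbot, finrank_bot] at hpos; exact lt_irrefl 0 hpos
  obtain ⟨x, hxmem, hx0⟩ := Submodule.exists_mem_ne_zero_of_ne_bot hne
  refine ⟨x, hx0, ?_, ?_⟩
  · exact LinearMap.mem_ker.mp hxmem.1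
  · intro i hi
    have hm := LinearMap.mem_ker.mp hxmem.2
    have := congr_fun hm ⟨i, hi⟩
    simpa [hT2, projMap_apply] using this

lemma L2up {ι : Type} [Fintype ι] (hA : A.IsHermitian) (r : ℝ)
    (T : (Fin n → ℝ) →ₗ[ℝ] (ι → ℝ))
    (h : ∀ x, x ≠ 0 → T x = 0 → x ⬝ᵥ (A *ᵥ x) < r * (x ⬝ᵥ x)) :
    (Finset.univ.filter fun i => r ≤ hA.eigenvalues i).card ≤ Fintype.card ι := by
  by_contra hlt
  push_neg at hlt
  obtain ⟨x, hx0, hTx, hyz⟩ := dim_lemma hA T (fun i => r ≤ hA.eigenvalues i) hlt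
  have h1 := h x hx0 hTx
  have h2 : r * (x ⬝ᵥ x) ≤ x ⬝ᵥ (A *ᵥ x) := by
    rw [quad_repr hA, dot_repr hA, Finset.mul_sum]
    apply Finset.sum_le_sum
    intro i _
    by_cases hi : r ≤ hA.eigenvalues i
    · exact mul_le_mul_of_nonneg_right hi (sq_nonneg _)
    · simp [hyz i hi]
  linarith

lemma L2lo {ι : Type} [Fintype ι] (hA : A.IsHermitian) (r : ℝ)
    (T : (Fin n → ℝ) →ₗ[ℝ] (ι → ℝ))
    (h : ∀ x, x ≠ 0 → T x = 0 → -(r * (x ⬝ᵥ x)) < x ⬝ᵥ (A *ᵥ x)) :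
    (Finset.univ.filter fun i => hA.eigenvalues i ≤ -r).card ≤ Fintype.card ι := by
  by_contra hlt
  push_neg at hlt
  obtain ⟨x, hx0, hTx, hyz⟩ := dim_lemma hA T (fun i => hA.eigenvalues i ≤ -r) hlt
  have h1 := h x hx0 hTx
  have h2 : x ⬝ᵥ (A *ᵥ x) ≤ -(r * (x ⬝ᵥ x)) := by
    rw [quad_repr hA, dot_repr hA]
    have : -(r * ∑ i, (yv hA x i)^2) = ∑ i, (-r) * (yv hA x i)^2 := by
      rw [Finset.mul_sum, ← Finset.sum_neg_distrib]; simp [neg_mul]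
    rw [this]
    apply Finset.sum_le_sum
    intro i _
    by_cases hi : hA.eigenvalues i ≤ -r
    · exact mul_le_mul_of_nonneg_right hi (sq_nonneg _)
    · simp [hyz i hi]
  linarith


noncomputable def partLM (χ : Fin n → Fin k) (p : Fin k) : (Fin n → ℝ) →ₗ[ℝ] (Fin n → ℝ) where
  toFun := fun x i => if χ i = p then x i else 0
  map_add' := by intros x y; funext i; by_cases h : χ i = p <;> simp [h]
  map_smul' := by intros c x; funext i; by_cases h : χ i = p <;> simp [h]

lemma partLM_apply (χ : Fin n → Fin k) (p : Fin k) (x : Fin n → ℝ) (i : Fin n) :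
    partLM χ p x i = if χ i = p then x i else 0 := rfl

lemma part_sum (χ : Fin n → Fin k) (x : Fin n → ℝ) (i j : Fin n) :
    ∑ p, (partLM χ p x i) * (partLM χ p x j) = if χ i = χ j then x i * x j else 0 := by
  simp only [partLM_apply]
  rw [Finset.sum_eq_single (χ i)]
  · by_cases h : χ i = χ j <;> simp [h, eq_comm] <;> tauto
  · intro p _ hp
    simp [Ne.symm hp]
  · simp

lemma quad_expand (M : Matrix (Fin n) (Fin n) ℝ) (x : Fin n → ℝ) :
    x ⬝ᵥ (M *ᵥ x) = ∑ i, ∑ j, M i j * x i * x j := by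
  simp only [dotProduct, mulVec, Finset.mul_sum]
  exact Finset.sum_congr rfl fun i _ => Finset.sum_congr rfl fun j _ => by ring

lemma quad_block (M : Matrix (Fin n) (Fin n) ℝ) (χ : Fin n → Fin k) (x : Fin n → ℝ) :
    ∑ p, (partLM χ p x) ⬝ᵥ (M *ᵥ (partLM χ p x))
      = ∑ i, ∑ j, (if χ i = χ j then M i j else 0) * x i * x j := by
  have h1 : ∀ p, (partLM χ p x) ⬝ᵥ (M *ᵥ (partLM χ p x))
      = ∑ i, ∑ j, M i j * (partLM χ p x i * partLM χ p x j) := by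
    intro p; rw [quad_expand]
    exact Finset.sum_congr rfl fun i _ => Finset.sum_congr rfl fun j _ => by ring
  simp only [h1]
  rw [Finset.sum_comm]
  refine Finset.sum_congr rfl fun i _ => ?_
  rw [Finset.sum_comm]
  refine Finset.sum_congr rfl fun j _ => ?_
  rw [← Finset.mul_sum, part_sum]
  by_cases h : χ i = χ j <;> simp [h] <;> ring

lemma dot_block (χ : Fin n → Fin k) (x : Fin n → ℝ) :
    ∑ p, (partLM χ p x) ⬝ᵥ (partLM χ p x) = x ⬝ᵥ x := by
  simp only [dotProduct]
  rw [Finset.sum_comm]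
  refine Finset.sum_congr rfl fun i _ => ?_
  rw [part_sum]
  simp

noncomputable def sumLM {V : Type*} [AddCommGroup V] [Module ℝ V] {ι₁ ι₂ : Type}
    (T1 : V →ₗ[ℝ] (ι₁ → ℝ)) (T2 : V →ₗ[ℝ] (ι₂ → ℝ)) : V →ₗ[ℝ] (ι₁ ⊕ ι₂ → ℝ) where
  toFun := fun x => Sum.elim (T1 x) (T2 x)
  map_add' := by intros x y; funext s; cases s <;> simp
  map_smul' := by intros c x; funext s; cases s <;> simp

noncomputable def blockLM {ι : Type} (χ : Fin n → Fin k)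
    (T : (Fin n → ℝ) →ₗ[ℝ] (ι → ℝ)) : (Fin n → ℝ) →ₗ[ℝ] (Fin k × ι → ℝ) where
  toFun := fun x pj => T (partLM χ pj.1 x) pj.2
  map_add' := by intros x y; funext pj; simp
  map_smul' := by intros c x; funext pj; simp

lemma blockLM_zero {ι : Type} (χ : Fin n → Fin k) (T : (Fin n → ℝ) →ₗ[ℝ] (ι → ℝ))
    {x : Fin n → ℝ} (h : blockLM χ T x = 0) (p : Fin k) : T (partLM χ p x) = 0 := by
  funext j; exact congr_fun h (p, j)

lemma part_ne_zero (χ : Fin n → Fin k) {x : Fin n → ℝ} (hx : x ≠ 0) :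
    ∃ p, partLM χ p x ≠ 0 := by
  have : ∃ i, x i ≠ 0 := by
    by_contra hc; push_neg at hc; exact hx (funext hc)
  obtain ⟨i, hi⟩ := this
  refine ⟨χ i, fun h0 => hi ?_⟩
  have := congr_fun h0 i
  simpa [partLM_apply] using this

lemma blockBound_up {n k : ℕ} {ι : Type} (χ : Fin n → Fin k)
    {A B : Matrix (Fin n) (Fin n) ℝ}
    (hAB : ∀ i j, (A - B) i j = if χ i = χ j then A i j else 0)
    (T : (Fin n → ℝ) →ₗ[ℝ] (ι → ℝ)) (r : ℝ)
    (hT : ∀ y, y ≠ 0 → T y = 0 → y ⬝ᵥ (A *ᵥ y) < r * (y ⬝ᵥ y)) :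
    ∀ x, x ≠ 0 → blockLM χ T x = 0 → x ⬝ᵥ ((A - B) *ᵥ x) < r * (x ⬝ᵥ x) := by
  intro x hx hbx
  have key : x ⬝ᵥ ((A - B) *ᵥ x) = ∑ p, (partLM χ p x) ⬝ᵥ (A *ᵥ (partLM χ p x)) := by
    rw [quad_expand, quad_block]
    exact Finset.sum_congr rfl fun i _ => Finset.sum_congr rfl fun j _ => by rw [hAB]
  have key2 : r * (x ⬝ᵥ x) = ∑ p, r * ((partLM χ p x) ⬝ᵥ (partLM χ p x)) := by
    rw [← dot_block χ x, Finset.mul_sum]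
  rw [key, key2]
  obtain ⟨p₀, hp₀⟩ := part_ne_zero χ hx
  apply Finset.sum_lt_sum
  · intro p _
    by_cases hp : partLM χ p x = 0
    · simp [hp]
    · exact le_of_lt (hT _ hp (blockLM_zero χ T hbx p))
  · exact ⟨p₀, Finset.mem_univ p₀, hT _ hp₀ (blockLM_zero χ T hbx p₀)⟩

lemma blockBound_lo {n k : ℕ} {ι : Type} (χ : Fin n → Fin k)
    {A B : Matrix (Fin n) (Fin n) ℝ}
    (hAB : ∀ i j, (A - B) i j = if χ i = χ j then A i j else 0)
    (T : (Fin n → ℝ) →ₗ[ℝ] (ι → ℝ)) (r : ℝ)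
    (hT : ∀ y, y ≠ 0 → T y = 0 → -(r * (y ⬝ᵥ y)) < y ⬝ᵥ (A *ᵥ y)) :
    ∀ x, x ≠ 0 → blockLM χ T x = 0 → -(r * (x ⬝ᵥ x)) < x ⬝ᵥ ((A - B) *ᵥ x) := by
  intro x hx hbx
  have key : x ⬝ᵥ ((A - B) *ᵥ x) = ∑ p, (partLM χ p x) ⬝ᵥ (A *ᵥ (partLM χ p x)) := by
    rw [quad_expand, quad_block]
    exact Finset.sum_congr rfl fun i _ => Finset.sum_congr rfl fun j _ => by rw [hAB]
  have key2 : -(r * (x ⬝ᵥ x)) = ∑ p, -(r * ((partLM χ p x) ⬝ᵥ (partLM χ p x))) := by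
    rw [← dot_block χ x, Finset.mul_sum, ← Finset.sum_neg_distrib]
  rw [key, key2]
  obtain ⟨p₀, hp₀⟩ := part_ne_zero χ hx
  apply Finset.sum_lt_sum
  · intro p _
    by_cases hp : partLM χ p x = 0
    · simp [hp]
    · exact le_of_lt (hT _ hp (blockLM_zero χ T hbx p))
  · exact ⟨p₀, Finset.mem_univ p₀, hT _ hp₀ (blockLM_zero χ T hbx p₀)⟩

theorem stmt16 {n k : ℕ} (c : ℝ) (hc : 0 < c)
    (H G : SimpleGraph (Fin n)) [DecidableRel H.Adj] [DecidableRel G.Adj]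
    (χ : Fin n → Fin k)
    (hG : ∀ x y, G.Adj x y ↔ H.Adj x y ∧ χ x ≠ χ y)
    (hH : (c⁻¹ • H.adjMatrix ℝ).IsHermitian)
    (hGh : (c⁻¹ • G.adjMatrix ℝ).IsHermitian)
    (r1 r2 : ℝ) (hr1 : 0 ≤ r1) (hr2 : 0 ≤ r2) (t1 t2 : ℕ)
    (htop : (Finset.univ.filter fun i => r1 ≤ hH.eigenvalues i).card ≤ t1)
    (hbot : (Finset.univ.filter fun i => hH.eigenvalues i ≤ -r2).card ≤ t2) :
    (Finset.univ.filter fun i => hGh.eigenvalues i ≤ -(r1 + r2)).card ≤ k * t1 + t2 ∧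
    (Finset.univ.filter fun i => r1 + r2 ≤ hGh.eigenvalues i).card ≤ t1 + k * t2 := by
  set A := c⁻¹ • H.adjMatrix ℝ with hA
  set B := c⁻¹ • G.adjMatrix ℝ with hB
  have hABe : ∀ i j, (A - B) i j = if χ i = χ j then A i j else 0 := by
    intro i j
    by_cases h : χ i = χ j
    · have hng : ¬ G.Adj i j := by rw [hG]; tauto
      simp [hA, hB, h, Matrix.sub_apply, hng]
    · have hiff : G.Adj i j ↔ H.Adj i j := by rw [hG]; tauto
      by_cases hH' : H.Adj i j
      · simp [hA, hB, h, Matrix.sub_apply, hH', hiff.mpr hH']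
      · have : ¬ G.Adj i j := fun hg => hH' (hiff.mp hg)
        simp [hA, hB, h, Matrix.sub_apply, hH', this]
  obtain ⟨ι₁, i1, T1, hc1, hT1⟩ := L1up hH r1 htop
  obtain ⟨ι₂, i2, T2, hc2, hT2⟩ := L1lo hH r2 hbot
  have hsub : ∀ x : Fin n → ℝ, x ⬝ᵥ ((A - B) *ᵥ x) = x ⬝ᵥ (A *ᵥ x) - x ⬝ᵥ (B *ᵥ x) := by
    intro x; rw [Matrix.sub_mulVec, dotProduct_sub]
  constructor
  · -- lower bound on quad B
    have hS := blockBound_up χ hABe T1 r1 hT1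
    have key : ∀ x, x ≠ 0 → (sumLM (blockLM χ T1) T2) x = 0 →
        -((r1 + r2) * (x ⬝ᵥ x)) < x ⬝ᵥ (B *ᵥ x) := by
      intro x hx hTx
      have h1 : blockLM χ T1 x = 0 := funext fun j => congr_fun hTx (Sum.inl j)
      have h2 : T2 x = 0 := funext fun j => congr_fun hTx (Sum.inr j)
      have q1 := hS x hx h1
      have q2 := hT2 x hx h2
      have hs := hsub x
      nlinarith [q1, q2, hs]
    have := L2lo hGh (r1 + r2) (sumLM (blockLM χ T1) T2) key
    refine le_trans this ?_
    rw [Fintype.card_sum, Fintype.card_prod, Fintype.card_fin]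
    exact add_le_add (Nat.mul_le_mul_left k hc1) hc2
  · have hS := blockBound_lo χ hABe T2 r2 hT2
    have key : ∀ x, x ≠ 0 → (sumLM T1 (blockLM χ T2)) x = 0 →
        x ⬝ᵥ (B *ᵥ x) < (r1 + r2) * (x ⬝ᵥ x) := by
      intro x hx hTx
      have h1 : T1 x = 0 := funext fun j => congr_fun hTx (Sum.inl j)
      have h2 : blockLM χ T2 x = 0 := funext fun j => congr_fun hTx (Sum.inr j)
      have q1 := hT1 x hx h1
      have q2 := hS x hx h2
      have hs := hsub x
      nlinarith [q1, q2, hs]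
    have := L2up hGh (r1 + r2) (sumLM T1 (blockLM χ T2)) key
    refine le_trans this ?_
    rw [Fintype.card_sum, Fintype.card_prod, Fintype.card_fin]
    exact add_le_add hc1 (Nat.mul_le_mul_left k hc2)
end

section
/- Let G be a λ-one-sided expander: a connected regular graph whose normalized adjacency operator A satisfies ⟨f, Af⟩ ≤ (1−λ)(E f)² + λ E f² for all f. Let χ be a proper k-coloring with indicator functions χ_a, and for colors a ≠ b let ψ_a(x) = Pr[χ(y) = a | x] (fraction of neighbors of x colored a) and α = E[ψ_a | χ(x) = b]. Then the conditional variance satisfies E[χ_b · (ψ_a − α)²] ≤ λ · E[χ_a] · ((1−λ) E[χ_a] + λ) ≤ λ E[χ_a]. -/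
open Matrix Finset
open scoped Classical

lemma aux_bil {n d : ℕ} (G : SimpleGraph (Fin n)) [DecidableRel G.Adj]
    (u v : Fin n → ℝ) :
    ∑ x, u x * (((d : ℝ)⁻¹ • G.adjMatrix ℝ).mulVec v) x
      = (d : ℝ)⁻¹ * ∑ x, ∑ y, (if G.Adj x y then u x * v y else 0) := by
  simp only [Matrix.mulVec, dotProduct, Matrix.smul_apply,
    SimpleGraph.adjMatrix_apply, smul_eq_mul]
  rw [Finset.mul_sum]
  refine Finset.sum_congr rfl fun x _ => ?_
  rw [Finset.mul_sum, Finset.mul_sum]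
  refine Finset.sum_congr rfl fun y _ => ?_
  split_ifs <;> ring

lemma aux_symm {n d : ℕ} (G : SimpleGraph (Fin n)) [DecidableRel G.Adj]
    (u v : Fin n → ℝ) :
    ∑ x, u x * (((d : ℝ)⁻¹ • G.adjMatrix ℝ).mulVec v) x
      = ∑ x, v x * (((d : ℝ)⁻¹ • G.adjMatrix ℝ).mulVec u) x := by
  rw [aux_bil, aux_bil, Finset.sum_comm]
  congr 1
  refine Finset.sum_congr rfl fun x _ => Finset.sum_congr rfl fun y _ => ?_
  by_cases h : G.Adj y x
  · rw [if_pos h, if_pos h.symm]; ring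
  · rw [if_neg h, if_neg (fun h' => h h'.symm)]

lemma aux_zero {n d : ℕ} (G : SimpleGraph (Fin n)) [DecidableRel G.Adj]
    (u v : Fin n → ℝ) (h : ∀ x y, G.Adj x y → u x * v y = 0) :
    ∑ x, u x * (((d : ℝ)⁻¹ • G.adjMatrix ℝ).mulVec v) x = 0 := by
  rw [aux_bil]
  rw [show (∑ x, ∑ y, (if G.Adj x y then u x * v y else 0)) = 0 from ?_, mul_zero]
  refine Finset.sum_eq_zero fun x _ => Finset.sum_eq_zero fun y _ => ?_
  by_cases hxy : G.Adj x y
  · rw [if_pos hxy, h x y hxy]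
  · rw [if_neg hxy]

set_option maxHeartbeats 2000000 in
theorem stmt17 {n k d : ℕ} (G : SimpleGraph (Fin n)) [DecidableRel G.Adj]
    (hconn : G.Connected) (hreg : G.IsRegularOfDegree d) (hd : 0 < d)
    (lam : ℝ) (hlam0 : 0 ≤ lam) (hlam1 : lam ≤ 1)
    (hexp : ∀ f : Fin n → ℝ,
      (1 / (n : ℝ)) * ∑ x, f x * (((d : ℝ)⁻¹ • G.adjMatrix ℝ).mulVec f) x ≤
        (1 - lam) * ((1 / (n : ℝ)) * ∑ x, f x) ^ 2 +
          lam * ((1 / (n : ℝ)) * ∑ x, (f x) ^ 2))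
    (χ : Fin n → Fin k) (hproper : ∀ x y, G.Adj x y → χ x ≠ χ y)
    (a b : Fin k) (hab : a ≠ b) :
    (1 / (n : ℝ)) * ∑ x ∈ Finset.univ.filter (fun x => χ x = b),
        ((((d : ℝ)⁻¹ • G.adjMatrix ℝ).mulVec
            (fun y => if χ y = a then (1 : ℝ) else 0)) x -
          (((Finset.univ.filter fun x => χ x = b).card : ℝ))⁻¹ *
            ∑ x' ∈ Finset.univ.filter (fun x => χ x = b),
              (((d : ℝ)⁻¹ • G.adjMatrix ℝ).mulVec
                (fun y => if χ y = a then (1 : ℝ) else 0)) x') ^ 2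
      ≤ lam * (((Finset.univ.filter fun x => χ x = a).card : ℝ) / n) *
          ((1 - lam) * (((Finset.univ.filter fun x => χ x = a).card : ℝ) / n) + lam) ∧
    lam * (((Finset.univ.filter fun x => χ x = a).card : ℝ) / n) *
        ((1 - lam) * (((Finset.univ.filter fun x => χ x = a).card : ℝ) / n) + lam)
      ≤ lam * (((Finset.univ.filter fun x => χ x = a).card : ℝ) / n) := by
  have hn : 0 < n := by
    have : Nonempty (Fin n) := hconn.nonempty
    exact Fin.pos this.some
  have hN : (0 : ℝ) < (n : ℝ) := by exact_mod_cast hn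
  set χa : Fin n → ℝ := fun y => if χ y = a then (1 : ℝ) else 0 with hχa
  set ψ : Fin n → ℝ := (((d : ℝ)⁻¹ • G.adjMatrix ℝ).mulVec χa) with hψ
  set Sb : Finset (Fin n) := Finset.univ.filter (fun x => χ x = b) with hSb
  set Sa : Finset (Fin n) := Finset.univ.filter (fun x => χ x = a) with hSa
  set α : ℝ := ((Sb.card : ℝ))⁻¹ * ∑ x' ∈ Sb, ψ x' with hα
  set Ca : ℝ := (Sa.card : ℝ) with hCa
  set μ : ℝ := Ca / n with hμ
  have hμ0 : 0 ≤ μ := by positivity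
  have hμ1 : μ ≤ 1 := by
    rw [hμ, div_le_one hN]
    have h1 : Sa.card ≤ n := by
      have := Finset.card_filter_le (Finset.univ : Finset (Fin n)) (fun x => χ x = a)
      simpa using this
    rw [hCa]; exact_mod_cast h1
  constructor
  · -- main inequality
    by_cases hSbe : Sb = ∅
    · rw [hSbe, Finset.sum_empty, mul_zero]
      have h1 : 0 ≤ (1 - lam) * μ + lam := by nlinarith
      exact mul_nonneg (mul_nonneg hlam0 hμ0) h1
    · have hCbpos : 0 < Sb.card := Finset.card_pos.mpr (Finset.nonempty_of_ne_empty hSbe)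
      have hCb : ((Sb.card : ℝ)) ≠ 0 := Nat.cast_ne_zero.mpr hCbpos.ne'
      have hcent : ∑ x ∈ Sb, (ψ x - α) = 0 := by
        rw [Finset.sum_sub_distrib, Finset.sum_const, nsmul_eq_mul, hα,
          ← mul_assoc, mul_inv_cancel₀ hCb, one_mul, sub_self]
      set gb : Fin n → ℝ := fun x => if χ x = b then ψ x - α else 0 with hgb
      set S : ℝ := ∑ x ∈ Sb, (ψ x - α) ^ 2 with hS
      have hv0 : 0 ≤ S := by
        rw [hS]; exact Finset.sum_nonneg fun x _ => sq_nonneg _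
      have hgbsum : ∑ x, gb x = 0 := by
        have h1 : ∑ x, gb x = ∑ x ∈ Sb, (ψ x - α) := by
          rw [hSb, Finset.sum_filter]
        rw [h1, hcent]
      have hχasum : ∑ x, χa x = Ca := by
        rw [hCa, hSa, hχa, Finset.sum_boole]
      have hcross : ∀ x, gb x * χa x = 0 := by
        intro x
        simp only [hgb, hχa]
        split_ifs with h1 h2
        · exact absurd (h2.symm.trans h1) hab
        · exact mul_zero _
        · exact zero_mul _
        · exact zero_mul _
      have hχasq : ∀ x, χa x ^ 2 = χa x := by
        intro x; simp only [hχa]; split_ifs <;> ring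
      have hgbsq : ∑ x, gb x ^ 2 = S := by
        have h1 : ∀ x, gb x ^ 2 = if χ x = b then (ψ x - α) ^ 2 else 0 := by
          intro x; simp only [hgb]; split_ifs <;> ring
        simp only [h1]
        rw [hS, hSb, Finset.sum_filter]
      have hgbψ : ∑ x, gb x * (((d : ℝ)⁻¹ • G.adjMatrix ℝ).mulVec χa) x = S := by
        rw [← hψ]
        have h1 : ∀ x, gb x * ψ x = if χ x = b then (ψ x - α) * ψ x else 0 := by
          intro x; simp only [hgb]; split_ifs <;> ring
        simp only [h1]
        rw [← Finset.sum_filter, ← hSb]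
        have h2 : ∀ x ∈ Sb, (ψ x - α) * ψ x = (ψ x - α) ^ 2 + α * (ψ x - α) := by
          intro x _; ring
        rw [Finset.sum_congr rfl h2, Finset.sum_add_distrib, ← Finset.mul_sum,
          hcent, mul_zero, add_zero, hS]
      have hz1 : ∑ x, gb x * (((d : ℝ)⁻¹ • G.adjMatrix ℝ).mulVec gb) x = 0 := by
        refine aux_zero G gb gb fun x y hxy => ?_
        simp only [hgb]
        split_ifs with h1 h2
        · exact absurd (h1.trans h2.symm) (hproper x y hxy)
        · exact mul_zero _
        · exact zero_mul _
        · exact zero_mul _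
      have hz2 : ∑ x, χa x * (((d : ℝ)⁻¹ • G.adjMatrix ℝ).mulVec χa) x = 0 := by
        refine aux_zero G χa χa fun x y hxy => ?_
        simp only [hχa]
        split_ifs with h1 h2
        · exact absurd (h1.trans h2.symm) (hproper x y hxy)
        · exact mul_zero _
        · exact zero_mul _
        · exact zero_mul _
      have hsym : ∑ x, χa x * (((d : ℝ)⁻¹ • G.adjMatrix ℝ).mulVec gb) x
          = ∑ x, gb x * (((d : ℝ)⁻¹ • G.adjMatrix ℝ).mulVec χa) x := aux_symm G χa gb
      have key : ∀ s : ℝ, 2 * s * ((1 / (n : ℝ)) * S)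
          ≤ (1 - lam) * (s * μ) ^ 2 + lam * ((1 / (n : ℝ)) * S + s ^ 2 * μ) := by
        intro s
        have hs := hexp (gb + s • χa)
        have e0 : ∑ x, (gb + s • χa) x = s * Ca := by
          simp only [Pi.add_apply, Pi.smul_apply, smul_eq_mul]
          rw [Finset.sum_add_distrib, ← Finset.mul_sum, hgbsum, hχasum, zero_add]
        have e1 : ∑ x, ((gb + s • χa) x) ^ 2 = S + s ^ 2 * Ca := by
          have h3 : ∀ x, ((gb + s • χa) x) ^ 2 = gb x ^ 2 + s ^ 2 * χa x := by
            intro x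
            have h4 : ((gb + s • χa) x) ^ 2
                = gb x ^ 2 + 2 * s * (gb x * χa x) + s ^ 2 * (χa x ^ 2) := by
              simp only [Pi.add_apply, Pi.smul_apply, smul_eq_mul]; ring
            rw [h4, hcross x, hχasq x, mul_zero, add_zero]
          simp only [h3]
          rw [Finset.sum_add_distrib, hgbsq, ← Finset.mul_sum, hχasum]
        have e2 : ∑ x, (gb + s • χa) x
            * ((((d : ℝ)⁻¹ • G.adjMatrix ℝ)).mulVec (gb + s • χa)) x = 2 * s * S := by
          rw [Matrix.mulVec_add, Matrix.mulVec_smul]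
          have h5 : ∀ x, (gb + s • χa) x
              * (((((d : ℝ)⁻¹ • G.adjMatrix ℝ)).mulVec gb) x
                + (s • ((((d : ℝ)⁻¹ • G.adjMatrix ℝ)).mulVec χa)) x)
              = gb x * ((((d : ℝ)⁻¹ • G.adjMatrix ℝ)).mulVec gb) x
                + s * (gb x * ((((d : ℝ)⁻¹ • G.adjMatrix ℝ)).mulVec χa) x)
                + s * (χa x * ((((d : ℝ)⁻¹ • G.adjMatrix ℝ)).mulVec gb) x)
                + s ^ 2 * (χa x * ((((d : ℝ)⁻¹ • G.adjMatrix ℝ)).mulVec χa) x) := by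
            intro x
            simp only [Pi.add_apply, Pi.smul_apply, smul_eq_mul]; ring
          simp only [Pi.add_apply] at h5 ⊢
          calc ∑ x, (gb x + (s • χa) x)
                * (((((d : ℝ)⁻¹ • G.adjMatrix ℝ)).mulVec gb) x
                  + (s • ((((d : ℝ)⁻¹ • G.adjMatrix ℝ)).mulVec χa)) x)
              = ∑ x, (gb x * ((((d : ℝ)⁻¹ • G.adjMatrix ℝ)).mulVec gb) x
                + s * (gb x * ((((d : ℝ)⁻¹ • G.adjMatrix ℝ)).mulVec χa) x)
                + s * (χa x * ((((d : ℝ)⁻¹ • G.adjMatrix ℝ)).mulVec gb) x)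
                + s ^ 2 * (χa x * ((((d : ℝ)⁻¹ • G.adjMatrix ℝ)).mulVec χa) x)) := by
                refine Finset.sum_congr rfl fun x _ => ?_
                simp only [Pi.smul_apply, smul_eq_mul]; ring
            _ = 2 * s * S := by
                rw [Finset.sum_add_distrib, Finset.sum_add_distrib, Finset.sum_add_distrib,
                  ← Finset.mul_sum, ← Finset.mul_sum, ← Finset.mul_sum,
                  hz1, hz2, hsym, hgbψ]
                ring
        rw [e0, e1, e2] at hs
        have lhs_eq : (1 / (n : ℝ)) * (2 * s * S) = 2 * s * ((1 / (n : ℝ)) * S) := by ring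
        have rhs_eq : (1 - lam) * ((1 / (n : ℝ)) * (s * Ca)) ^ 2
            + lam * ((1 / (n : ℝ)) * (S + s ^ 2 * Ca))
            = (1 - lam) * (s * μ) ^ 2 + lam * ((1 / (n : ℝ)) * S + s ^ 2 * μ) := by
          rw [hμ]; ring
        rw [lhs_eq, rhs_eq] at hs
        exact hs
      have hv0' : 0 ≤ (1 / (n : ℝ)) * S :=
        mul_nonneg (by positivity) hv0
      clear_value S μ
      rcases eq_or_lt_of_le hlam0 with h0 | hpos
      · subst h0
        have hk := key ((1 / (n : ℝ)) * S)
        have hμsq : μ ^ 2 ≤ 1 := by nlinarith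
        nlinarith [hk, hμsq, hv0', sq_nonneg ((1 / (n : ℝ)) * S)]
      · have hk := key lam
        have h2 : lam * ((1 / (n : ℝ)) * S)
            ≤ lam * (lam * μ * ((1 - lam) * μ + lam)) := by nlinarith [hk]
        exact le_of_mul_le_mul_left h2 hpos
  · nlinarith [mul_nonneg (mul_nonneg hlam0 hμ0)
      (mul_nonneg (by linarith : (0:ℝ) ≤ 1 - lam) (by linarith : (0:ℝ) ≤ 1 - μ))]
end
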